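/- arXiv:2206.03295 — 8 statements merged into one kernel-verified Lean document; each statement's English description precedes it below -/
import Mathlib

section
/- Let K be a field of characteristic 2 and let a, h ∈ K[t] be polynomials with a(0) ≠ 0. Then the polynomial t⁴·(a⁴ + t⁵·a³ + t⁶·h) is not the square of any polynomial in K[t]. -/
open Polynomial

/-- Let `K` be a field of characteristic 2 and let `a, h ∈ K[t]` be polynomials with
`a(0) ≠ 0`.  Then the polynomial `t⁴ ⬝ (a⁴ + t⁵ ⬝ a³ + t⁶ ⬝ h)` is not the square of any
polynomial in `K[t]`. -/
theorem not_square_char_two (K : Type*) [Field K] [CharP K 2] (a h : K[X])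
    (ha : a.eval 0 ≠ 0) :
    ¬ ∃ p : K[X], X ^ 4 * (a ^ 4 + X ^ 5 * a ^ 3 + X ^ 6 * h) = p ^ 2 := by
  rintro ⟨p, hp⟩
  have h2 : (2 : K[X]) = 0 := by
    have : ((2 : ℕ) : K[X]) = 0 := CharP.cast_eq_zero K[X] 2
    simpa using this
  have hdsq : derivative (p ^ 2) = 0 := by
    rw [derivative_pow]
    simp only [Nat.cast_ofNat, map_ofNat, h2]
    ring
  have hder : derivative (X ^ 4 * (a ^ 4 + X ^ 5 * a ^ 3 + X ^ 6 * h))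
      = X ^ 8 * (a ^ 3 + X * a ^ 2 * derivative a + X ^ 2 * derivative h) := by
    simp only [derivative_mul, derivative_pow, derivative_X, derivative_add]
    push_cast
    simp only [map_ofNat, Polynomial.C_eq_natCast, Nat.cast_ofNat]
    linear_combination (2 * X ^ 3 * a ^ 4 + 2 * X ^ 4 * a ^ 3 * derivative a
      + 4 * X ^ 8 * a ^ 3 + X ^ 9 * a ^ 2 * derivative a + 5 * X ^ 9 * h) * h2
  have hz : X ^ 8 * (a ^ 3 + X * a ^ 2 * derivative a + X ^ 2 * derivative h) = 0 := by
    rw [← hder, hp, hdsq]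
  have hX : (X : K[X]) ^ 8 ≠ 0 := pow_ne_zero _ X_ne_zero
  have hz2 : a ^ 3 + X * a ^ 2 * derivative a + X ^ 2 * derivative h = 0 :=
    (mul_eq_zero.mp hz).resolve_left hX
  have := congrArg (eval 0) hz2
  simp at this
  exact ha this
end

section
/- For all integers r ≥ 1 and m ≥ 1, any embedding A₁ʳ ↪ D_{2m+1} factors through D_{2m}: if v₁,…,v_r ∈ D_{2m+1} are pairwise orthogonal roots, then there exists a subgroup L of D_{2m+1} containing all the vᵢ such that L, with the bilinear form restricted from D_{2m+1}, is isometric to the lattice D_{2m}. -/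
/-- The lattice `Dₙ`: the subgroup `{x ∈ ℤⁿ : x₁ + ⋯ + xₙ is even}` of `ℤⁿ`,
equipped (implicitly) with the standard Euclidean bilinear form `⟨x,y⟩ = ∑ xᵢyᵢ`. -/
def DLat (n : ℕ) : AddSubgroup (Fin n → ℤ) where
  carrier := {x | Even (∑ i, x i)}
  zero_mem' := by simp
  add_mem' := by
    intro a b ha hb
    simpa [Finset.sum_add_distrib] using ha.add hb
  neg_mem' := by
    intro a ha
    simpa using ha.neg

open Finset in
-- entries of a root are 0 or ±1
lemma root_entry {n : ℕ} (w : Fin n → ℤ) (h : ∑ i, w i * w i = 2) (i : Fin n) :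
    w i = 0 ∨ w i * w i = 1 := by
  have hle : w i * w i ≤ 2 := by
    rw [← h]
    exact Finset.single_le_sum (fun j _ => mul_self_nonneg (w j)) (mem_univ i)
  have h1 : -1 ≤ w i := by nlinarith
  have h2 : w i ≤ 1 := by nlinarith
  interval_cases (w i) <;> simp

lemma root_support_card {n : ℕ} (w : Fin n → ℤ) (h : ∑ i, w i * w i = 2) :
    (Finset.univ.filter (fun i => w i ≠ 0)).card = 2 := by
  have h1 : ∑ i ∈ Finset.univ.filter (fun i => w i ≠ 0), w i * w i = 2 := by
    rw [← h]
    apply Finset.sum_filter_of_ne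
    intro i _ hne h0
    exact hne (by rw [h0, mul_zero])
  have h2 : ∑ i ∈ Finset.univ.filter (fun i => w i ≠ 0), w i * w i
      = (Finset.univ.filter (fun i => w i ≠ 0)).card • (1 : ℤ) := by
    rw [Finset.sum_congr rfl, Finset.sum_const]
    intro i hi
    rcases root_entry w h i with h0 | h1
    · exact absurd h0 (by simpa using hi)
    · exact h1
  rw [h2] at h1
  exact_mod_cast (by simpa using h1 : ((Finset.univ.filter (fun i => w i ≠ 0)).card : ℤ) = 2)

lemma supports_eq_or_disjoint {n : ℕ} (w u : Fin n → ℤ)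
    (hw : ∑ i, w i * w i = 2) (hu : ∑ i, u i * u i = 2)
    (ho : ∑ i, w i * u i = 0) :
    Finset.univ.filter (fun i => w i ≠ 0) = Finset.univ.filter (fun i => u i ≠ 0) ∨
      Disjoint (Finset.univ.filter (fun i => w i ≠ 0))
        (Finset.univ.filter (fun i => u i ≠ 0)) := by
  set sw := Finset.univ.filter (fun i => w i ≠ 0) with hsw
  set su := Finset.univ.filter (fun i => u i ≠ 0) with hsu
  by_contra hc
  push_neg at hc
  obtain ⟨hne, hnd⟩ := hc
  have hcw : sw.card = 2 := root_support_card w hw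
  have hcu : su.card = 2 := root_support_card u hu
  have hIle : (sw ∩ su).card ≤ 2 := le_trans (Finset.card_le_card (Finset.inter_subset_left)) hcw.le
  have hIne : (sw ∩ su).Nonempty := Finset.not_disjoint_iff_nonempty_inter.mp hnd
  have hI2 : (sw ∩ su).card ≠ 2 := by
    intro h2
    have e1 : sw ∩ su = sw :=
      Finset.eq_of_subset_of_card_le Finset.inter_subset_left (by omega)
    have e2 : sw ∩ su = su :=
      Finset.eq_of_subset_of_card_le Finset.inter_subset_right (by omega)
    exact hne (e1 ▸ e2)
  have hI1 : (sw ∩ su).card = 1 := by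
    have := Finset.card_pos.mpr hIne
    omega
  obtain ⟨i, hi⟩ := Finset.card_eq_one.mp hI1
  have hsum : ∑ j ∈ sw ∩ su, w j * u j = 0 := by
    rw [← ho]
    apply Finset.sum_subset (Finset.subset_univ _)
    intro j _ hj
    rw [hi, Finset.mem_singleton] at hj
    by_cases hwj : w j = 0
    · rw [hwj, zero_mul]
    · by_cases huj : u j = 0
      · rw [huj, mul_zero]
      · exact absurd (hi ▸ Finset.mem_inter.mpr ⟨by simp [hsw, hwj], by simp [hsu, huj]⟩)
          (by simpa using hj)
  rw [hi, Finset.sum_singleton] at hsum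
  have hiw : i ∈ sw := Finset.mem_inter.mp (hi ▸ Finset.mem_singleton_self i) |>.1
  have hiu : i ∈ su := Finset.mem_inter.mp (hi ▸ Finset.mem_singleton_self i) |>.2
  have hw1 : w i * w i = 1 := by
    rcases root_entry w hw i with h0 | h1
    · exact absurd h0 (by simpa [hsw] using hiw)
    · exact h1
  have hu1 : u i * u i = 1 := by
    rcases root_entry u hu i with h0 | h1
    · exact absurd h0 (by simpa [hsu] using hiu)
    · exact h1
  nlinarith [hsum, hw1, hu1]

lemma exists_zero_coord (r m : ℕ) (v : Fin r → (Fin (2 * m + 1) → ℤ))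
    (hroot : ∀ k, ∑ i, v k i * v k i = 2)
    (horth : ∀ k l, k ≠ l → ∑ i, v k i * v l i = 0) :
    ∃ i0 : Fin (2 * m + 1), ∀ k, v k i0 = 0 := by
  classical
  set s : Fin r → Finset (Fin (2 * m + 1)) :=
    fun k => Finset.univ.filter (fun i => v k i ≠ 0) with hs
  set T : Finset (Finset (Fin (2 * m + 1))) := Finset.univ.image s with hT
  set S : Finset (Fin (2 * m + 1)) := T.biUnion id with hS
  have hdisj : ∀ t1 ∈ T, ∀ t2 ∈ T, t1 ≠ t2 → Disjoint (id t1) (id t2) := by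
    intro t1 ht1 t2 ht2 hne
    obtain ⟨k, -, rfl⟩ := Finset.mem_image.mp ht1
    obtain ⟨l, -, rfl⟩ := Finset.mem_image.mp ht2
    have hkl : k ≠ l := fun h => hne (by rw [h])
    rcases supports_eq_or_disjoint (v k) (v l) (hroot k) (hroot l) (horth k l hkl) with
      heq | hd
    · exact absurd heq hne
    · exact hd
  have hScard : S.card = 2 * T.card := by
    rw [hS, Finset.card_biUnion hdisj]
    rw [Finset.sum_congr rfl (fun t ht => ?_), Finset.sum_const, smul_eq_mul, mul_comm]
    obtain ⟨k, -, rfl⟩ := Finset.mem_image.mp ht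
    exact root_support_card (v k) (hroot k)
  have hSle : S.card ≤ 2 * m + 1 := by
    simpa using Finset.card_le_card (Finset.subset_univ S)
  have hSlt : S.card < 2 * m + 1 := by omega
  have : (Finset.univ \ S).Nonempty := by
    rw [← Finset.card_pos, Finset.card_sdiff_of_subset (Finset.subset_univ S)]
    simp only [Finset.card_univ, Fintype.card_fin]
    omega
  obtain ⟨i0, hi0⟩ := this
  refine ⟨i0, fun k => ?_⟩
  by_contra hne
  have : i0 ∈ S := Finset.mem_biUnion.mpr ⟨s k, Finset.mem_image_of_mem s (Finset.mem_univ k),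
    by simp [hs, hne]⟩
  exact (Finset.mem_sdiff.mp hi0).2 this

/-- Slice of `D_{n+1}` where coordinate `i0` vanishes. -/
def DSlice (n : ℕ) (i0 : Fin (n + 1)) : AddSubgroup (Fin (n + 1) → ℤ) where
  carrier := {x | Even (∑ i, x i) ∧ x i0 = 0}
  zero_mem' := ⟨by simp, rfl⟩
  add_mem' := by
    intro a b ha hb
    exact ⟨by simpa [Finset.sum_add_distrib] using ha.1.add hb.1, by simp [ha.2, hb.2]⟩
  neg_mem' := by
    intro a ha
    exact ⟨by simpa using ha.1.neg, by simp [ha.2]⟩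

/-- Deleting the vanishing coordinate gives an isomorphism `DSlice n i0 ≃+ DLat n`. -/
def DSliceEquiv (n : ℕ) (i0 : Fin (n + 1)) : DSlice n i0 ≃+ DLat n where
  toFun x := ⟨i0.removeNth x.1, by
    have h := x.2.1
    rwa [Fin.sum_univ_succAbove x.1 i0, x.2.2, zero_add] at h⟩
  invFun y := ⟨i0.insertNth 0 (y : Fin n → ℤ), by
    have hy : Even (∑ i, (y : Fin n → ℤ) i) := y.2
    constructor
    · rw [Fin.sum_univ_succAbove (i0.insertNth 0 (y : Fin n → ℤ)) i0,
        Fin.insertNth_apply_same, zero_add]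
      simpa [Fin.insertNth_apply_succAbove] using hy
    · exact Fin.insertNth_apply_same (α := fun _ => ℤ) i0 0 (y : Fin n → ℤ)⟩
  left_inv := by
    intro x
    apply Subtype.ext
    show i0.insertNth 0 (i0.removeNth x.1) = x.1
    rw [Fin.insertNth_removeNth, show (0 : ℤ) = x.1 i0 from x.2.2.symm,
      Function.update_eq_self]
  right_inv := by
    intro y
    apply Subtype.ext
    funext j
    exact Fin.insertNth_apply_succAbove (α := fun _ => ℤ) i0 0 (y : Fin n → ℤ) j
  map_add' := by
    intro x y
    apply Subtype.ext
    funext j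
    rfl

@[simp] lemma DSliceEquiv_apply (n : ℕ) (i0 : Fin (n + 1)) (x : DSlice n i0) (j : Fin n) :
    (DSliceEquiv n i0 x : Fin n → ℤ) j = (x : Fin (n + 1) → ℤ) (i0.succAbove j) := rfl

/-- For all integers `r ≥ 1` and `m ≥ 1`, any embedding `A₁ʳ ↪ D_{2m+1}` factors through
`D_{2m}`: if `v₁,…,v_r ∈ D_{2m+1}` are pairwise orthogonal roots, then there exists a
subgroup `L` of `D_{2m+1}` containing all the `vᵢ` such that `L`, with the bilinear form
restricted from `D_{2m+1}`, is isometric to the lattice `D_{2m}`. -/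
theorem orthogonal_roots_factor_through_D2m (r m : ℕ) (hr : 1 ≤ r) (hm : 1 ≤ m)
    (v : Fin r → (Fin (2 * m + 1) → ℤ))
    (hmem : ∀ k, v k ∈ DLat (2 * m + 1))
    (hroot : ∀ k, ∑ i, v k i * v k i = 2)
    (horth : ∀ k l, k ≠ l → ∑ i, v k i * v l i = 0) :
    ∃ L : AddSubgroup (Fin (2 * m + 1) → ℤ), L ≤ DLat (2 * m + 1) ∧ (∀ k, v k ∈ L) ∧
      ∃ e : L ≃+ DLat (2 * m), ∀ x y : L,
        ∑ i, (x : Fin (2 * m + 1) → ℤ) i * (y : Fin (2 * m + 1) → ℤ) i =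
          ∑ i, (e x : Fin (2 * m) → ℤ) i * (e y : Fin (2 * m) → ℤ) i := by
  obtain ⟨i0, hi0⟩ := exists_zero_coord r m v hroot horth
  refine ⟨DSlice (2 * m) i0, fun x hx => hx.1, fun k => ⟨hmem k, hi0 k⟩,
    DSliceEquiv (2 * m) i0, fun x y => ?_⟩
  rw [Fin.sum_univ_succAbove (fun i => (x : Fin (2 * m + 1) → ℤ) i *
    (y : Fin (2 * m + 1) → ℤ) i) i0]
  simp [x.2.2, DSliceEquiv_apply]
end

section
/- For every integer m ≥ 1, any sublattice of D_{2m+1} isometric to D_{2m} is primitively embedded: if L is a subgroup of D_{2m+1} which, with the restricted bilinear form, is isometric to D_{2m}, then the quotient group D_{2m+1}/L is torsion-free. -/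
lemma norm_parity {n : ℕ} (v : Fin n → ℤ) :
    Even (∑ i, v i * v i) ↔ Even (∑ i, v i) := by
  have h : Even ((∑ i, v i * v i) - (∑ i, v i)) := by
    rw [← Finset.sum_sub_distrib]
    apply Finset.even_sum
    intro i _
    have : v i * v i - v i = (v i - 1) * ((v i - 1) + 1) := by ring
    rw [this]
    exact Int.even_mul_succ_self _
  exact Int.even_sub.mp h

lemma odd_dot_parity {n : ℕ} (d a : Fin n → ℤ) (ha : ∀ i, Odd (a i)) :
    Even (∑ i, d i * a i) ↔ Even (∑ i, d i) := by
  have h : Even ((∑ i, d i * a i) - (∑ i, d i)) := by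
    rw [← Finset.sum_sub_distrib]
    apply Finset.even_sum
    intro i _
    have : d i * a i - d i = d i * (a i - 1) := by ring
    rw [this]
    exact (Int.even_sub_one.mpr (Int.not_even_iff_odd.mpr (ha i))).mul_left _
  exact Int.even_sub.mp h

/-- The generators of `D n`. -/
def dgen (n : ℕ) [NeZero n] (j : Fin n) : Fin n → ℤ :=
  fun k => (if k = 0 then 1 else 0) + (if k = j then 1 else 0)

lemma dgen_mem (n : ℕ) [NeZero n] (j : Fin n) : Even (∑ k, dgen n j k) := by
  simp only [dgen, Finset.sum_add_distrib, Finset.sum_ite_eq', Finset.mem_univ, if_true]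
  exact ⟨1, rfl⟩

/-- coordinate of a linear combination of the generators -/
lemma dgen_comb_coord {R : Type*} [CommRing R] {n : ℕ} [NeZero n] (γ : Fin n → R) (k : Fin n) :
    (∑ j, γ j • fun i => ((dgen n j i : ℤ) : R)) k
      = (if k = 0 then ∑ j, γ j else 0) + γ k := by
  simp only [Finset.sum_apply, Pi.smul_apply, dgen, smul_eq_mul]
  push_cast
  simp only [mul_add, Finset.sum_add_distrib]
  congr 1
  · simp only [mul_ite, mul_one, mul_zero]
    split_ifs with h
    · simp
    · simp
  · simp [mul_ite]



lemma dgen_comb_coord_int {n : ℕ} [NeZero n] (γ : Fin n → ℤ) (k : Fin n) :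
    (∑ j, γ j • dgen n j) k = (if k = 0 then ∑ j, γ j else 0) + γ k := by
  have := dgen_comb_coord (R := ℤ) γ k
  simpa using this

lemma dgen_span {n : ℕ} [NeZero n] (b : Fin n → ℤ) (hb : Even (∑ k, b k)) :
    ∃ z : Fin n → ℤ, b = ∑ j, z j • dgen n j := by
  obtain ⟨h, hh⟩ := hb
  refine ⟨fun j => if j = 0 then b 0 - h else b j, ?_⟩
  have hz : ∑ j, (if j = (0 : Fin n) then b 0 - h else b j) = h := by
    rw [← Finset.add_sum_erase _ _ (Finset.mem_univ (0 : Fin n))]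
    rw [Finset.sum_congr rfl (fun j hj => if_neg (Finset.ne_of_mem_erase hj))]
    have : ∑ j ∈ Finset.univ.erase (0 : Fin n), b j = (∑ j, b j) - b 0 := by
      rw [← Finset.add_sum_erase _ _ (Finset.mem_univ (0 : Fin n))]; ring
    rw [if_pos rfl, this, hh]; ring
  funext k
  rw [dgen_comb_coord_int, hz]
  by_cases hk : k = 0
  · subst hk; simp
  · simp [hk]

lemma dgen_indep {n : ℕ} [NeZero n] (γ : Fin n → ℚ)
    (h : (∑ j, γ j • fun i => ((dgen n j i : ℤ) : ℚ)) = 0) : γ = 0 := by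
  have hc : ∀ k, (if k = (0:Fin n) then ∑ j, γ j else 0) + γ k = 0 := by
    intro k
    rw [← dgen_comb_coord γ k, h]; rfl
  have hne : ∀ k, k ≠ (0:Fin n) → γ k = 0 := by
    intro k hk; have := hc k; rwa [if_neg hk, zero_add] at this
  have hsum : ∑ j, γ j = γ 0 := by
    rw [← Finset.add_sum_erase _ _ (Finset.mem_univ (0 : Fin n))]
    rw [Finset.sum_congr rfl (fun j hj => hne j (Finset.ne_of_mem_erase hj))]
    simp
  have h0 : γ 0 = 0 := by
    have := hc 0; rw [if_pos rfl, hsum] at this; linarith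
  funext k
  by_cases hk : k = 0
  · subst hk; exact h0
  · exact hne k hk

lemma dgen_gram {n : ℕ} [NeZero n] (j k : Fin n) :
    ∑ i, dgen n j i * dgen n k i
      = 1 + (if j = 0 then 1 else 0) + (if k = 0 then 1 else 0)
        + (if j = k then 1 else 0) := by
  have key : ∀ (p q : Fin n), ∑ i, (if i = p then (1:ℤ) else 0) * (if i = q then 1 else 0)
      = if p = q then 1 else 0 := by
    intro p q
    rw [Finset.sum_eq_single p]
    · simp [eq_comm]
    · intro i _ hi; simp [hi]
    · intro hi; exact absurd (Finset.mem_univ p) hi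
  simp only [dgen, add_mul, mul_add, Finset.sum_add_distrib, key]
  have e2 : (if (0:Fin n) = k then (1:ℤ) else 0) = (if k = 0 then 1 else 0) := by
    simp [eq_comm]
  rw [e2]
  norm_num
  ring

/-- injectivity coming from positive-definiteness of the Gram matrix of `dgen`. -/
lemma gram_inj {n : ℕ} [NeZero n] (β : Fin n → ℚ)
    (h : ∀ k, ∑ j, β j * (1 + (if j = (0:Fin n) then 1 else 0) + (if k = 0 then 1 else 0)
        + (if j = k then (1:ℚ) else 0)) = 0) : β = 0 := by
  have inner : ∀ k, ∑ j, β j * (1 + (if j = (0:Fin n) then 1 else 0) + (if k = 0 then 1 else 0)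
      + (if j = k then (1:ℚ) else 0))
      = (∑ j, β j) + β 0 + (if k = 0 then ∑ j, β j else 0) + β k := by
    intro k
    have h1 : ∑ j, β j * (1:ℚ) = ∑ j, β j := by simp
    have h2 : ∑ j, β j * (if j = (0:Fin n) then (1:ℚ) else 0) = β 0 := by simp
    have h3 : ∑ j, β j * (if k = (0:Fin n) then (1:ℚ) else 0)
        = (if k = 0 then ∑ j, β j else 0) := by
      split_ifs with hk <;> simp
    have h4 : ∑ j, β j * (if j = k then (1:ℚ) else 0) = β k := by simp
    simp only [mul_add, Finset.sum_add_distrib]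
    rw [h1, h2, h3, h4]
  have hq : ∑ k, β k * ((∑ j, β j) + β 0 + (if k = (0:Fin n) then ∑ j, β j else 0) + β k) = 0 := by
    rw [Finset.sum_congr rfl (fun k _ => by rw [← inner k, h k, mul_zero])]
    simp
  set S := ∑ j, β j with hS
  have expand : ∑ k, β k * (S + β 0 + (if k = (0:Fin n) then S else 0) + β k)
      = (S + β 0)^2 + (∑ k, β k * β k - β 0 * β 0) := by
    simp only [mul_add, Finset.sum_add_distrib, mul_ite, mul_zero, ← Finset.sum_mul]
    rw [← hS]
    have : ∑ k, (if k = (0:Fin n) then β k * S else 0) = β 0 * S := by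
      simp
    rw [this]; ring
  rw [expand] at hq
  have hrest : ∑ k, β k * β k - β 0 * β 0
      = ∑ k ∈ Finset.univ.erase (0:Fin n), β k * β k := by
    rw [← Finset.add_sum_erase _ (fun k => β k * β k) (Finset.mem_univ (0 : Fin n))]
    ring
  rw [hrest] at hq
  have h1 : (0:ℚ) ≤ (S + β 0)^2 := sq_nonneg _
  have h2 : (0:ℚ) ≤ ∑ k ∈ Finset.univ.erase (0:Fin n), β k * β k :=
    Finset.sum_nonneg (fun k _ => mul_self_nonneg _)
  have hz1 : (S + β 0)^2 = 0 := by linarith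
  have hz2 : ∑ k ∈ Finset.univ.erase (0:Fin n), β k * β k = 0 := by linarith
  have hne : ∀ k, k ≠ (0:Fin n) → β k = 0 := by
    intro k hk
    have := (Finset.sum_eq_zero_iff_of_nonneg (fun k _ => mul_self_nonneg (β k))).mp hz2 k
      (Finset.mem_erase.mpr ⟨hk, Finset.mem_univ k⟩)
    exact mul_self_eq_zero.mp this
  have hsum : S = β 0 := by
    rw [hS, ← Finset.add_sum_erase _ _ (Finset.mem_univ (0 : Fin n))]
    rw [Finset.sum_congr rfl (fun j hj => hne j (Finset.ne_of_mem_erase hj))]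
    simp
  have h0 : β 0 = 0 := by
    have := pow_eq_zero_iff (n := 2) (by norm_num) |>.mp hz1
    rw [hsum] at this; linarith
  funext k
  by_cases hk : k = 0
  · subst hk; exact h0
  · exact hne k hk



/-- key dual-lattice computation: if `y` pairs integrally with `D_n` and half-integrally
with `a` (all of whose coordinates are odd, with `8 ∣ ⟨a,a⟩`), then `y ∈ D_n + ℤ·(a/2)`. -/
lemma dual_lemma {n : ℕ} (a : Fin n → ℤ) (hodd : ∀ i, Odd (a i))
    (h8 : (8:ℤ) ∣ ∑ i, a i * a i) (y : Fin n → ℚ)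
    (hD : ∀ b : Fin n → ℤ, Even (∑ k, b k) → ∃ t : ℤ, ∑ i, y i * (b i : ℚ) = t)
    (ha : ∃ t : ℤ, ∑ i, y i * (a i : ℚ) = 2 * t) :
    ∃ (d : Fin n → ℤ) (k : ℤ), Even (∑ i, d i) ∧
      ∀ i, y i = (d i : ℚ) + (k : ℚ) * (a i : ℚ) / 2 := by
  -- each 2 * y i is an integer
  have hw : ∀ i, ∃ t : ℤ, 2 * y i = (t : ℚ) := by
    intro i
    obtain ⟨t, ht⟩ := hD (fun k => if k = i then 2 else 0) (by simp)
    refine ⟨t, ?_⟩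
    rw [← ht]
    rw [Finset.sum_eq_single i (by intro b _ hb; simp [hb]) (by simp)]
    push_cast
    simp [mul_comm]
  choose w hwy using hw
  -- the w i all have the same parity
  have hpar : ∀ i j : Fin n, Even (w i - w j) := by
    intro i j
    by_cases hij : i = j
    · subst hij; simp
    · obtain ⟨t, ht⟩ := hD (fun k => (if k = i then 1 else 0) - (if k = j then 1 else 0))
        (by simp [Finset.sum_sub_distrib, hij])
      refine ⟨w i - w j - t, ?_⟩
      have h2 : ((w i : ℚ) - w j) = 2 * t := by
        have expand : ∑ k, y k * ((((if k = i then (1:ℤ) else 0) - (if k = j then 1 else 0)) : ℤ) : ℚ)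
            = y i - y j := by
          push_cast
          simp only [mul_sub, Finset.sum_sub_distrib, mul_ite, mul_one, mul_zero]
          simp
        rw [expand] at ht
        rw [← hwy i, ← hwy j] at *
        linarith [ht]
      have : (((w i - w j) : ℤ) : ℚ) = ((2 * t : ℤ) : ℚ) := by push_cast; linarith
      have := Int.cast_injective this
      omega
  obtain ⟨t0, ht0⟩ := ha
  have hya : ∀ i, 2 * y i = (w i : ℚ) := hwy
  by_cases hall : ∀ i, Even (w i)
  · -- all coordinates of y are integers
    choose d hd using fun i => (hall i)
    have hyd : ∀ i, y i = (d i : ℚ) := by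
      intro i
      have := hya i
      rw [hd i] at this
      push_cast at this
      linarith
    have hsum : ∑ i, d i * a i = 2 * t0 := by
      apply @Int.cast_injective ℚ
      push_cast
      rw [← ht0]
      exact Finset.sum_congr rfl (fun i _ => by rw [hyd i])
    have heven : Even (∑ i, d i) := by
      rw [← odd_dot_parity d a hodd, hsum]
      exact even_two_mul t0
    exact ⟨d, 0, heven, fun i => by rw [hyd i]; push_cast; ring⟩
  · -- all coordinates of y are half-odd-integers
    push_neg at hall
    obtain ⟨i0, hi0⟩ := hall
    have hodd' : ∀ i, Odd (w i) := by
      intro i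
      rcases Int.even_or_odd (w i) with he | ho
      · exfalso
        apply hi0
        have := hpar i0 i
        rcases this with ⟨c, hc⟩
        rcases he with ⟨c2, hc2⟩
        exact ⟨c + c2, by omega⟩
      · exact ho
    have hdint : ∀ i, Even (w i - a i) := by
      intro i
      rcases hodd' i with ⟨c1, hc1⟩
      rcases hodd i with ⟨c2, hc2⟩
      exact ⟨c1 - c2, by omega⟩
    choose d hd using fun i => hdint i
    have hyd : ∀ i, y i = (d i : ℚ) + (a i : ℚ) / 2 := by
      intro i
      have h1 := hya i
      have h2 : w i = 2 * d i + a i := by have := hd i; omega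
      rw [h2] at h1
      push_cast at h1
      linarith
    obtain ⟨s, hs⟩ := h8
    have hsum : ∑ i, d i * a i = 2 * t0 - 4 * s := by
      apply @Int.cast_injective ℚ
      have expand : ∑ i, y i * (a i : ℚ)
          = (∑ i, (d i : ℚ) * (a i : ℚ)) + (∑ i, (a i : ℚ) * (a i : ℚ)) / 2 := by
        rw [Finset.sum_div, ← Finset.sum_add_distrib]
        exact Finset.sum_congr rfl (fun i _ => by rw [hyd i]; ring)
      rw [expand] at ht0
      have haa : (∑ i, (a i : ℚ) * (a i : ℚ)) = ((8 * s : ℤ) : ℚ) := by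
        rw [← hs]; push_cast; rfl
      rw [haa] at ht0
      push_cast
      push_cast at ht0
      linarith
    have heven : Even (∑ i, d i) := by
      rw [← odd_dot_parity d a hodd, hsum]
      exact ⟨t0 - 2*s, by ring⟩
    exact ⟨d, 1, heven, fun i => by rw [hyd i]; push_cast; ring⟩



lemma dot_comb_left {R : Type*} [CommRing R] {M K : ℕ} (u : Fin K → R)
    (f : Fin K → Fin M → R) (w : Fin M → R) :
    ∑ s, (∑ j, u j * f j s) * w s = ∑ j, u j * ∑ s, f j s * w s := by
  simp only [Finset.sum_mul, Finset.mul_sum]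
  rw [Finset.sum_comm]
  exact Finset.sum_congr rfl fun j _ => Finset.sum_congr rfl fun s _ => by ring

lemma dot_comb_right {R : Type*} [CommRing R] {M K : ℕ} (v : Fin K → R)
    (g : Fin K → Fin M → R) (w : Fin M → R) :
    ∑ s, w s * (∑ k, v k * g k s) = ∑ k, v k * ∑ s, w s * g k s := by
  simp only [Finset.sum_mul, Finset.mul_sum]
  rw [Finset.sum_comm]
  exact Finset.sum_congr rfl fun j _ => Finset.sum_congr rfl fun s _ => by ring

lemma dot_comb {R : Type*} [CommRing R] {M K K' : ℕ} (u : Fin K → R) (v : Fin K' → R)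
    (f : Fin K → Fin M → R) (g : Fin K' → Fin M → R) :
    ∑ s, (∑ j, u j * f j s) * (∑ k, v k * g k s)
      = ∑ j, ∑ k, u j * v k * ∑ s, f j s * g k s := by
  rw [dot_comb_left]
  refine Finset.sum_congr rfl fun j _ => ?_
  rw [dot_comb_right, Finset.mul_sum]
  exact Finset.sum_congr rfl fun k _ => by ring

set_option maxHeartbeats 1600000 in
/-- The main geometric contradiction: there is no vector `x ∈ D_{2m+1}` with `2x ∈ L`
whose `e`-image has all coordinates odd. -/
lemma big (m : ℕ) (hm : 1 ≤ m) [NeZero (2*m)] (l : Fin (2*m) → Fin (2*m+1) → ℤ)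
    (hgram : ∀ j k, ∑ i, l j i * l k i = ∑ i, dgen (2*m) j i * dgen (2*m) k i)
    (hDl : ∀ j, Even (∑ i, l j i))
    (x : Fin (2*m+1) → ℤ) (hxD : Even (∑ i, x i))
    (za : Fin (2*m) → ℤ) (h2x : ∀ i, 2 * x i = ∑ j, za j * l j i)
    (hodd : ∀ s, Odd ((∑ j, za j • dgen (2*m) j) s)) : False := by
  set aI : Fin (2*m) → ℤ := ∑ j, za j • dgen (2*m) j with haI
  have haIs : ∀ s, aI s = ∑ j, za j * dgen (2*m) j s := by
    intro s; rw [haI]; simp [Finset.sum_apply]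
  -- 8 divides the norm of aI
  have h8 : (8:ℤ) ∣ ∑ s, aI s * aI s := by
    have e1 : ∑ s, aI s * aI s = ∑ j, ∑ k, za j * za k * ∑ i, dgen (2*m) j i * dgen (2*m) k i := by
      rw [← dot_comb]
      exact Finset.sum_congr rfl fun s _ => by rw [haIs]
    have e2 : ∑ s, (2 * x s) * (2 * x s) = ∑ j, ∑ k, za j * za k * ∑ i, l j i * l k i := by
      rw [← dot_comb]
      exact Finset.sum_congr rfl fun s _ => by rw [h2x]
    have e3 : ∑ s, aI s * aI s = ∑ s, (2 * x s) * (2 * x s) := by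
      rw [e1, e2]
      exact Finset.sum_congr rfl fun j _ => Finset.sum_congr rfl fun k _ => by rw [hgram]
    obtain ⟨t, ht⟩ := (norm_parity x).mpr hxD
    have : ∑ s, (2 * x s) * (2 * x s) = 4 * ∑ s, x s * x s := by
      rw [Finset.mul_sum]; exact Finset.sum_congr rfl fun s _ => by ring
    refine ⟨t, ?_⟩
    rw [e3, this, ht]; ring
  -- move to ℚ
  set lq : Fin (2*m) → Fin (2*m+1) → ℚ := fun j i => (l j i : ℚ) with hlq
  have hgq : ∀ j k, ∑ i, lq j i * lq k i
      = 1 + (if j = 0 then 1 else 0) + (if k = 0 then 1 else 0)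
        + (if j = k then (1:ℚ) else 0) := by
    intro j k
    have : ∑ i, lq j i * lq k i = ((∑ i, l j i * l k i : ℤ) : ℚ) := by push_cast; rfl
    rw [this, hgram j k, dgen_gram]
    push_cast
    split_ifs <;> norm_num
  -- the pairing map and the combination map
  set Φ : (Fin (2*m+1) → ℚ) →ₗ[ℚ] (Fin (2*m) → ℚ) :=
    { toFun := fun y => fun k => ∑ i, y i * lq k i
      map_add' := by intro y z; funext k; simp [add_mul, Finset.sum_add_distrib]
      map_smul' := by intro c y; funext k; simp [Finset.mul_sum, mul_assoc] } with hΦ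
  set comb : (Fin (2*m) → ℚ) →ₗ[ℚ] (Fin (2*m+1) → ℚ) :=
    { toFun := fun β => fun i => ∑ j, β j * lq j i
      map_add' := by intro y z; funext i; simp [add_mul, Finset.sum_add_distrib]
      map_smul' := by intro c y; funext i; simp [Finset.mul_sum, mul_assoc] } with hcomb
  have hT : ∀ β k, Φ (comb β) k = ∑ j, β j *
      (1 + (if j = 0 then 1 else 0) + (if k = 0 then 1 else 0)
        + (if j = k then (1:ℚ) else 0)) := by
    intro β k
    show ∑ i, (∑ j, β j * lq j i) * lq k i = _
    rw [dot_comb_left]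
    exact Finset.sum_congr rfl fun j _ => by rw [hgq]
  have Tinj : Function.Injective (Φ.comp comb) := by
    rw [injective_iff_map_eq_zero]
    intro β hβ
    refine gram_inj β fun k => ?_
    rw [← hT β k]
    exact congrFun hβ k
  have Tsurj : Function.Surjective (Φ.comp comb) := LinearMap.injective_iff_surjective.mp Tinj
  -- kernel of Φ is 1-dimensional
  have hrange : LinearMap.range Φ = ⊤ := by
    rw [LinearMap.range_eq_top]
    intro t
    obtain ⟨β, hβ⟩ := Tsurj t
    exact ⟨comb β, hβ⟩
  have hkerrank : Module.finrank ℚ (LinearMap.ker Φ) = 1 := by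
    have := LinearMap.finrank_range_add_finrank_ker Φ
    rw [hrange] at this
    simp only [finrank_top] at this
    have h1 : Module.finrank ℚ (Fin (2*m) → ℚ) = 2*m := by simp
    have h2 : Module.finrank ℚ (Fin (2*m+1) → ℚ) = 2*m+1 := by simp
    rw [h1, h2] at this
    omega
  
  -- orthogonal projections of the standard basis vectors onto the span of `l`
  have hβex : ∀ i : Fin (2*m+1), ∃ β : Fin (2*m) → ℚ, Φ (comb β) = fun k => lq k i :=
    fun i => Tsurj (fun k => lq k i)
  choose β hβ using hβex
  set p : Fin (2*m+1) → Fin (2*m+1) → ℚ := fun i => comb (β i) with hp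
  set dq : Fin (2*m+1) → Fin (2*m+1) → ℚ := fun i r => if r = i then 1 else 0 with hdq
  set q : Fin (2*m+1) → Fin (2*m+1) → ℚ := fun i => dq i - p i with hqdef
  have hpr : ∀ i r, p i r = ∑ j, β i j * lq j r := fun i r => rfl
  have hqr : ∀ i r, q i r = dq i r - p i r := fun i r => rfl
  have hΦdq : ∀ i, Φ (dq i) = fun k => lq k i := by
    intro i; funext k
    show ∑ r, dq i r * lq k r = lq k i
    rw [Finset.sum_eq_single i (fun r _ hr => by simp [hdq, hr]) (by simp)]
    simp [hdq]
  have hqker : ∀ i, Φ (q i) = 0 := by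
    intro i
    have : Φ (q i) = Φ (dq i) - Φ (p i) := by rw [hqdef]; exact map_sub Φ _ _
    rw [this, hΦdq i, hp]
    simp only []
    rw [hβ i]
    simp
  have hq_lq : ∀ i j, ∑ r, q i r * lq j r = 0 := by
    intro i j
    have := congrFun (hqker i) j
    exact this
  
  set dgenQ : Fin (2*m) → Fin (2*m) → ℚ := fun j s => ((dgen (2*m) j s : ℤ) : ℚ) with hdgenQ
  have hdgl : ∀ j k, ∑ s, dgenQ j s * dgenQ k s = ∑ s, lq j s * lq k s := by
    intro j k
    have e1 : ∑ s, dgenQ j s * dgenQ k s = ((∑ s, dgen (2*m) j s * dgen (2*m) k s : ℤ) : ℚ) := by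
      push_cast; rfl
    have e2 : ∑ s, lq j s * lq k s = ((∑ s, l j s * l k s : ℤ) : ℚ) := by
      push_cast; rfl
    rw [e1, e2, hgram]
  -- for every standard basis vector, its projection is an integer vector of even
  -- coordinate sum
  have hmi : ∀ i, ∃ mi : Fin (2*m+1) → ℤ, (∀ r, p i r = (mi r : ℚ)) ∧ Even (∑ r, mi r) := by
    intro i
    set yq : Fin (2*m) → ℚ := fun s => ∑ j, β i j * dgenQ j s with hyq
    have transport : ∀ z : Fin (2*m) → ℤ,
        ∑ s, yq s * (∑ k, (z k : ℚ) * dgenQ k s)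
          = ∑ r, p i r * (∑ k, (z k : ℚ) * lq k r) := by
      intro z
      have lhs : ∑ s, yq s * (∑ k, (z k : ℚ) * dgenQ k s)
          = ∑ j, ∑ k, β i j * (z k : ℚ) * ∑ s, dgenQ j s * dgenQ k s := dot_comb _ _ _ _
      have rhs : ∑ r, p i r * (∑ k, (z k : ℚ) * lq k r)
          = ∑ j, ∑ k, β i j * (z k : ℚ) * ∑ s, lq j s * lq k s := by
        have : ∀ r, p i r * (∑ k, (z k : ℚ) * lq k r)
            = (∑ j, β i j * lq j r) * (∑ k, (z k : ℚ) * lq k r) := by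
          intro r; rw [hpr]
        rw [Finset.sum_congr rfl fun r _ => this r]
        exact dot_comb _ _ _ _
      rw [lhs, rhs]
      exact Finset.sum_congr rfl fun j _ => Finset.sum_congr rfl fun k _ => by rw [hdgl]
    -- pairing q i with an integer combination of the l's vanishes
    have hqcomb : ∀ z : Fin (2*m) → ℤ, ∑ r, q i r * (∑ k, (z k : ℚ) * lq k r) = 0 := by
      intro z
      rw [dot_comb_right]
      exact Finset.sum_eq_zero fun k _ => by rw [hq_lq i k, mul_zero]
    -- pairing dq i with a combination picks out coordinate i
    have hdqcomb : ∀ w : Fin (2*m+1) → ℚ, ∑ r, dq i r * w r = w i := by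
      intro w
      rw [Finset.sum_eq_single i (fun r _ hr => by simp [hdq, hr]) (by simp)]
      simp [hdq]
    have hpcomb : ∀ z : Fin (2*m) → ℤ,
        ∑ r, p i r * (∑ k, (z k : ℚ) * lq k r) = ∑ k, (z k : ℚ) * lq k i := by
      intro z
      have : ∀ r, p i r = dq i r - q i r := by intro r; rw [hqr]; ring
      rw [Finset.sum_congr rfl fun r _ => by rw [this r, sub_mul]]
      rw [Finset.sum_sub_distrib, hqcomb, hdqcomb (fun r => ∑ k, (z k : ℚ) * lq k r)]
      ring
    -- hypothesis hD for dual_lemma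
    have hyqD : ∀ b : Fin (2*m) → ℤ, Even (∑ s, b s) → ∃ t : ℤ, ∑ s, yq s * (b s : ℚ) = t := by
      intro b hb
      obtain ⟨z, hz⟩ := dgen_span b hb
      have hbs : ∀ s, (b s : ℚ) = ∑ k, (z k : ℚ) * dgenQ k s := by
        intro s
        rw [hz]
        push_cast [Finset.sum_apply, Pi.smul_apply, smul_eq_mul]
        rfl
      refine ⟨∑ k, z k * l k i, ?_⟩
      rw [Finset.sum_congr rfl fun s _ => by rw [hbs s], transport z, hpcomb z]
      push_cast
      rfl
    -- hypothesis ha for dual_lemma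
    have haQ : ∀ s, (aI s : ℚ) = ∑ k, (za k : ℚ) * dgenQ k s := by
      intro s
      rw [haIs]
      push_cast
      rfl
    have h2xQ : ∀ r, ∑ k, (za k : ℚ) * lq k r = 2 * (x r : ℚ) := by
      intro r
      have := h2x r
      have : ((2 * x r : ℤ) : ℚ) = ((∑ j, za j * l j r : ℤ) : ℚ) := by rw [this]
      push_cast at this
      rw [← this]
    have hyqa : ∑ s, yq s * (aI s : ℚ) = 2 * (x i : ℚ) := by
      rw [Finset.sum_congr rfl fun s _ => by rw [haQ s], transport za, hpcomb za, h2xQ i]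
    obtain ⟨d, k, hdE, hdy⟩ := dual_lemma aI hodd h8 yq hyqD ⟨x i, hyqa⟩
    obtain ⟨zd, hzd⟩ := dgen_span d hdE
    have hds : ∀ s, (d s : ℚ) = ∑ j, (zd j : ℚ) * dgenQ j s := by
      intro s
      rw [hzd]
      push_cast [Finset.sum_apply, Pi.smul_apply, smul_eq_mul]
      rfl
    -- identify the coefficients β i
    have hβeq : ∀ j, β i j = (zd j : ℚ) + (k : ℚ) * (za j : ℚ) / 2 := by
      have hγ : (∑ j, (fun j => β i j - ((zd j : ℚ) + (k : ℚ) * (za j : ℚ) / 2)) j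
          • fun s => ((dgen (2*m) j s : ℤ) : ℚ)) = 0 := by
        funext s
        simp only [Pi.zero_apply]
        have e1 : (∑ j, (fun j => β i j - ((zd j : ℚ) + (k : ℚ) * (za j : ℚ) / 2)) j
            • fun s => ((dgen (2*m) j s : ℤ) : ℚ)) s
            = ∑ j, (β i j - ((zd j : ℚ) + (k : ℚ) * (za j : ℚ) / 2)) * dgenQ j s := by
          simp [Finset.sum_apply, hdgenQ]
        rw [e1]
        have e2 : ∀ j, (β i j - ((zd j : ℚ) + (k : ℚ) * (za j : ℚ) / 2)) * dgenQ j s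
            = β i j * dgenQ j s - (zd j : ℚ) * dgenQ j s
              - (k : ℚ) / 2 * ((za j : ℚ) * dgenQ j s) := by
          intro j; ring
        rw [Finset.sum_congr rfl fun j _ => e2 j]
        rw [Finset.sum_sub_distrib, Finset.sum_sub_distrib, ← Finset.mul_sum]
        have e3 : ∑ j, (zd j : ℚ) * dgenQ j s = (d s : ℚ) := (hds s).symm
        have e4 : ∑ j, (za j : ℚ) * dgenQ j s = (aI s : ℚ) := (haQ s).symm
        have h5 : ∑ j, β i j * dgenQ j s = (d s : ℚ) + (k : ℚ) * (aI s : ℚ) / 2 := hdy s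
        rw [e3, e4, h5]
        ring
      have := dgen_indep _ hγ
      intro j
      have := congrFun this j
      simp only [Pi.zero_apply] at this
      linarith [this]
    refine ⟨fun r => (∑ j, zd j * l j r) + k * x r, fun r => ?_, ?_⟩
    · rw [hpr]
      rw [Finset.sum_congr rfl fun j (_ : j ∈ Finset.univ) => by rw [hβeq j, add_mul]]
      rw [Finset.sum_add_distrib]
      have e5 : ∑ j, (k : ℚ) * (za j : ℚ) / 2 * lq j r
          = (k : ℚ) / 2 * ∑ j, (za j : ℚ) * lq j r := by
        rw [Finset.mul_sum]
        exact Finset.sum_congr rfl fun j _ => by ring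
      rw [e5, h2xQ r]
      push_cast
      ring_nf
      exact add_comm _ _
    · have e6 : ∑ r, ((∑ j, zd j * l j r) + k * x r)
          = (∑ j, zd j * ∑ r, l j r) + k * ∑ r, x r := by
        rw [Finset.sum_add_distrib, ← Finset.mul_sum, Finset.sum_comm]
        congr 1
        exact Finset.sum_congr rfl fun j _ => by rw [Finset.mul_sum]
      rw [e6]
      exact (Finset.even_sum _ fun j _ => (hDl j).mul_left _).add (hxD.mul_left k)
  
  choose mfun hm1 hm2 using hmi
  set g : Fin (2*m+1) → Fin (2*m+1) → ℤ :=
    fun i r => (if r = i then 1 else 0) - mfun i r with hg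
  have hqg : ∀ i r, q i r = (g i r : ℚ) := by
    intro i r
    have h1 : (g i r : ℚ) = (if r = i then (1:ℚ) else 0) - (mfun i r : ℚ) := by
      rw [hg]; push_cast; split_ifs <;> simp
    have h2 : dq i r = (if r = i then (1:ℚ) else 0) := rfl
    rw [hqr, h1, h2, hm1 i r]
  have hdqcomb : ∀ (i : Fin (2*m+1)) (w : Fin (2*m+1) → ℚ), ∑ r, dq i r * w r = w i := by
    intro i w
    rw [Finset.sum_eq_single i (fun r _ hr => by simp [hdq, hr]) (by simp)]
    simp [hdq]
  have hgodd : ∀ i, Odd (∑ r, g i r * g i r) := by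
    intro i
    have hsum : ∑ r, g i r = 1 - ∑ r, mfun i r := by
      rw [hg]
      simp only [Finset.sum_sub_distrib]
      congr 1
      simp
    have hodd1 : Odd (∑ r, g i r) := by
      rw [hsum]
      obtain ⟨c, hc⟩ := hm2 i
      exact ⟨-c, by omega⟩
    rw [← Int.not_even_iff_odd] at hodd1 ⊢
    intro hcon
    exact hodd1 ((norm_parity (g i)).mp hcon)
  have hpairing : ∀ i j, ∑ r, g i r * g j r = g j i := by
    intro i j
    have hQ : ∑ r, q i r * q j r = (g j i : ℚ) := by
      have step : ∑ r, q i r * q j r = ∑ r, dq i r * q j r - ∑ r, p i r * q j r := by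
        rw [← Finset.sum_sub_distrib]
        exact Finset.sum_congr rfl fun r _ => by rw [hqr]; ring
      have hpq : ∑ r, p i r * q j r = 0 := by
        rw [Finset.sum_congr rfl fun r (_ : r ∈ Finset.univ) => by rw [hpr i r]]
        rw [dot_comb_left]
        refine Finset.sum_eq_zero fun j' _ => ?_
        have : ∑ r, lq j' r * q j r = 0 := by
          rw [← hq_lq j j']
          exact Finset.sum_congr rfl fun r _ => mul_comm _ _
        rw [this, mul_zero]
      rw [step, hpq, hdqcomb i (q j), hqg j i]
      ring
    have hcast : ((∑ r, g i r * g j r : ℤ) : ℚ) = ((g j i : ℤ) : ℚ) := by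
      rw [← hQ]
      push_cast
      exact Finset.sum_congr rfl fun r _ => by rw [hqg i r, hqg j r]
    exact_mod_cast hcast
  set i0 : Fin (2*m+1) := ⟨0, by omega⟩ with hi0
  set c0 : ℤ := ∑ r, g i0 r * g i0 r with hc0
  have hc0odd : Odd c0 := hgodd i0
  have hc0pos : 1 ≤ c0 := by
    have hnn : 0 ≤ c0 := Finset.sum_nonneg fun r _ => mul_self_nonneg _
    obtain ⟨c, hc⟩ := hc0odd
    omega
  have hq0ne : q i0 ≠ 0 := by
    intro h0
    have hz : ∀ r, g i0 r = 0 := by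
      intro r
      have : q i0 r = 0 := by rw [h0]; rfl
      rw [hqg i0 r] at this
      exact_mod_cast this
    have : c0 = 0 := by
      rw [hc0]
      exact Finset.sum_eq_zero fun r _ => by rw [hz r, mul_zero]
    omega
  have hmem : ∀ i, q i ∈ LinearMap.ker Φ := fun i => LinearMap.mem_ker.mpr (hqker i)
  have hspan : Submodule.span ℚ {q i0} = LinearMap.ker Φ := by
    apply Submodule.eq_of_le_of_finrank_le
    · rw [Submodule.span_le, Set.singleton_subset_iff]
      exact hmem i0
    · rw [hkerrank, finrank_span_singleton hq0ne]
  have hrs : ∀ i, ∃ r : ℚ, q i = r • q i0 := by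
    intro i
    have : q i ∈ Submodule.span ℚ {q i0} := hspan ▸ hmem i
    obtain ⟨r, hr⟩ := Submodule.mem_span_singleton.mp this
    exact ⟨r, hr.symm⟩
  choose rr hrr using hrs
  have hqc0 : ∑ r, q i0 r * q i0 r = (c0 : ℚ) := by
    rw [hc0]
    push_cast
    exact Finset.sum_congr rfl fun r _ => by rw [hqg i0 r]
  have hkey : ∀ i, c0 ≤ g i0 i * g i0 i := by
    intro i
    have hQ1 : ∑ r, q i r * q i0 r = rr i * (c0:ℚ) := by
      rw [Finset.sum_congr rfl fun r (_ : r ∈ Finset.univ) => by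
        rw [congrFun (hrr i) r]]
      have : ∀ r, (rr i • q i0) r * q i0 r = rr i * (q i0 r * q i0 r) := by
        intro r; simp [Pi.smul_apply, smul_eq_mul]; ring
      rw [Finset.sum_congr rfl fun r _ => this r, ← Finset.mul_sum, hqc0]
    have hQ2 : ∑ r, q i r * q i0 r = ((g i0 i : ℤ) : ℚ) := by
      have hcast : ∑ r, q i r * q i0 r = ((∑ r, g i r * g i0 r : ℤ) : ℚ) := by
        push_cast
        exact Finset.sum_congr rfl fun r _ => by rw [hqg i r, hqg i0 r]
      rw [hcast, hpairing i i0]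
    have hQ3 : ∑ r, q i r * q i r = rr i * rr i * (c0:ℚ) := by
      rw [Finset.sum_congr rfl fun r (_ : r ∈ Finset.univ) => by
        rw [congrFun (hrr i) r]]
      have : ∀ r, (rr i • q i0) r * (rr i • q i0) r
          = rr i * rr i * (q i0 r * q i0 r) := by
        intro r; simp [Pi.smul_apply, smul_eq_mul]; ring
      rw [Finset.sum_congr rfl fun r _ => this r, ← Finset.mul_sum, hqc0]
    have hQ4 : ∑ r, q i r * q i r = ((∑ r, g i r * g i r : ℤ) : ℚ) := by
      push_cast
      exact Finset.sum_congr rfl fun r _ => by rw [hqg i r]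
    have hgi0 : ((g i0 i : ℤ) : ℚ) = rr i * (c0:ℚ) := by rw [← hQ2, hQ1]
    have hni : ((∑ r, g i r * g i r : ℤ) : ℚ) = rr i * rr i * (c0:ℚ) := by
      rw [← hQ4, hQ3]
    have hsq : ((g i0 i * g i0 i : ℤ) : ℚ) = ((∑ r, g i r * g i r : ℤ) : ℚ) * (c0:ℚ) := by
      push_cast at hgi0 hni ⊢
      rw [hgi0, hni]
      ring
    have hsqZ : g i0 i * g i0 i = (∑ r, g i r * g i r) * c0 := by exact_mod_cast hsq
    have h5 : 1 ≤ ∑ r, g i r * g i r := by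
      have hnn : 0 ≤ ∑ r, g i r * g i r := Finset.sum_nonneg fun r _ => mul_self_nonneg _
      obtain ⟨c, hc⟩ := hgodd i
      omega
    rw [hsqZ]
    calc c0 = 1 * c0 := (one_mul c0).symm
      _ ≤ (∑ r, g i r * g i r) * c0 :=
        mul_le_mul_of_nonneg_right h5 (by linarith)
  have hge : ((2*m+1 : ℕ) : ℤ) * c0 ≤ ∑ i, g i0 i * g i0 i := by
    have : ∑ _i : Fin (2*m+1), c0 ≤ ∑ i, g i0 i * g i0 i :=
      Finset.sum_le_sum fun i _ => hkey i
    calc ((2*m+1 : ℕ) : ℤ) * c0 = ∑ _i : Fin (2*m+1), c0 := by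
          rw [Finset.sum_const, Finset.card_univ, Fintype.card_fin, nsmul_eq_mul]
      _ ≤ _ := this
  have hfin : ((2*m+1 : ℕ) : ℤ) * c0 ≤ c0 := by
    calc ((2*m+1 : ℕ) : ℤ) * c0 ≤ ∑ i, g i0 i * g i0 i := hge
      _ = c0 := by rw [hc0]
  have hm' : (1:ℤ) ≤ (m:ℤ) := by exact_mod_cast hm
  have hcast2 : ((2*m+1 : ℕ) : ℤ) = 2*(m:ℤ)+1 := by push_cast; ring
  rw [hcast2] at hfin
  have h7 : (3:ℤ)*c0 ≤ (2*(m:ℤ)+1)*c0 :=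
    mul_le_mul_of_nonneg_right (by linarith) (by linarith)
  linarith

lemma mem_DLat {n : ℕ} (v : Fin n → ℤ) : v ∈ DLat n ↔ Even (∑ i, v i) := Iff.rfl

set_option maxHeartbeats 1600000 in
set_option synthInstance.maxHeartbeats 400000 in
/-- For every integer `m ≥ 1`, any sublattice of `D_{2m+1}` isometric to `D_{2m}` is
primitively embedded: if `L` is a subgroup of `D_{2m+1}` which, with the restricted bilinear
form, is isometric to `D_{2m}`, then the quotient group `D_{2m+1}/L` is torsion-free. -/
theorem D2m_in_D2m1_primitive (m : ℕ) (hm : 1 ≤ m)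
    (L : AddSubgroup (Fin (2 * m + 1) → ℤ)) (hL : L ≤ DLat (2 * m + 1))
    (hiso : ∃ e : L ≃+ DLat (2 * m), ∀ x y : L,
      ∑ i, (x : Fin (2 * m + 1) → ℤ) i * (y : Fin (2 * m + 1) → ℤ) i =
        ∑ i, (e x : Fin (2 * m) → ℤ) i * (e y : Fin (2 * m) → ℤ) i) :
    ∀ g : ((DLat (2 * m + 1)) ⧸ L.addSubgroupOf (DLat (2 * m + 1))),
      g ≠ 0 → ¬ IsOfFinAddOrder g := by
  obtain ⟨e, he⟩ := hiso
  haveI : NeZero (2 * m) := ⟨by omega⟩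
  -- a helper: if the e-image of p•x is divisible by p (with quotient in D), then x ∈ L
  have conclude : ∀ (p : ℕ), p ≠ 0 → ∀ (x : Fin (2*m+1) → ℤ) (hpx : p • x ∈ L)
      (a' : Fin (2*m) → ℤ) (hA : Even (∑ i, a' i)),
      (∀ i, ((e ⟨p • x, hpx⟩ : DLat (2*m)) : Fin (2*m) → ℤ) i = (p:ℤ) * a' i) → x ∈ L := by
    intro p hp0 x hpx a' hA heq
    have h2 : (p • (e.symm ⟨a', hA⟩) : L) = ⟨p • x, hpx⟩ := by
      apply e.injective
      rw [map_nsmul, AddEquiv.apply_symm_apply]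
      apply Subtype.ext
      funext i
      have hcoe : ((p • (⟨a', hA⟩ : DLat (2*m)) : DLat (2*m)) : Fin (2*m) → ℤ) i
          = (p:ℤ) * a' i := by
        simp [Pi.smul_apply]
      rw [hcoe, heq i]
    have h3 : p • ((e.symm ⟨a', hA⟩ : L) : Fin (2*m+1) → ℤ) = p • x := by
      have := congrArg (fun z : L => (z : Fin (2*m+1) → ℤ)) h2
      simpa using this
    have h4 : ((e.symm ⟨a', hA⟩ : L) : Fin (2*m+1) → ℤ) = x := by
      funext i
      have := congrFun h3 i
      simp only [Pi.smul_apply, nsmul_eq_mul] at this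
      have hp0' : ((p:ℤ)) ≠ 0 := by exact_mod_cast hp0
      exact mul_left_cancel₀ hp0' this
    rw [← h4]
    exact SetLike.coe_mem _
  -- the key step for prime p
  have KeyP : ∀ p : ℕ, p.Prime → ∀ x : Fin (2*m+1) → ℤ,
      x ∈ DLat (2*m+1) → p • x ∈ L → x ∈ L := by
    intro p hp x hxD hpxL
    set u : L := ⟨p • x, hpxL⟩ with hu
    set a : Fin (2*m) → ℤ := ((e u : DLat (2*m)) : Fin (2*m) → ℤ) with ha
    have haD : Even (∑ i, a i) := (e u).2
    -- pairing of a with any element of D_{2m} is divisible by p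
    have hdvd : ∀ b : Fin (2*m) → ℤ, Even (∑ k, b k) → (p:ℤ) ∣ ∑ i, a i * b i := by
      intro b hb
      set v : L := e.symm ⟨b, hb⟩ with hv
      have hev : ((e v : DLat (2*m)) : Fin (2*m) → ℤ) = b := by
        rw [hv, AddEquiv.apply_symm_apply]
      have hform := he u v
      rw [hev] at hform
      refine ⟨∑ i, x i * (v : Fin (2*m+1) → ℤ) i, ?_⟩
      rw [← hform]
      have : ∀ i, (u : Fin (2*m+1) → ℤ) i * (v : Fin (2*m+1) → ℤ) i
          = (p:ℤ) * (x i * (v : Fin (2*m+1) → ℤ) i) := by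
        intro i
        have : (u : Fin (2*m+1) → ℤ) i = (p:ℤ) * x i := by
          rw [hu]
          simp [Pi.smul_apply]
        rw [this]; ring
      rw [Finset.sum_congr rfl fun i _ => this i, ← Finset.mul_sum]
    have h2a : ∀ i, (p:ℤ) ∣ 2 * a i := by
      intro i
      have := hdvd (fun k => if k = i then 2 else 0) (by simp)
      rw [Finset.sum_eq_single i (fun r _ hr => by simp [hr]) (by simp)] at this
      simpa [mul_comm] using this
    have hdiff : ∀ i j, (p:ℤ) ∣ a i - a j := by
      intro i j
      by_cases hij : i = j
      · subst hij; simp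
      · have := hdvd (fun k => (if k = i then 1 else 0) - (if k = j then 1 else 0))
          (by simp [Finset.sum_sub_distrib, hij])
        have expand : ∑ k, a k * ((if k = i then (1:ℤ) else 0) - (if k = j then 1 else 0))
            = a i - a j := by
          simp only [mul_sub, Finset.sum_sub_distrib, mul_ite, mul_one, mul_zero]
          simp
        rwa [expand] at this
    have hux : ∀ i, (u : Fin (2*m+1) → ℤ) i = (p:ℤ) * x i := by
      intro i; rw [hu]; simp [Pi.smul_apply]
    have hnormp : ∑ i, a i * a i = (p:ℤ)^2 * ∑ i, x i * x i := by
      have h := (he u u).symm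
      rw [← ha] at h
      rw [h, Finset.mul_sum]
      exact Finset.sum_congr rfl fun i _ => by rw [hux i]; ring
    by_cases hp2 : p = 2
    · subst hp2
      have h8 : (8:ℤ) ∣ ∑ i, a i * a i := by
        obtain ⟨t, ht⟩ := (norm_parity x).mpr hxD
        refine ⟨t, ?_⟩
        rw [hnormp, ht]
        push_cast
        ring
      by_cases hall : ∀ i, Even (a i)
      · choose a2 ha2 using hall
        have haeq : ∀ i, a i = (2:ℤ) * a2 i := fun i => by rw [ha2 i]; ring
        have hS : Even (∑ i, a2 i) := by
          have h4 : ∑ i, a i * a i = 4 * ∑ i, a2 i * a2 i := by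
            rw [Finset.mul_sum]
            exact Finset.sum_congr rfl fun i _ => by rw [haeq i]; ring
          obtain ⟨t, ht⟩ := h8
          refine (norm_parity a2).mp ⟨t, by omega⟩
        refine conclude 2 (by norm_num) x hpxL a2 hS (fun i => ?_)
        have h5 : ((e ⟨2 • x, hpxL⟩ : DLat (2*m)) : Fin (2*m) → ℤ) i = a i := by
          rw [← hu, ← ha]
        rw [h5, haeq i]
        push_cast
        ring
      · push_neg at hall
        obtain ⟨i1, hi1⟩ := hall
        have hallodd : ∀ i, Odd (a i) := by
          intro i
          rcases Int.even_or_odd (a i) with hev | hod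
          · exfalso
            apply hi1
            obtain ⟨c, hc⟩ := hdiff i1 i
            obtain ⟨c2, hc2⟩ := hev
            have hcc : ((2:ℕ):ℤ) = (2:ℤ) := by norm_num
            rw [hcc] at hc
            exact ⟨c + c2, by omega⟩
          · exact hod
        set lv : Fin (2*m) → Fin (2*m+1) → ℤ :=
          fun j => ((e.symm ⟨dgen (2*m) j, dgen_mem (2*m) j⟩ : L) : Fin (2*m+1) → ℤ) with hlv
        have hgram : ∀ j k, ∑ i, lv j i * lv k i = ∑ i, dgen (2*m) j i * dgen (2*m) k i := by
          intro j k
          have h6 := he (e.symm ⟨dgen (2*m) j, dgen_mem (2*m) j⟩)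
            (e.symm ⟨dgen (2*m) k, dgen_mem (2*m) k⟩)
          rwa [AddEquiv.apply_symm_apply, AddEquiv.apply_symm_apply] at h6
        have hDl : ∀ j, Even (∑ i, lv j i) :=
          fun j => (mem_DLat _).mp (hL (SetLike.coe_mem _))
        obtain ⟨za, hza⟩ := dgen_span a haD
        have husum : u = ∑ j, za j • e.symm ⟨dgen (2*m) j, dgen_mem (2*m) j⟩ := by
          apply e.injective
          have hmap : e (∑ j, za j • e.symm ⟨dgen (2*m) j, dgen_mem (2*m) j⟩)
              = ∑ j, za j • (⟨dgen (2*m) j, dgen_mem (2*m) j⟩ : DLat (2*m)) := by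
            rw [map_sum]
            exact Finset.sum_congr rfl fun j _ => by
              rw [map_zsmul, AddEquiv.apply_symm_apply]
          rw [hmap]
          apply Subtype.ext
          have hcoe : ((∑ j, za j • (⟨dgen (2*m) j, dgen_mem (2*m) j⟩ : DLat (2*m))
              : DLat (2*m)) : Fin (2*m) → ℤ) = ∑ j, za j • dgen (2*m) j := by
            push_cast
            rfl
          rw [hcoe, ← hza, ← ha]
        have h2x : ∀ i, 2 * x i = ∑ j, za j * lv j i := by
          intro i
          have h7 : (u : Fin (2*m+1) → ℤ)
              = ((∑ j, za j • e.symm ⟨dgen (2*m) j, dgen_mem (2*m) j⟩ : L)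
                : Fin (2*m+1) → ℤ) := by rw [husum]
          have hlhs : ((u : Fin (2*m+1) → ℤ)) i = 2 * x i := by
            rw [hux i]; push_cast; ring
          have hrhs : (((∑ j, za j • e.symm ⟨dgen (2*m) j, dgen_mem (2*m) j⟩ : L))
              : Fin (2*m+1) → ℤ) i = ∑ j, za j * lv j i := by
            have hc2 : (((∑ j, za j • e.symm ⟨dgen (2*m) j, dgen_mem (2*m) j⟩ : L))
                : Fin (2*m+1) → ℤ) = ∑ j, za j • lv j := by
              push_cast
              rfl
            rw [hc2]
            simp [Finset.sum_apply]
          rw [← hlhs, ← hrhs]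
          exact congrFun h7 i
        have hodd' : ∀ s, Odd ((∑ j, za j • dgen (2*m) j) s) := by
          intro s; rw [← hza]; exact hallodd s
        exact (big m hm lv hgram hDl x hxD za h2x hodd').elim
    · -- p is an odd prime
      have hpa : ∀ i, (p:ℤ) ∣ a i := by
        intro i
        have hpp : Prime (p:ℤ) := Nat.prime_iff_prime_int.mp hp
        rcases hpp.dvd_mul.mp (h2a i) with hd2 | hda
        · exfalso
          have : (p:ℕ) ∣ 2 := by exact_mod_cast hd2
          exact hp2 ((Nat.prime_dvd_prime_iff_eq hp Nat.prime_two).mp this)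
        · exact hda
      choose a' ha' using hpa
      have hS : Even (∑ i, a' i) := by
        have hsplit : ∑ i, a i = (p:ℤ) * ∑ i, a' i := by
          rw [Finset.mul_sum]
          exact Finset.sum_congr rfl fun i _ => ha' i
        have hoddp : Odd ((p:ℤ)) := by
          have := hp.odd_of_ne_two hp2
          exact_mod_cast this
        have := haD
        rw [hsplit] at this
        rcases Int.even_mul.mp this with h | h
        · exact absurd h (Int.not_even_iff_odd.mpr hoddp)
        · exact h
      exact conclude p hp.pos.ne' x hpxL a' hS (fun i => by rw [← hu, ← ha]; exact ha' i)
  -- bootstrap from primes to all positive integers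
  have KeyN : ∀ n : ℕ, 0 < n → ∀ x : Fin (2*m+1) → ℤ,
      x ∈ DLat (2*m+1) → n • x ∈ L → x ∈ L := by
    intro n
    induction n using Nat.strong_induction_on with
    | _ n ih =>
      intro hn x hxD hnx
      rcases Nat.lt_or_ge n 2 with h2 | h2
      · interval_cases n
        · simpa using hnx
      · have hp := Nat.minFac_prime (by omega : n ≠ 1)
        obtain ⟨d, hd⟩ := n.minFac_dvd
        have hxd : (n.minFac * d) • x = n.minFac • (d • x) := mul_smul _ _ _
        rw [hd, hxd] at hnx
        have hdxD : d • x ∈ DLat (2*m+1) := AddSubgroup.nsmul_mem _ hxD d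
        have hdxL : d • x ∈ L := KeyP n.minFac hp (d • x) hdxD hnx
        have hd0 : 0 < d := by
          rcases Nat.eq_zero_or_pos d with h | h
          · exfalso; rw [h, mul_zero] at hd; omega
          · exact h
        have hdlt : d < n := by
          have h2' : 2 ≤ n.minFac := hp.two_le
          calc d < n.minFac * d := by nlinarith
            _ = n := hd.symm
        exact ih d hdlt hd0 x hxD hdxL
  -- conclude torsion-freeness
  intro gq hgq hfin
  obtain ⟨n, hn, hng⟩ := isOfFinAddOrder_iff_nsmul_eq_zero.mp hfin
  obtain ⟨xD, rfl⟩ := QuotientAddGroup.mk'_surjective (L.addSubgroupOf (DLat (2*m+1))) gq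
  have hmem2 : n • xD ∈ L.addSubgroupOf (DLat (2*m+1)) := by
    have hcomm : ((n • xD : DLat (2*m+1))
        : DLat (2*m+1) ⧸ L.addSubgroupOf (DLat (2*m+1)))
        = n • ((xD : DLat (2*m+1)) : DLat (2*m+1) ⧸ L.addSubgroupOf (DLat (2*m+1))) := by
      have h11 := map_nsmul (QuotientAddGroup.mk' (L.addSubgroupOf (DLat (2*m+1)))) n xD
      simpa [QuotientAddGroup.mk'_apply] using h11
    rw [QuotientAddGroup.mk'_apply] at hng
    exact (QuotientAddGroup.eq_zero_iff _).mp (hcomm.trans hng)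
  have hnxL : n • (xD : Fin (2*m+1) → ℤ) ∈ L := by
    have h12 := (AddSubgroup.mem_addSubgroupOf).mp hmem2
    simpa using h12
  have hxL : (xD : Fin (2*m+1) → ℤ) ∈ L := KeyN n hn _ xD.2 hnxL
  apply hgq
  rw [QuotientAddGroup.mk'_apply, QuotientAddGroup.eq_zero_iff]
  exact (AddSubgroup.mem_addSubgroupOf).mpr hxL
end

section
/- Let n ≥ 4 and let v be a root of the lattice D_n. Then the orthogonal complement {x ∈ D_n : ⟨x,v⟩ = 0}, with the restricted bilinear form, is isometric to the orthogonal direct sum of a rank-one lattice generated by a vector of norm 2 and the lattice D_{n−2}. -/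
private def Gfun {n : ℕ} (v : Fin n → ℤ) (a b : Fin n)
    (e0 : Fin (n - 2) ≃ {i : Fin n // i ≠ a ∧ i ≠ b}) (t : ℤ) (y : Fin (n - 2) → ℤ) :
    Fin n → ℤ :=
  fun i => if h : i = a then t * v a else if h' : i = b then -(t * v b)
    else y (e0.symm ⟨i, h, h'⟩)

section lemmas
variable {n : ℕ} (v : Fin n → ℤ) (a b : Fin n)
    (e0 : Fin (n - 2) ≃ {i : Fin n // i ≠ a ∧ i ≠ b}) (t : ℤ) (y : Fin (n - 2) → ℤ)

private lemma Gfun_a : Gfun v a b e0 t y a = t * v a := dif_pos rfl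

private lemma Gfun_b (hab : a ≠ b) : Gfun v a b e0 t y b = -(t * v b) := by
  rw [Gfun, dif_neg (fun h => hab h.symm), dif_pos rfl]

private lemma Gfun_ne {i : Fin n} (h : i ≠ a) (h' : i ≠ b) :
    Gfun v a b e0 t y i = y (e0.symm ⟨i, h, h'⟩) := by
  rw [Gfun, dif_neg h, dif_neg h']

private lemma Gfun_e0 (j : Fin (n - 2)) : Gfun v a b e0 t y (e0 j).1 = y j := by
  rw [Gfun_ne v a b e0 t y (e0 j).2.1 (e0 j).2.2]
  congr 1
  rw [show (⟨(e0 j).1, (e0 j).2.1, (e0 j).2.2⟩ : {i : Fin n // i ≠ a ∧ i ≠ b}) = e0 j from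
    Subtype.ext rfl, Equiv.symm_apply_apply]

private lemma sum_split (hab : a ≠ b) (f : Fin n → ℤ) :
    ∑ i, f i = f a + f b + ∑ j, f (e0 j).1 := by
  have h1 : ∑ j, f (e0 j).1 = ∑ i ∈ ({a, b} : Finset (Fin n))ᶜ, f i := by
    rw [Equiv.sum_comp e0 (fun x : {i : Fin n // i ≠ a ∧ i ≠ b} => f x.1)]
    exact (Finset.sum_subtype _ (fun x => by simp [not_or]) f).symm
  have h2 := Finset.sum_compl_add_sum ({a, b} : Finset (Fin n)) f
  rw [Finset.sum_pair hab] at h2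
  linarith [h2, h1]

end lemmas

set_option maxHeartbeats 1000000 in
/-- Let `n ≥ 4` and let `v` be a root of the lattice `Dₙ`.  Then the orthogonal complement
`{x ∈ Dₙ : ⟨x,v⟩ = 0}`, with the restricted bilinear form, is isometric to the orthogonal
direct sum of a rank-one lattice generated by a vector of norm 2 and the lattice `D_{n−2}`. -/
theorem orthogonal_complement_of_root_in_Dn (n : ℕ) (hn : 4 ≤ n) (v : Fin n → ℤ)
    (hv : v ∈ DLat n) (hroot : ∑ i, v i * v i = 2) :
    ∃ K : AddSubgroup (Fin n → ℤ),
      (∀ x, x ∈ K ↔ x ∈ DLat n ∧ ∑ i, x i * v i = 0) ∧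
      ∃ e : K ≃+ (ℤ × DLat (n - 2)), ∀ x y : K,
        ∑ i, (x : Fin n → ℤ) i * (y : Fin n → ℤ) i =
          2 * (e x).1 * (e y).1 +
            ∑ i, ((e x).2 : Fin (n - 2) → ℤ) i * ((e y).2 : Fin (n - 2) → ℤ) i := by
  classical
  -- Step 1: v = ±e_a ± e_b
  obtain ⟨a, b, hab, hva1, hvb1, hrest⟩ :
      ∃ a b : Fin n, a ≠ b ∧ (v a = 1 ∨ v a = -1) ∧ (v b = 1 ∨ v b = -1) ∧
        ∀ i, i ≠ a → i ≠ b → v i = 0 := by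
    have hsmall : ∀ i, v i * v i ≤ 2 := by
      intro i
      rw [← hroot]
      exact Finset.single_le_sum (fun j _ => mul_self_nonneg (v j)) (Finset.mem_univ i)
    have htri : ∀ i, v i = -1 ∨ v i = 0 ∨ v i = 1 := by
      intro i
      by_contra h
      push_neg at h
      have h2 : 2 ≤ v i ∨ v i ≤ -2 := by omega
      rcases h2 with h2 | h2 <;> nlinarith [hsmall i]
    set S : Finset (Fin n) := Finset.univ.filter (fun i => v i ≠ 0) with hSdef
    have hSsum : ∑ i ∈ S, v i * v i = 2 := by
      rw [← hroot]
      exact Finset.sum_filter_of_ne (fun i _ h => by intro h0; rw [h0] at h; simp at h)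
    have hcard : S.card = 2 := by
      have h1 : ∑ i ∈ S, v i * v i = ∑ i ∈ S, 1 := by
        refine Finset.sum_congr rfl (fun i hi => ?_)
        have hne : v i ≠ 0 := by simpa [hSdef] using hi
        rcases htri i with h | h | h <;> simp [h] at hne ⊢
      rw [h1, Finset.sum_const] at hSsum
      simp only [nsmul_eq_mul, mul_one] at hSsum
      exact_mod_cast hSsum
    obtain ⟨a, b, hab, hS⟩ := Finset.card_eq_two.mp hcard
    have hmem : ∀ i, v i ≠ 0 ↔ (i = a ∨ i = b) := by
      intro i
      constructor
      · intro h
        have : i ∈ S := by simp [hSdef, h]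
        rw [hS] at this; simpa using this
      · intro h
        have : i ∈ S := by rw [hS]; simpa using h
        simpa [hSdef] using this
    refine ⟨a, b, hab, ?_, ?_, fun i hia hib => by
      by_contra h; rcases (hmem i).1 h with h | h <;> [exact hia h; exact hib h]⟩
    · have := (hmem a).2 (Or.inl rfl); rcases htri a with h | h | h <;> simp [h] at this ⊢
    · have := (hmem b).2 (Or.inr rfl); rcases htri b with h | h | h <;> simp [h] at this ⊢
  have hva : v a * v a = 1 := by rcases hva1 with h | h <;> rw [h] <;> ring
  have hvb : v b * v b = 1 := by rcases hvb1 with h | h <;> rw [h] <;> ring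
  have hEab : Even (v a - v b) := by
    rcases hva1 with h | h <;> rcases hvb1 with h' | h' <;> rw [h, h'] <;> decide
  -- Step 2: the coordinate equivalence
  have hccard : Fintype.card {i : Fin n // i ≠ a ∧ i ≠ b} = n - 2 := by
    have h1 : (Finset.univ.filter fun i : Fin n => i ≠ a ∧ i ≠ b) =
        ({a, b} : Finset (Fin n))ᶜ := by
      ext i; simp [not_or]
    rw [Fintype.card_subtype, h1, Finset.card_compl, Finset.card_pair hab, Fintype.card_fin]
  obtain ⟨e0⟩ : Nonempty (Fin (n - 2) ≃ {i : Fin n // i ≠ a ∧ i ≠ b}) :=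
    ⟨(Fintype.equivFinOfCardEq hccard).symm⟩
  have hsplit := sum_split a b e0 hab
  -- orthogonality to v reduces to two coordinates
  have horth : ∀ x : Fin n → ℤ, (∑ i, x i * v i) = x a * v a + x b * v b := by
    intro x
    rw [hsplit (fun i => x i * v i)]
    have h0 : ∀ j, x (e0 j).1 * v (e0 j).1 = 0 := fun j => by
      rw [hrest _ (e0 j).2.1 (e0 j).2.2, mul_zero]
    rw [Fintype.sum_congr _ _ h0]
    simp
  -- coordinates of elements of K
  have hxa : ∀ x : Fin n → ℤ, x a = (x a * v a) * v a := fun x => by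
    rw [mul_assoc, hva, mul_one]
  have hxb : ∀ x : Fin n → ℤ, x a * v a + x b * v b = 0 → x b = -((x a * v a) * v b) := by
    intro x h
    have h2 : x b * v b = -(x a * v a) := by linarith
    calc x b = (x b * v b) * v b := by rw [mul_assoc, hvb, mul_one]
    _ = -(x a * v a) * v b := by rw [h2]
    _ = -((x a * v a) * v b) := by ring
  -- the subgroup K
  refine ⟨{ carrier := {x | Even (∑ i, x i) ∧ ∑ i, x i * v i = 0},
            zero_mem' := by simp,
            add_mem' := by
              rintro x y ⟨hx1, hx2⟩ ⟨hy1, hy2⟩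
              refine ⟨by simpa [Finset.sum_add_distrib] using hx1.add hy1, ?_⟩
              simp only [Pi.add_apply, add_mul]
              rw [Finset.sum_add_distrib, hx2, hy2, add_zero]
            neg_mem' := by
              rintro x ⟨hx1, hx2⟩
              refine ⟨by simpa using hx1.neg, ?_⟩
              simp only [Pi.neg_apply, neg_mul]
              rw [Finset.sum_neg_distrib, hx2, neg_zero] }, fun x => Iff.rfl, ?_⟩

  -- key facts
  have hsolve : ∀ p q : ℤ, p * v a + q * v b = 0 → q = -((p * v a) * v b) := by
    intro p q h
    have h2 : q * v b = -(p * v a) := by linarith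
    calc q = (q * v b) * v b := by rw [mul_assoc, hvb, mul_one]
    _ = -(p * v a) * v b := by rw [h2]
    _ = -((p * v a) * v b) := by ring
  have hkey : ∀ p q r s : ℤ, p * v a + q * v b = 0 → r * v a + s * v b = 0 →
      p * r + q * s = 2 * (p * v a) * (r * v a) := by
    intro p q r s h1 h2
    rcases hva1 with h | h <;> rcases hvb1 with h' | h' <;> simp only [h, h'] at h1 h2 ⊢ <;>
      first
      | (have hq : q = -p := by linarith
         have hs : s = -r := by linarith
         subst hq; subst hs; ring)
      | (have hq : q = p := by linarith
         have hs : s = r := by linarith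
         subst hq; subst hs; ring)
  have hmemD : ∀ x : Fin n → ℤ, Even (∑ i, x i) → (∑ i, x i * v i = 0) →
      Even (∑ j, x (e0 j).1) := by
    intro x h1 h2
    rw [horth] at h2
    have hb' := hsolve (x a) (x b) h2
    have key : x a + x b = (x a * v a) * (v a - v b) := by
      conv_lhs => rw [hxa x, hb']
      ring
    have hs : ∑ j, x (e0 j).1 = (∑ i, x i) - (x a + x b) := by
      have := hsplit x
      linarith
    rw [hs, key]
    exact h1.sub (hEab.mul_left _)
  -- membership of Gfun in K
  have hGsum : ∀ (t : ℤ) (y : Fin (n - 2) → ℤ),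
      ∑ j, Gfun v a b e0 t y (e0 j).1 = ∑ j, y j :=
    fun t y => Fintype.sum_congr _ _ (fun j => Gfun_e0 v a b e0 t y j)
  have hGmem : ∀ (t : ℤ) (y : Fin (n - 2) → ℤ), Even (∑ j, y j) →
      Even (∑ i, Gfun v a b e0 t y i) ∧ (∑ i, Gfun v a b e0 t y i * v i = 0) := by
    intro t y hy
    constructor
    · rw [hsplit (Gfun v a b e0 t y), Gfun_a, Gfun_b v a b e0 t y hab, hGsum]
      have h1 : t * v a + -(t * v b) + ∑ j, y j = t * (v a - v b) + ∑ j, y j := by ring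
      rw [h1]
      exact (hEab.mul_left t).add hy
    · rw [horth, Gfun_a, Gfun_b v a b e0 t y hab]
      linear_combination t * hva - t * hvb
  refine ⟨AddEquiv.mk'
    { toFun := fun x => ((x : Fin n → ℤ) a * v a,
        ⟨fun j => (x : Fin n → ℤ) (e0 j).1, hmemD (x : Fin n → ℤ) x.2.1 x.2.2⟩),
      invFun := fun p => ⟨Gfun v a b e0 p.1 (p.2 : Fin (n - 2) → ℤ),
        hGmem p.1 (p.2 : Fin (n - 2) → ℤ) p.2.2⟩,
      left_inv := ?_,
      right_inv := ?_ } ?_, ?_⟩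
  · -- left inverse
    intro x
    apply Subtype.ext
    funext i
    show Gfun v a b e0 ((x : Fin n → ℤ) a * v a) (fun j => (x : Fin n → ℤ) (e0 j).1) i
      = (x : Fin n → ℤ) i
    by_cases hia : i = a
    · rw [hia, Gfun_a]
      exact (hxa (x : Fin n → ℤ)).symm
    · by_cases hib : i = b
      · rw [hib, Gfun_b v a b e0 _ _ hab]
        have h2 := x.2.2
        rw [horth] at h2
        exact (hsolve _ _ h2).symm
      · rw [Gfun_ne v a b e0 _ _ hia hib]
        simp only [Equiv.apply_symm_apply]
  · -- right inverse
    intro p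
    refine Prod.ext ?_ ?_
    · show Gfun v a b e0 p.1 (p.2 : Fin (n - 2) → ℤ) a * v a = p.1
      rw [Gfun_a, mul_assoc, hva, mul_one]
    · apply Subtype.ext
      funext j
      show Gfun v a b e0 p.1 (p.2 : Fin (n - 2) → ℤ) (e0 j).1 = (p.2 : Fin (n - 2) → ℤ) j
      exact Gfun_e0 v a b e0 _ _ j
  · -- additivity
    intro x y
    dsimp only [Equiv.coe_fn_mk]
    refine Prod.ext ?_ ?_
    · simp [add_mul]
    · apply Subtype.ext
      funext j
      simp
  · -- the isometry property
    intro x y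
    show ∑ i, (x : Fin n → ℤ) i * (y : Fin n → ℤ) i
      = 2 * ((x : Fin n → ℤ) a * v a) * ((y : Fin n → ℤ) a * v a)
        + ∑ j, (x : Fin n → ℤ) (e0 j).1 * (y : Fin n → ℤ) (e0 j).1
    obtain ⟨hx1, hx2⟩ := x.2
    obtain ⟨hy1, hy2⟩ := y.2
    rw [horth] at hx2 hy2
    have h := hkey _ _ _ _ hx2 hy2
    rw [hsplit (fun i => (x : Fin n → ℤ) i * (y : Fin n → ℤ) i)]
    rw [h]
end

section
/- Let m ≥ 3 and let v₁,…,v_{m+3} be pairwise orthogonal roots of the lattice D_{2m}. Let M be the ℤ-span of v₁,…,v_{m+3} and let M' be the primitive closure of M in D_{2m}. Then the index [M' : M] is at least 4. -/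
def vsupp {n : ℕ} (x : Fin n → ℤ) : Finset (Fin n) :=
  Finset.univ.filter (fun i => x i ≠ 0)


section aux
variable {n N : ℕ} (v : Fin N → (Fin n → ℤ))
  (hroot : ∀ k, ∑ i, v k i * v k i = 2)
  (horth : ∀ k l, k ≠ l → ∑ i, v k i * v l i = 0)

include hroot in
lemma entry_cases (k : Fin N) (i : Fin n) : v k i = 0 ∨ v k i = 1 ∨ v k i = -1 := by
  have h2 : v k i * v k i ≤ 2 := by
    calc v k i * v k i ≤ ∑ j, v k j * v k j :=
          Finset.single_le_sum (fun j _ => mul_self_nonneg (v k j)) (Finset.mem_univ i)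
      _ = 2 := hroot k
  have h3 : -1 ≤ v k i := by nlinarith
  have h4 : v k i ≤ 1 := by nlinarith
  omega

include hroot in
lemma supp_card (k : Fin N) : (vsupp (v k)).card = 2 := by
  have h1 : ((vsupp (v k)).card : ℤ) = ∑ i ∈ vsupp (v k), (1 : ℤ) := by simp
  have h2 : ∑ i ∈ vsupp (v k), (1 : ℤ) = ∑ i ∈ vsupp (v k), v k i * v k i := by
    refine Finset.sum_congr rfl fun i hi => ?_
    simp only [vsupp, Finset.mem_filter] at hi
    rcases entry_cases v hroot k i with h | h | h
    · exact absurd h hi.2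
    · rw [h]; ring
    · rw [h]; ring
  have h3 : ∑ i ∈ vsupp (v k), v k i * v k i = ∑ i, v k i * v k i := by
    refine Finset.sum_subset (Finset.subset_univ _) fun i _ hi => ?_
    simp only [vsupp, Finset.mem_filter, Finset.mem_univ, true_and, not_not] at hi
    rw [hi]; ring
  have := hroot k
  omega

include hroot horth in
lemma supp_eq_or_disjoint (k l : Fin N) (hkl : k ≠ l) :
    vsupp (v k) = vsupp (v l) ∨ Disjoint (vsupp (v k)) (vsupp (v l)) := by
  set I := vsupp (v k) ∩ vsupp (v l) with hI
  have hsum : ∑ i ∈ I, v k i * v l i = 0 := by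
    rw [← horth k l hkl]
    refine Finset.sum_subset (Finset.subset_univ _) fun i _ hi => ?_
    simp only [hI, vsupp, Finset.mem_inter, Finset.mem_filter, Finset.mem_univ, true_and,
      not_and_or, not_not] at hi
    rcases hi with h | h <;> rw [h] <;> ring
  have hIk : I ⊆ vsupp (v k) := Finset.inter_subset_left
  have hcard : I.card ≤ 2 := by
    have := Finset.card_le_card hIk
    rw [supp_card v hroot k] at this; exact this
  interval_cases h : I.card
  · right
    rw [Finset.disjoint_iff_inter_eq_empty, ← hI, ← Finset.card_eq_zero]; exact h
  · exfalso
    obtain ⟨i, hi⟩ := Finset.card_eq_one.mp h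
    rw [hi, Finset.sum_singleton] at hsum
    have hiI : i ∈ I := by rw [hi]; exact Finset.mem_singleton_self i
    simp only [hI, vsupp, Finset.mem_inter, Finset.mem_filter] at hiI
    exact mul_ne_zero hiI.1.2 hiI.2.2 hsum
  · left
    have h1 : I = vsupp (v k) :=
      Finset.eq_of_subset_of_card_le hIk (by rw [supp_card v hroot k, h])
    have h2 : I = vsupp (v l) :=
      Finset.eq_of_subset_of_card_le Finset.inter_subset_right (by rw [supp_card v hroot l, h])
    rw [← h1, ← h2]

include hroot horth in
lemma orth_pair_sum (k l : Fin N) (hkl : k ≠ l) (i j : Fin n) (hij : i ≠ j)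
    (hs : vsupp (v k) = {i, j}) (hsl : vsupp (v l) = {i, j}) :
    v k i * v l i + v k j * v l j = 0 := by
  rw [← horth k l hkl]
  symm
  rw [show ∑ i, v k i * v l i = ∑ x ∈ vsupp (v k), v k x * v l x from ?_, hs,
    Finset.sum_pair hij]
  refine (Finset.sum_subset (Finset.subset_univ _) fun x _ hx => ?_).symm
  simp only [vsupp, Finset.mem_filter, Finset.mem_univ, true_and, not_not] at hx
  rw [hx]; ring

include hroot horth in
lemma no_three (a b c : Fin N) (hab : a ≠ b) (hac : a ≠ c) (hbc : b ≠ c)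
    (hSab : vsupp (v a) = vsupp (v b)) (hSac : vsupp (v a) = vsupp (v c)) : False := by
  obtain ⟨i, j, hij, hS⟩ := Finset.card_eq_two.mp (supp_card v hroot a)
  have e1 := orth_pair_sum v hroot horth a b hab i j hij hS (hSab ▸ hS)
  have e2 := orth_pair_sum v hroot horth a c hac i j hij hS (hSac ▸ hS)
  have e3 := orth_pair_sum v hroot horth b c hbc i j hij (hSab ▸ hS) (hSac ▸ hS)
  have hmem : ∀ k : Fin N, vsupp (v k) = {i, j} → v k i * v k i = 1 ∧ v k j * v k j = 1 := by
    intro k hk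
    have hki : v k i ≠ 0 := by
      have : i ∈ vsupp (v k) := by rw [hk]; simp
      simpa [vsupp] using this
    have hkj : v k j ≠ 0 := by
      have : j ∈ vsupp (v k) := by rw [hk]; simp
      simpa [vsupp] using this
    constructor
    · rcases entry_cases v hroot k i with h | h | h
      · exact absurd h hki
      · rw [h]; ring
      · rw [h]; ring
    · rcases entry_cases v hroot k j with h | h | h
      · exact absurd h hkj
      · rw [h]; ring
      · rw [h]; ring
  obtain ⟨ha1, ha2⟩ := hmem a hS
  obtain ⟨hb1, hb2⟩ := hmem b (hSab ▸ hS)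
  obtain ⟨hc1, hc2⟩ := hmem c (hSac ▸ hS)
  set A := v a i * v a j with hA
  set B := v b i * v b j with hB
  set C := v c i * v c j with hC
  have hAB : A * B = -1 := by
    rw [hA, hB]; linear_combination (v a j * v b j) * e1 - (v b j * v b j) * ha2 - hb2
  have hAC : A * C = -1 := by
    rw [hA, hC]; linear_combination (v a j * v c j) * e2 - (v c j * v c j) * ha2 - hc2
  have hBC : B * C = -1 := by
    rw [hB, hC]; linear_combination (v b j * v c j) * e3 - (v c j * v c j) * hb2 - hc2
  have hA2 : A * A = 1 := by
    rw [hA]; linear_combination (v a j * v a j) * ha1 + ha2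
  have h5 : (A * B) * (A * C) = 1 := by rw [hAB, hAC]; norm_num
  have h6 : (A * B) * (A * C) = (A * A) * (B * C) := by ring
  rw [h6, hA2, hBC] at h5
  norm_num at h5

end aux


lemma mem_closure_iff_rep {n N : ℕ} (v : Fin N → (Fin n → ℤ)) (x : Fin n → ℤ) :
    x ∈ AddSubgroup.closure (Set.range v) ↔ ∃ c : Fin N → ℤ, ∑ k, c k • v k = x := by
  rw [← Submodule.span_int_eq_addSubgroupClosure]
  exact Submodule.mem_span_range_iff_exists_fun ℤ

section aux2
variable {n N : ℕ} (v : Fin N → (Fin n → ℤ))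
  (hroot : ∀ k, ∑ i, v k i * v k i = 2)
  (horth : ∀ k l, k ≠ l → ∑ i, v k i * v l i = 0)

include hroot horth in
lemma ip_of_rep (c : Fin N → ℤ) (l : Fin N) :
    ∑ i, (∑ k, c k • v k) i * v l i = 2 * c l := by
  have h1 : ∀ i, (∑ k, c k • v k) i = ∑ k, c k * v k i := by
    intro i; simp [Finset.sum_apply]
  calc ∑ i, (∑ k, c k • v k) i * v l i
      = ∑ i, ∑ k, (c k * v k i) * v l i := by
        refine Finset.sum_congr rfl fun i _ => ?_
        rw [h1, Finset.sum_mul]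
    _ = ∑ k, ∑ i, (c k * v k i) * v l i := Finset.sum_comm
    _ = ∑ k, c k * ∑ i, v k i * v l i := by
        refine Finset.sum_congr rfl fun k _ => ?_
        rw [Finset.mul_sum]
        exact Finset.sum_congr rfl fun i _ => by ring
    _ = 2 * c l := by
        rw [Finset.sum_eq_single l]
        · rw [hroot l]; ring
        · intro k _ hk; rw [horth k l hk, mul_zero]
        · simp
end aux2

section aux3
variable {n N : ℕ} (v : Fin N → (Fin n → ℤ))
  (hroot : ∀ k, ∑ i, v k i * v k i = 2)
  (horth : ∀ k l, k ≠ l → ∑ i, v k i * v l i = 0)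

include hroot horth in
lemma pair_w (a a' : Fin N) (haa : a ≠ a') (hS : vsupp (v a) = vsupp (v a')) :
    ∃ w : Fin n → ℤ, (∀ i, 2 * w i = v a i + v a' i) ∧
      (∑ i, w i * v a i = 1) ∧ (∑ i, w i * v a' i = 1) ∧
      (∀ k, k ≠ a → k ≠ a' → ∑ i, w i * v k i = 0) ∧ Odd (∑ i, w i) := by
  have hdvd : ∀ i, 2 ∣ (v a i + v a' i) := by
    intro i
    have hio : v a i = 0 ↔ v a' i = 0 := by
      have h1 : (i ∈ vsupp (v a)) ↔ (i ∈ vsupp (v a')) := by rw [hS]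
      simp only [vsupp, Finset.mem_filter, Finset.mem_univ, true_and] at h1
      exact not_iff_not.mp h1
    rcases entry_cases v hroot a i with h | h | h <;>
      rcases entry_cases v hroot a' i with h' | h' | h' <;>
      simp [h, h'] at hio ⊢ <;> omega
  have key : ∀ k : Fin N, 2 * ∑ i, (v a i + v a' i) / 2 * v k i
      = (∑ i, v a i * v k i) + (∑ i, v a' i * v k i) := by
    intro k
    rw [Finset.mul_sum, ← Finset.sum_add_distrib]
    refine Finset.sum_congr rfl fun i _ => ?_
    have h2 : 2 * ((v a i + v a' i) / 2) = v a i + v a' i := Int.mul_ediv_cancel' (hdvd i)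
    linear_combination (v k i) * h2
  refine ⟨fun i => (v a i + v a' i) / 2, fun i => Int.mul_ediv_cancel' (hdvd i), ?_, ?_, ?_, ?_⟩
  · beta_reduce
    have h1 := key a
    rw [hroot a, horth a' a (Ne.symm haa)] at h1
    omega
  · beta_reduce
    have h1 := key a'
    rw [hroot a', horth a a' haa] at h1
    omega
  · intro k hka hka'
    beta_reduce
    have h1 := key k
    rw [horth a k (Ne.symm hka), horth a' k (Ne.symm hka')] at h1
    omega
  · -- parity of coordinate sum
    beta_reduce
    have hsq : 4 * ∑ i, ((v a i + v a' i) / 2) * ((v a i + v a' i) / 2) = 4 := by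
      have expand : ∀ i, 4 * (((v a i + v a' i) / 2) * ((v a i + v a' i) / 2))
          = v a i * v a i + 2 * (v a i * v a' i) + v a' i * v a' i := by
        intro i
        have h2 : 2 * ((v a i + v a' i) / 2) = v a i + v a' i := Int.mul_ediv_cancel' (hdvd i)
        linear_combination (2*((v a i + v a' i)/2) + v a i + v a' i) * h2
      rw [Finset.mul_sum]
      rw [Finset.sum_congr rfl (fun i _ => expand i)]
      rw [Finset.sum_add_distrib, Finset.sum_add_distrib, ← Finset.mul_sum]
      rw [hroot a, hroot a', horth a a' haa]
      ring
    have hsq1 : ∑ i, ((v a i + v a' i) / 2) * ((v a i + v a' i) / 2) = 1 := by omega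
    have hpar : Even (∑ i, (((v a i + v a' i) / 2) * ((v a i + v a' i) / 2)
        - (v a i + v a' i) / 2)) := by
      refine Finset.even_sum _ fun i _ => ?_
      have : ((v a i + v a' i) / 2) * ((v a i + v a' i) / 2) - (v a i + v a' i) / 2
          = ((v a i + v a' i) / 2 - 1) * (((v a i + v a' i) / 2 - 1) + 1) := by ring
      rw [this]
      exact Int.even_mul_succ_self _
    rw [Finset.sum_sub_distrib, hsq1] at hpar
    obtain ⟨c, hc⟩ := hpar
    exact ⟨-c, by omega⟩
end aux3

lemma pigeonhole (m : ℕ) (v : Fin (m + 3) → (Fin (2 * m) → ℤ))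
    (hroot : ∀ k, ∑ i, v k i * v k i = 2)
    (horth : ∀ k l, k ≠ l → ∑ i, v k i * v l i = 0) :
    ∃ a a' b b' c c' : Fin (m + 3), a ≠ a' ∧ b ≠ b' ∧ c ≠ c' ∧
      vsupp (v a) = vsupp (v a') ∧ vsupp (v b) = vsupp (v b') ∧ vsupp (v c) = vsupp (v c') ∧
      vsupp (v a) ≠ vsupp (v b) ∧ vsupp (v a) ≠ vsupp (v c) ∧
      vsupp (v b) ≠ vsupp (v c) := by
  classical
  let T : Finset (Finset (Fin (2 * m))) :=
    Finset.image (fun k => vsupp (v k)) Finset.univ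
  have hmemT : ∀ t, t ∈ T ↔ ∃ k, vsupp (v k) = t := by
    intro t
    simp [T]
  -- T has at most m elements
  have hTm : T.card ≤ m := by
    have hdisj : ∀ t1 ∈ T, ∀ t2 ∈ T, t1 ≠ t2 → Disjoint t1 t2 := by
      intro t1 h1 t2 h2 h12
      obtain ⟨k, rfl⟩ := (hmemT t1).mp h1
      obtain ⟨l, rfl⟩ := (hmemT t2).mp h2
      have hkl : k ≠ l := fun h => h12 (by rw [h])
      rcases supp_eq_or_disjoint v hroot horth k l hkl with h | h
      · exact absurd h h12
      · exact h
    have h1 : ∑ t ∈ T, t.card = (T.biUnion id).card := (Finset.card_biUnion hdisj).symm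
    have h2 : ∑ t ∈ T, t.card = 2 * T.card := by
      rw [Finset.sum_congr rfl (fun t ht => ?_), Finset.sum_const, smul_eq_mul, mul_comm]
      obtain ⟨k, rfl⟩ := (hmemT t).mp ht
      exact supp_card v hroot k
    have h3 : (T.biUnion id).card ≤ 2 * m := by
      simpa using Finset.card_le_card (Finset.subset_univ (T.biUnion id))
    omega
  -- fibers
  let fib : Finset (Fin (2 * m)) → Finset (Fin (m + 3)) :=
    fun t => Finset.univ.filter (fun k => vsupp (v k) = t)
  have hmemfib : ∀ t k, k ∈ fib t ↔ vsupp (v k) = t := by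
    intro t k
    simp [fib]
  have hfible : ∀ t, (fib t).card ≤ 2 := by
    intro t
    by_contra h
    push_neg at h
    obtain ⟨a, b, c, ha, hb, hc, hab, hac, hbc⟩ := Finset.two_lt_card_iff.mp h
    rw [hmemfib] at ha hb hc
    exact no_three v hroot horth a b c hab hac hbc (by rw [ha, hb]) (by rw [ha, hc])
  have hsumfib : ∑ t ∈ T, (fib t).card = m + 3 := by
    have h := Finset.card_eq_sum_card_fiberwise
      (f := fun k => vsupp (v k)) (s := Finset.univ) (t := T)
      (fun x _ => Finset.mem_image_of_mem _ (Finset.mem_univ x))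
    have h2 : (Finset.univ : Finset (Fin (m + 3))).card = m + 3 := by simp
    rw [h2] at h
    exact h.symm
  -- the set of supports with at least two roots
  let P : Finset (Finset (Fin (2 * m))) := T.filter (fun t => 2 ≤ (fib t).card)
  have hmemP : ∀ t, t ∈ P ↔ t ∈ T ∧ 2 ≤ (fib t).card := by
    intro t
    simp [P]
  have hPsub : P ⊆ T := Finset.filter_subset _ _
  have hP3 : 3 ≤ P.card := by
    have hle : ∑ t ∈ T, (fib t).card ≤ ∑ t ∈ T, (1 + if t ∈ P then 1 else 0) := by
      refine Finset.sum_le_sum fun t ht => ?_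
      by_cases hp : t ∈ P
      · have := hfible t
        simp only [hp, if_true]
        omega
      · simp only [hp, if_false]
        rw [hmemP] at hp
        have : ¬ 2 ≤ (fib t).card := fun h => hp ⟨ht, h⟩
        omega
    have heq : ∑ t ∈ T, (1 + if t ∈ P then 1 else 0) = T.card + P.card := by
      rw [Finset.sum_add_distrib, Finset.sum_const, smul_eq_mul, mul_one,
        Finset.sum_ite_mem, Finset.inter_eq_right.mpr hPsub, Finset.sum_const, smul_eq_mul,
        mul_one]
    omega
  -- pick three distinct supports in P
  obtain ⟨t1, t2, t3, ht1, ht2, ht3, h12, h13, h23⟩ :=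
    (Finset.two_lt_card_iff (s := P)).mp (by omega)
  have hpick : ∀ t ∈ P, ∃ a a' : Fin (m + 3), a ≠ a' ∧ vsupp (v a) = t ∧ vsupp (v a') = t := by
    intro t ht
    have ht2 := ((hmemP t).mp ht).2
    obtain ⟨a, ha, a', ha', haa⟩ := (Finset.one_lt_card (s := fib t)).mp (by omega)
    rw [hmemfib] at ha ha'
    exact ⟨a, a', haa, ha, ha'⟩
  obtain ⟨a, a', haa, ha1, ha2⟩ := hpick t1 ht1
  obtain ⟨b, b', hbb, hb1, hb2⟩ := hpick t2 ht2
  obtain ⟨c, c', hcc, hc1, hc2⟩ := hpick t3 ht3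
  exact ⟨a, a', b, b', c, c', haa, hbb, hcc,
    by rw [ha1, ha2], by rw [hb1, hb2], by rw [hc1, hc2],
    by rw [ha1, hb1]; exact h12, by rw [ha1, hc1]; exact h13, by rw [hb1, hc1]; exact h23⟩




/-- The primitive closure of a subgroup `M` inside the lattice `Dₙ`:
`M' = {x ∈ Dₙ : kx ∈ M for some nonzero integer k}`. -/
def primClosure (n : ℕ) (M : AddSubgroup (Fin n → ℤ)) : AddSubgroup (Fin n → ℤ) where
  carrier := {x | x ∈ DLat n ∧ ∃ k : ℤ, k ≠ 0 ∧ k • x ∈ M}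
  zero_mem' := ⟨(DLat n).zero_mem, 1, one_ne_zero, by simpa using M.zero_mem⟩
  add_mem' := by
    rintro a b ⟨haD, k, hk, hka⟩ ⟨hbD, l, hl, hlb⟩
    refine ⟨(DLat n).add_mem haD hbD, k * l, mul_ne_zero hk hl, ?_⟩
    have h1 : (k * l) • (a + b) = l • (k • a) + k • (l • b) := by
      rw [smul_add, smul_smul, smul_smul, mul_comm l k]
    rw [h1]
    exact M.add_mem (M.zsmul_mem hka l) (M.zsmul_mem hlb k)
  neg_mem' := by
    rintro a ⟨haD, k, hk, hka⟩
    exact ⟨(DLat n).neg_mem haD, k, hk, by simpa [smul_neg] using M.neg_mem hka⟩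

/-- Let `m ≥ 3` and let `v₁,…,v_{m+3}` be pairwise orthogonal roots of the lattice `D_{2m}`.
Let `M` be the `ℤ`-span of `v₁,…,v_{m+3}` and let `M'` be the primitive closure of `M` in
`D_{2m}`.  Then the index `[M' : M]` is at least 4. -/
theorem index_primitive_closure_D_even (m : ℕ) (hm : 3 ≤ m)
    (v : Fin (m + 3) → (Fin (2 * m) → ℤ))
    (hmem : ∀ k, v k ∈ DLat (2 * m))
    (hroot : ∀ k, ∑ i, v k i * v k i = 2)
    (horth : ∀ k l, k ≠ l → ∑ i, v k i * v l i = 0) :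
    4 ≤ ((AddSubgroup.closure (Set.range v)).addSubgroupOf
        (primClosure (2 * m) (AddSubgroup.closure (Set.range v)))).index := by
  classical
  set M := AddSubgroup.closure (Set.range v) with hM
  set M' := primClosure (2 * m) M with hM'
  -- membership characterizations
  have hmemM : ∀ x : Fin (2 * m) → ℤ, x ∈ M ↔ ∃ c : Fin (m + 3) → ℤ, ∑ k, c k • v k = x :=
    fun x => mem_closure_iff_rep v x
  have hmemM' : ∀ x : Fin (2 * m) → ℤ,
      x ∈ M' ↔ (Even (∑ i, x i) ∧ ∃ k : ℤ, k ≠ 0 ∧ k • x ∈ M) := fun x => Iff.rfl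
  -- inner products of elements of M with the roots are even
  have hMeven : ∀ x ∈ M, ∀ l, ∃ d : ℤ, ∑ i, x i * v l i = 2 * d := by
    intro x hx l
    obtain ⟨c, rfl⟩ := (hmemM x).mp hx
    exact ⟨c l, ip_of_rep v hroot horth c l⟩
  -- get the three pairs
  obtain ⟨a, a', b, b', c, c', haa, hbb, hcc, hSa, hSb, hSc, hab, hac, hbc⟩ :=
    pigeonhole m v hroot horth
  have hne : ∀ k l : Fin (m + 3), vsupp (v k) ≠ vsupp (v l) → k ≠ l := by
    intro k l h he
    exact h (by rw [he])
  -- all the cross-pair distinctness facts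
  have hab1 : a ≠ b := hne _ _ hab
  have hab2 : a ≠ b' := hne _ _ (hSb ▸ hab)
  have hab3 : a' ≠ b := hne _ _ (hSa ▸ hab)
  have hab4 : a' ≠ b' := hne _ _ (hSa ▸ hSb ▸ hab)
  have hac1 : a ≠ c := hne _ _ hac
  have hac2 : a ≠ c' := hne _ _ (hSc ▸ hac)
  have hac3 : a' ≠ c := hne _ _ (hSa ▸ hac)
  have hac4 : a' ≠ c' := hne _ _ (hSa ▸ hSc ▸ hac)
  have hbc1 : b ≠ c := hne _ _ hbc
  have hbc2 : b ≠ c' := hne _ _ (hSc ▸ hbc)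
  have hbc3 : b' ≠ c := hne _ _ (hSb ▸ hbc)
  have hbc4 : b' ≠ c' := hne _ _ (hSb ▸ hSc ▸ hbc)
  -- the three half-sum vectors
  obtain ⟨w1, hw1d, hw1a, hw1a', hw1o, hw1odd⟩ := pair_w v hroot horth a a' haa hSa
  obtain ⟨w2, hw2d, hw2b, hw2b', hw2o, hw2odd⟩ := pair_w v hroot horth b b' hbb hSb
  obtain ⟨w3, hw3d, hw3c, hw3c', hw3o, hw3odd⟩ := pair_w v hroot horth c c' hcc hSc
  -- x and y
  set x : Fin (2 * m) → ℤ := fun i => w1 i + w2 i with hxdef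
  set y : Fin (2 * m) → ℤ := fun i => w2 i + w3 i with hydef
  have hsum_x : ∀ k, ∑ i, x i * v k i = (∑ i, w1 i * v k i) + (∑ i, w2 i * v k i) := by
    intro k
    rw [← Finset.sum_add_distrib]
    exact Finset.sum_congr rfl fun i _ => by simp [hxdef]; ring
  have hsum_y : ∀ k, ∑ i, y i * v k i = (∑ i, w2 i * v k i) + (∑ i, w3 i * v k i) := by
    intro k
    rw [← Finset.sum_add_distrib]
    exact Finset.sum_congr rfl fun i _ => by simp [hydef]; ring
  have hsum_xy : ∀ k, ∑ i, (x i + y i) * v k i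
      = (∑ i, x i * v k i) + (∑ i, y i * v k i) := by
    intro k
    rw [← Finset.sum_add_distrib]
    exact Finset.sum_congr rfl fun i _ => by ring
  -- membership of x, y, x+y in M'
  have hxM' : x ∈ M' := by
    rw [hmemM' x]
    constructor
    · obtain ⟨p, hp⟩ := hw1odd
      obtain ⟨q, hq⟩ := hw2odd
      refine ⟨p + q + 1, ?_⟩
      rw [show ∑ i, x i = (∑ i, w1 i) + ∑ i, w2 i from ?_, hp, hq]
      · ring
      · rw [← Finset.sum_add_distrib]
    · refine ⟨2, two_ne_zero, ?_⟩
      have h2x : (2 : ℤ) • x = (v a + v a') + (v b + v b') := by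
        funext i
        have h1 := hw1d i
        have h2 := hw2d i
        simp only [Pi.smul_apply, smul_eq_mul, Pi.add_apply, hxdef]
        omega
      rw [h2x]
      exact M.add_mem
        (M.add_mem (AddSubgroup.subset_closure ⟨a, rfl⟩)
          (AddSubgroup.subset_closure ⟨a', rfl⟩))
        (M.add_mem (AddSubgroup.subset_closure ⟨b, rfl⟩)
          (AddSubgroup.subset_closure ⟨b', rfl⟩))
  have hyM' : y ∈ M' := by
    rw [hmemM' y]
    constructor
    · obtain ⟨p, hp⟩ := hw2odd
      obtain ⟨q, hq⟩ := hw3odd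
      refine ⟨p + q + 1, ?_⟩
      rw [show ∑ i, y i = (∑ i, w2 i) + ∑ i, w3 i from ?_, hp, hq]
      · ring
      · rw [← Finset.sum_add_distrib]
    · refine ⟨2, two_ne_zero, ?_⟩
      have h2y : (2 : ℤ) • y = (v b + v b') + (v c + v c') := by
        funext i
        have h1 := hw2d i
        have h2 := hw3d i
        simp only [Pi.smul_apply, smul_eq_mul, Pi.add_apply, hydef]
        omega
      rw [h2y]
      exact M.add_mem
        (M.add_mem (AddSubgroup.subset_closure ⟨b, rfl⟩)
          (AddSubgroup.subset_closure ⟨b', rfl⟩))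
        (M.add_mem (AddSubgroup.subset_closure ⟨c, rfl⟩)
          (AddSubgroup.subset_closure ⟨c', rfl⟩))
  -- the homomorphism to (ZMod 2)^(m+3)
  set φ : M' →+ (Fin (m + 3) → ZMod 2) := AddMonoidHom.mk'
    (fun z => fun k => ((∑ i, (z : Fin (2 * m) → ℤ) i * v k i : ℤ) : ZMod 2))
    (by
      intro z1 z2
      funext k
      have h : ∑ i, ((z1 + z2 : M') : Fin (2 * m) → ℤ) i * v k i
          = (∑ i, (z1 : Fin (2 * m) → ℤ) i * v k i)
            + ∑ i, (z2 : Fin (2 * m) → ℤ) i * v k i := by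
        rw [← Finset.sum_add_distrib]
        refine Finset.sum_congr rfl fun i _ => ?_
        have h2 : ((z1 + z2 : M') : Fin (2 * m) → ℤ) i
            = (z1 : Fin (2 * m) → ℤ) i + (z2 : Fin (2 * m) → ℤ) i := rfl
        rw [h2]
        ring
      show ((∑ i, ((z1 + z2 : M') : Fin (2 * m) → ℤ) i * v k i : ℤ) : ZMod 2) = _
      rw [h]
      push_cast
      rfl) with hφdef
  have hφapply : ∀ (z : M') (k : Fin (m + 3)),
      φ z k = ((∑ i, (z : Fin (2 * m) → ℤ) i * v k i : ℤ) : ZMod 2) := fun z k => rfl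
  -- kernel facts
  have hker : ∀ z : M', (z : Fin (2 * m) → ℤ) ∈ M → φ z = 0 := by
    intro z hz
    funext k
    rw [hφapply]
    obtain ⟨d, hd⟩ := hMeven _ hz k
    rw [hd]
    push_cast
    rw [show ((2 : ZMod 2) = 0) from rfl]
    ring_nf
    rfl
  have hkey : ∀ z : M', φ z = 0 → (z : Fin (2 * m) → ℤ) ∈ M := by
    intro z hz
    obtain ⟨hD, j, hj, hjM⟩ := (hmemM' (z : Fin (2 * m) → ℤ)).mp z.2
    obtain ⟨cc, hcc'⟩ := (hmemM _).mp hjM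
    -- each inner product of z with v l is even
    have heven : ∀ l, ∃ d : ℤ, ∑ i, (z : Fin (2 * m) → ℤ) i * v l i = 2 * d := by
      intro l
      have h0 : ((∑ i, (z : Fin (2 * m) → ℤ) i * v l i : ℤ) : ZMod 2) = 0 := by
        rw [← hφapply, hz]
        rfl
      have h1 := (ZMod.intCast_zmod_eq_zero_iff_dvd _ 2).mp h0
      obtain ⟨d, hd⟩ := h1
      exact ⟨d, by push_cast at hd; omega⟩
    choose d hd using heven
    -- show cc l = j * d l
    have hcd : ∀ l, cc l = j * d l := by
      intro l
      have h1 : ∑ i, (∑ k, cc k • v k) i * v l i = 2 * cc l := ip_of_rep v hroot horth cc l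
      rw [hcc'] at h1
      have h2 : ∑ i, (j • (z : Fin (2 * m) → ℤ)) i * v l i
          = j * ∑ i, (z : Fin (2 * m) → ℤ) i * v l i := by
        rw [Finset.mul_sum]
        exact Finset.sum_congr rfl fun i _ => by
          simp only [Pi.smul_apply, smul_eq_mul]; ring
      rw [h2, hd l] at h1
      have h3 : 2 * cc l = 2 * (j * d l) := by linear_combination -h1
      exact mul_left_cancel₀ two_ne_zero h3
    have hrep : j • (z : Fin (2 * m) → ℤ) = j • ∑ k, (d k) • v k := by
      rw [← hcc']
      rw [Finset.smul_sum]
      exact Finset.sum_congr rfl fun k _ => by rw [hcd k, mul_smul]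
    have hz' : (z : Fin (2 * m) → ℤ) = ∑ k, (d k) • v k :=
      smul_right_injective (Fin (2 * m) → ℤ) hj hrep
    rw [hz']
    exact (hmemM _).mpr ⟨d, rfl⟩
  -- the induced injective map on the quotient
  set H := M.addSubgroupOf M' with hHdef
  have hle : H ≤ φ.ker := by
    intro z hz
    rw [AddSubgroup.mem_addSubgroupOf] at hz
    exact hker z hz
  set g : (M' ⧸ H) →+ (Fin (m + 3) → ZMod 2) := QuotientAddGroup.lift H φ hle with hgdef
  have hg : ∀ z : M', g (QuotientAddGroup.mk z) = φ z := fun z => rfl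
  have hginj : Function.Injective g := by
    intro q1 q2 h
    induction q1 using QuotientAddGroup.induction_on with
    | H z1 =>
    induction q2 using QuotientAddGroup.induction_on with
    | H z2 =>
    rw [hg, hg] at h
    rw [QuotientAddGroup.eq]
    rw [AddSubgroup.mem_addSubgroupOf]
    have : φ (-z1 + z2) = 0 := by
      rw [map_add, map_neg, h]
      simp
    exact hkey _ this
  have hfin : Finite (M' ⧸ H) := Finite.of_injective g hginj
  -- the four elements
  -- inner product values
  have hxa : ∑ i, x i * v a i = 1 := by
    rw [hsum_x a, hw1a, hw2o a hab1 hab2]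
    norm_num
  have hxb : ∑ i, x i * v b i = 1 := by
    rw [hsum_x b, hw2b, hw1o b (Ne.symm hab1) (Ne.symm hab3)]
    norm_num
  have hya : ∑ i, y i * v a i = 0 := by
    rw [hsum_y a, hw2o a hab1 hab2, hw3o a hac1 hac2]
    norm_num
  have hyb : ∑ i, y i * v b i = 1 := by
    rw [hsum_y b, hw2b, hw3o b hbc1 hbc2]
    norm_num
  have pa0 : φ (0 : M') a = 0 := by rw [map_zero]; rfl
  have pb0 : φ (0 : M') b = 0 := by rw [map_zero]; rfl
  have pax : φ (⟨x, hxM'⟩ : M') a = 1 := by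
    rw [hφapply]
    show ((∑ i, x i * v a i : ℤ) : ZMod 2) = 1
    rw [hxa]
    norm_num
  have pbx : φ (⟨x, hxM'⟩ : M') b = 1 := by
    rw [hφapply]
    show ((∑ i, x i * v b i : ℤ) : ZMod 2) = 1
    rw [hxb]
    norm_num
  have pay : φ (⟨y, hyM'⟩ : M') a = 0 := by
    rw [hφapply]
    show ((∑ i, y i * v a i : ℤ) : ZMod 2) = 0
    rw [hya]
    norm_num
  have pby : φ (⟨y, hyM'⟩ : M') b = 1 := by
    rw [hφapply]
    show ((∑ i, y i * v b i : ℤ) : ZMod 2) = 1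
    rw [hyb]
    norm_num
  have paxy : φ ((⟨x, hxM'⟩ : M') + (⟨y, hyM'⟩ : M')) a = 1 := by
    rw [map_add]
    show φ (⟨x, hxM'⟩ : M') a + φ (⟨y, hyM'⟩ : M') a = 1
    rw [pax, pay]
    norm_num
  have pbxy : φ ((⟨x, hxM'⟩ : M') + (⟨y, hyM'⟩ : M')) b = 0 := by
    rw [map_add]
    show φ (⟨x, hxM'⟩ : M') b + φ (⟨y, hyM'⟩ : M') b = 0
    rw [pbx, pby]
    decide
  -- pairwise distinctness in the quotient
  have hgmk : ∀ z : M', g ((QuotientAddGroup.mk z : M' ⧸ H)) = φ z := fun z => rfl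
  have hne01 : (QuotientAddGroup.mk (0 : M') : M' ⧸ H) ≠ QuotientAddGroup.mk ⟨x, hxM'⟩ := by
    intro h
    have h2 : φ (0 : M') a = φ (⟨x, hxM'⟩ : M') a := by rw [← hgmk, ← hgmk, h]
    rw [pa0, pax] at h2
    exact absurd h2 (by decide)
  have hne02 : (QuotientAddGroup.mk (0 : M') : M' ⧸ H) ≠ QuotientAddGroup.mk ⟨y, hyM'⟩ := by
    intro h
    have h2 : φ (0 : M') b = φ (⟨y, hyM'⟩ : M') b := by rw [← hgmk, ← hgmk, h]
    rw [pb0, pby] at h2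
    exact absurd h2 (by decide)
  have hne03 : (QuotientAddGroup.mk (0 : M') : M' ⧸ H)
      ≠ QuotientAddGroup.mk (⟨x, hxM'⟩ + ⟨y, hyM'⟩) := by
    intro h
    have h2 : φ (0 : M') a = φ ((⟨x, hxM'⟩ : M') + ⟨y, hyM'⟩) a := by rw [← hgmk, ← hgmk, h]
    rw [pa0, paxy] at h2
    exact absurd h2 (by decide)
  have hne12 : (QuotientAddGroup.mk (⟨x, hxM'⟩ : M') : M' ⧸ H)
      ≠ QuotientAddGroup.mk ⟨y, hyM'⟩ := by
    intro h
    have h2 : φ (⟨x, hxM'⟩ : M') a = φ (⟨y, hyM'⟩ : M') a := by rw [← hgmk, ← hgmk, h]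
    rw [pax, pay] at h2
    exact absurd h2 (by decide)
  have hne13 : (QuotientAddGroup.mk (⟨x, hxM'⟩ : M') : M' ⧸ H)
      ≠ QuotientAddGroup.mk (⟨x, hxM'⟩ + ⟨y, hyM'⟩) := by
    intro h
    have h2 : φ (⟨x, hxM'⟩ : M') b = φ ((⟨x, hxM'⟩ : M') + ⟨y, hyM'⟩) b := by
      rw [← hgmk, ← hgmk, h]
    rw [pbx, pbxy] at h2
    exact absurd h2 (by decide)
  have hne23 : (QuotientAddGroup.mk (⟨y, hyM'⟩ : M') : M' ⧸ H)
      ≠ QuotientAddGroup.mk (⟨x, hxM'⟩ + ⟨y, hyM'⟩) := by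
    intro h
    have h2 : φ (⟨y, hyM'⟩ : M') a = φ ((⟨x, hxM'⟩ : M') + ⟨y, hyM'⟩) a := by
      rw [← hgmk, ← hgmk, h]
    rw [pay, paxy] at h2
    exact absurd h2 (by decide)
  -- the injection from Fin 4
  have hHHinj : Function.Injective
      (![QuotientAddGroup.mk (0 : M'), QuotientAddGroup.mk ⟨x, hxM'⟩,
        QuotientAddGroup.mk ⟨y, hyM'⟩, QuotientAddGroup.mk (⟨x, hxM'⟩ + ⟨y, hyM'⟩)] :
        Fin 4 → M' ⧸ H) := by
    intro i j hij
    fin_cases i <;> fin_cases j <;>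
      simp only [Matrix.cons_val_zero, Matrix.cons_val_one, Matrix.head_cons,
        Matrix.cons_val_two, Matrix.tail_cons, Matrix.cons_val_three] at hij <;>
      first
        | rfl
        | exact absurd hij hne01 | exact absurd hij (Ne.symm hne01)
        | exact absurd hij hne02 | exact absurd hij (Ne.symm hne02)
        | exact absurd hij hne03 | exact absurd hij (Ne.symm hne03)
        | exact absurd hij hne12 | exact absurd hij (Ne.symm hne12)
        | exact absurd hij hne13 | exact absurd hij (Ne.symm hne13)
        | exact absurd hij hne23 | exact absurd hij (Ne.symm hne23)
  -- conclusion
  have h4 : 4 ≤ Nat.card (M' ⧸ H) := by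
    have := Nat.card_le_card_of_injective _ hHHinj
    simpa using this
  rw [AddSubgroup.index_eq_card]
  exact h4
end

section
/- Let m ≥ 3 and let v₁,…,v_{m+3} be pairwise orthogonal roots of the lattice D_{2m+1}. Let M be the ℤ-span of v₁,…,v_{m+3} and let M' be the primitive closure of M in D_{2m+1}. Then the index [M' : M] is at least 4. -/
lemma entry_pm {n : ℕ} (w : Fin n → ℤ) (hw : ∑ i, w i * w i = 2) (i : Fin n) :
    w i = -1 ∨ w i = 0 ∨ w i = 1 := by
  have h1 : w i * w i ≤ 2 := by
    have h := Finset.single_le_sum (f := fun j => w j * w j)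
      (fun j _ => mul_self_nonneg (w j)) (Finset.mem_univ i)
    omega
  have h3 : 2 * w i ≤ 3 := by nlinarith [sq_nonneg (w i - 1)]
  have h4 : -3 ≤ 2 * w i := by nlinarith [sq_nonneg (w i + 1)]
  omega

lemma root_pair {n : ℕ} (w : Fin n → ℤ) (hw : ∑ i, w i * w i = 2) :
    ∃ a b : Fin n, a ≠ b ∧ ∀ i, w i ≠ 0 ↔ (i = a ∨ i = b) := by
  have key : ∀ i, w i * w i = if w i = 0 then 0 else 1 := by
    intro i
    rcases entry_pm w hw i with h | h | h <;> simp [h]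
  have hsum : (∑ i, w i * w i) = ((Finset.univ.filter fun i => ¬ w i = 0).card : ℤ) := by
    rw [Finset.sum_congr rfl (fun i _ => key i), Finset.sum_ite, Finset.sum_const,
      Finset.sum_const]
    simp
  have hcard : (Finset.univ.filter fun i => ¬ w i = 0).card = 2 := by
    rw [hsum] at hw; exact_mod_cast hw
  obtain ⟨a, b, hab, hs⟩ := Finset.card_eq_two.1 hcard
  refine ⟨a, b, hab, fun i => ?_⟩
  have := Finset.ext_iff.1 hs i
  simp only [Finset.mem_filter, Finset.mem_univ, true_and, Finset.mem_insert,
    Finset.mem_singleton] at this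
  tauto


lemma sum_mul_eq_pair {n : ℕ} (w w' : Fin n → ℤ) (a b : Fin n) (hab : a ≠ b)
    (hvan : ∀ i, i ≠ a → i ≠ b → w' i = 0) :
    ∑ i, w i * w' i = w a * w' a + w b * w' b := by
  rw [← Finset.sum_pair (f := fun i => w i * w' i) hab]
  apply (Finset.sum_subset (Finset.subset_univ _) _).symm
  intro i _ hi
  simp only [Finset.mem_insert, Finset.mem_singleton, not_or] at hi
  rw [hvan i hi.1 hi.2, mul_zero]


lemma entry_pm' {n : ℕ} (w : Fin n → ℤ) (hw : ∑ i, w i * w i = 2) (i : Fin n)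
    (hi : w i ≠ 0) : w i = 1 ∨ w i = -1 := by
  have := entry_pm w hw i
  tauto

/-- If two orthogonal roots have a common support point, supports coincide. -/
lemma supp_eq_of_common {n : ℕ} (w w' : Fin n → ℤ)
    (hw : ∑ i, w i * w i = 2) (hw' : ∑ i, w' i * w' i = 2)
    (ho : ∑ i, w i * w' i = 0) (i0 : Fin n) (h1 : w i0 ≠ 0) (h2 : w' i0 ≠ 0) :
    ∀ i, w i ≠ 0 ↔ w' i ≠ 0 := by
  obtain ⟨a, b, hab, hs⟩ := root_pair w hw
  obtain ⟨a', b', hab', hs'⟩ := root_pair w' hw'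
  have hvan : ∀ i, i ≠ a' → i ≠ b' → w' i = 0 := by
    intro i hia hib
    by_contra h
    rcases (hs' i).1 h with rfl | rfl <;> simp at hia hib
  have hsum : w a' * w' a' + w b' * w' b' = 0 := by
    rw [← sum_mul_eq_pair w w' a' b' hab' hvan]; exact ho
  have hwa' : w' a' ≠ 0 := (hs' a').2 (Or.inl rfl)
  have hwb' : w' b' ≠ 0 := (hs' b').2 (Or.inr rfl)
  -- w is nonzero at a' iff at b'
  have hkey : w a' ≠ 0 ∧ w b' ≠ 0 := by
    rcases (hs' i0).1 h2 with rfl | rfl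
    · refine ⟨h1, fun h0 => ?_⟩
      rw [h0, zero_mul, add_zero] at hsum
      exact (mul_ne_zero h1 hwa') hsum
    · refine ⟨fun h0 => ?_, h1⟩
      rw [h0, zero_mul, zero_add] at hsum
      exact (mul_ne_zero h1 hwb') hsum
  -- so {a', b'} ⊆ supp w, and both have two elements, hence equal
  have ha' : a' = a ∨ a' = b := (hs a').1 hkey.1
  have hb' : b' = a ∨ b' = b := (hs b').1 hkey.2
  intro i
  rw [hs i, hs' i]
  rcases ha' with rfl | rfl <;> rcases hb' with rfl | rfl <;> tauto

/-- two orthogonal roots with the same support yield twice a standard basis vector. -/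
lemma pair_single {n : ℕ} (w w' : Fin n → ℤ)
    (hw : ∑ i, w i * w i = 2) (hw' : ∑ i, w' i * w' i = 2)
    (ho : ∑ i, w i * w' i = 0)
    (hsupp : ∀ i, w i ≠ 0 ↔ w' i ≠ 0)
    (a : Fin n) (ha : w a ≠ 0) :
    w a • w + w' a • w' = (2 : ℤ) • Pi.single a 1 := by
  obtain ⟨a0, b0, hab0, hs0⟩ := root_pair w hw
  have key : ∃ b, a ≠ b ∧ ∀ i, w i ≠ 0 ↔ i = a ∨ i = b := by
    rcases (hs0 a).1 ha with rfl | rfl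
    · exact ⟨b0, hab0, hs0⟩
    · exact ⟨a0, hab0.symm, fun i => (hs0 i).trans or_comm⟩
  obtain ⟨b, hab, hs⟩ := key
  have hwb : w b ≠ 0 := (hs b).2 (Or.inr rfl)
  have hw'a : w' a ≠ 0 := (hsupp a).1 ha
  have hw'b : w' b ≠ 0 := (hsupp b).1 hwb
  have hvan : ∀ i, i ≠ a → i ≠ b → w' i = 0 := by
    intro i hia hib
    by_contra h
    rcases (hs i).1 ((hsupp i).2 h) with rfl | rfl <;> simp at hia hib
  have hsum : w a * w' a + w b * w' b = 0 := by
    rw [← sum_mul_eq_pair w w' a b hab hvan]; exact ho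
  funext i
  simp only [Pi.add_apply, Pi.smul_apply, smul_eq_mul, Pi.single_apply]
  by_cases hia : i = a
  · subst hia
    rw [if_pos rfl]
    rcases entry_pm' w hw i ha with h1 | h1 <;>
      rcases entry_pm' w' hw' i hw'a with h2 | h2 <;> rw [h1, h2] <;> norm_num
  · rw [if_neg hia]
    by_cases hib : i = b
    · subst hib
      rcases entry_pm' w hw a ha with h1 | h1 <;>
        rcases entry_pm' w hw i hwb with h2 | h2 <;>
        rcases entry_pm' w' hw' a hw'a with h3 | h3 <;>
        rcases entry_pm' w' hw' i hw'b with h4 | h4 <;>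
        simp only [h1, h2, h3, h4] at hsum ⊢ <;> omega
    · have h1 : w i = 0 := by
        by_contra h
        rcases (hs i).1 h with rfl | rfl <;> simp at hia hib
      have h2 : w' i = 0 := by
        by_contra h
        rcases (hs i).1 ((hsupp i).2 h) with rfl | rfl <;> simp at hia hib
      rw [h1, h2]; ring

/-- no three pairwise orthogonal roots share a support. -/
lemma no_three_s10 {n : ℕ} (w w' w'' : Fin n → ℤ)
    (hw : ∑ i, w i * w i = 2) (hw' : ∑ i, w' i * w' i = 2)
    (hw'' : ∑ i, w'' i * w'' i = 2)
    (ho1 : ∑ i, w i * w' i = 0) (ho2 : ∑ i, w i * w'' i = 0)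
    (ho3 : ∑ i, w' i * w'' i = 0)
    (hs1 : ∀ i, w i ≠ 0 ↔ w' i ≠ 0) (hs2 : ∀ i, w i ≠ 0 ↔ w'' i ≠ 0) : False := by
  obtain ⟨a, b, hab, hs⟩ := root_pair w hw
  have hwa : w a ≠ 0 := (hs a).2 (Or.inl rfl)
  have hwb : w b ≠ 0 := (hs b).2 (Or.inr rfl)
  have hvan' : ∀ i, i ≠ a → i ≠ b → w' i = 0 := by
    intro i hia hib; by_contra h
    rcases (hs i).1 ((hs1 i).2 h) with rfl | rfl <;> simp at hia hib
  have hvan'' : ∀ i, i ≠ a → i ≠ b → w'' i = 0 := by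
    intro i hia hib; by_contra h
    rcases (hs i).1 ((hs2 i).2 h) with rfl | rfl <;> simp at hia hib
  have e1 : w a * w' a + w b * w' b = 0 := by
    rw [← sum_mul_eq_pair w w' a b hab hvan']; exact ho1
  have e2 : w a * w'' a + w b * w'' b = 0 := by
    rw [← sum_mul_eq_pair w w'' a b hab hvan'']; exact ho2
  have e3 : w' a * w'' a + w' b * w'' b = 0 := by
    rw [← sum_mul_eq_pair w' w'' a b hab hvan'']; exact ho3
  rcases entry_pm' w hw a hwa with h1 | h1 <;>
    rcases entry_pm' w hw b hwb with h2 | h2 <;>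
    rcases entry_pm' w' hw' a ((hs1 a).1 hwa) with h3 | h3 <;>
    rcases entry_pm' w' hw' b ((hs1 b).1 hwb) with h4 | h4 <;>
    rcases entry_pm' w'' hw'' a ((hs2 a).1 hwa) with h5 | h5 <;>
    rcases entry_pm' w'' hw'' b ((hs2 b).1 hwb) with h6 | h6 <;>
    simp only [h1, h2, h3, h4, h5, h6] at e1 e2 e3 <;> omega
/-- Let `m ≥ 3` and let `v₁,…,v_{m+3}` be pairwise orthogonal roots of the lattice
`D_{2m+1}`.  Let `M` be the `ℤ`-span of `v₁,…,v_{m+3}` and let `M'` be the primitive closure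
of `M` in `D_{2m+1}`.  Then the index `[M' : M]` is at least 4. -/
theorem index_primitive_closure_D_odd (m : ℕ) (hm : 3 ≤ m)
    (v : Fin (m + 3) → (Fin (2 * m + 1) → ℤ))
    (hmem : ∀ k, v k ∈ DLat (2 * m + 1))
    (hroot : ∀ k, ∑ i, v k i * v k i = 2)
    (horth : ∀ k l, k ≠ l → ∑ i, v k i * v l i = 0) :
    4 ≤ ((AddSubgroup.closure (Set.range v)).addSubgroupOf
        (primClosure (2 * m + 1) (AddSubgroup.closure (Set.range v)))).index := by
  classical
  set Mv := AddSubgroup.closure (Set.range v) with hMv_def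
  have hMv : ∀ w : Fin (2*m+1) → ℤ, w ∈ Mv ↔ ∃ c : Fin (m+3) → ℤ, ∑ j, c j • v j = w := by
    intro w
    rw [hMv_def, ← Submodule.span_int_eq_addSubgroupClosure, Submodule.mem_toAddSubgroup,
      Submodule.mem_span_range_iff_exists_fun]
  have hB : ∀ (c : Fin (m+3) → ℤ) (l), (∑ i, (∑ j, c j • v j) i * v l i) = 2 * c l := by
    intro c l
    have h1 : ∀ i, (∑ j, c j • v j) i = ∑ j, c j * v j i := by
      intro i; simp [Finset.sum_apply]
    calc (∑ i, (∑ j, c j • v j) i * v l i)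
        = ∑ i, ∑ j, c j * (v j i * v l i) := by
          refine Finset.sum_congr rfl fun i _ => ?_
          rw [h1, Finset.sum_mul]
          exact Finset.sum_congr rfl fun j _ => by ring
      _ = ∑ j, ∑ i, c j * (v j i * v l i) := Finset.sum_comm
      _ = ∑ j, c j * (∑ i, v j i * v l i) := by
          refine Finset.sum_congr rfl fun j _ => ?_
          rw [Finset.mul_sum]
      _ = 2 * c l := by
          rw [Finset.sum_eq_single l]
          · rw [hroot l]; ring
          · intro j _ hj; rw [horth j l hj, mul_zero]
          · intro h; exact absurd (Finset.mem_univ l) h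
  let psi : (Fin (2*m+1) → ℤ) →+ (Fin (m+3) → ZMod 2) :=
  { toFun := fun x j => ((∑ i, x i * v j i : ℤ) : ZMod 2)
    map_zero' := by funext j; simp
    map_add' := by
      intro x y; funext j
      have h : (∑ i, (x i + y i) * v j i) = (∑ i, x i * v j i) + (∑ i, y i * v j i) := by
        rw [← Finset.sum_add_distrib]
        exact Finset.sum_congr rfl fun i _ => by ring
      show ((∑ i, (x i + y i) * v j i : ℤ) : ZMod 2) = _
      rw [h, Int.cast_add]
      rfl }
  have hpsi_apply : ∀ (x : Fin (2*m+1) → ℤ) (j),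
      psi x j = ((∑ i, x i * v j i : ℤ) : ZMod 2) := fun _ _ => rfl
  let phi := psi.comp (primClosure (2*m+1) Mv).subtype
  have hker : Mv.addSubgroupOf (primClosure (2*m+1) Mv) = phi.ker := by
    ext x
    simp only [AddSubgroup.mem_addSubgroupOf, AddMonoidHom.mem_ker]
    constructor
    · intro hx
      obtain ⟨c, hc⟩ := (hMv _).1 hx
      funext j
      show ((∑ i, (x : Fin (2*m+1) → ℤ) i * v j i : ℤ) : ZMod 2) = 0
      rw [← hc, hB, Int.cast_mul]
      have h2 : ((2:ℤ) : ZMod 2) = 0 := by decide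
      rw [h2, zero_mul]
    · intro hx0
      obtain ⟨hD, k, hk, hkM⟩ := x.2
      obtain ⟨c, hc⟩ := (hMv _).1 hkM
      have hdvd : ∀ j, ∃ dj : ℤ, (∑ i, (x : Fin (2*m+1) → ℤ) i * v j i) = 2 * dj := by
        intro j
        have h0 : ((∑ i, (x : Fin (2*m+1) → ℤ) i * v j i : ℤ) : ZMod 2) = 0 := congrFun hx0 j
        exact (ZMod.intCast_zmod_eq_zero_iff_dvd _ 2).1 h0
      choose d hd using hdvd
      have hcl : ∀ l, c l = k * d l := by
        intro l
        have h2 : (∑ i, (k • (x : Fin (2*m+1) → ℤ)) i * v l i)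
            = k * ∑ i, (x : Fin (2*m+1) → ℤ) i * v l i := by
          rw [Finset.mul_sum]
          exact Finset.sum_congr rfl fun i _ => by simp [mul_assoc]
        have h3 : 2 * c l = k * (2 * d l) := by
          rw [← hB c l, hc, h2, hd l]
        have h4 : k * (2 * d l) = 2 * (k * d l) := by ring
        rw [h4] at h3
        exact mul_left_cancel₀ two_ne_zero h3
      have heq : k • (x : Fin (2*m+1) → ℤ) = k • ∑ j, d j • v j := by
        rw [← hc, Finset.smul_sum]
        exact Finset.sum_congr rfl fun j _ => by rw [hcl j, mul_smul]
      have hxeq := smul_right_injective (Fin (2*m+1) → ℤ) hk heq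
      exact (hMv _).2 ⟨d, hxeq.symm⟩
  rw [hker, AddSubgroup.index_ker]
  -- combinatorial part
  let supp : Fin (m+3) → Finset (Fin (2*m+1)) := fun k => Finset.univ.filter (fun i => v k i ≠ 0)
  have hsupp_mem : ∀ k i, i ∈ supp k ↔ v k i ≠ 0 := by intro k i; simp [supp]
  have hpair : ∀ k, ∃ a b, a ≠ b ∧ ∀ i, v k i ≠ 0 ↔ (i = a ∨ i = b) :=
    fun k => root_pair (v k) (hroot k)
  have hcard2 : ∀ k, (supp k).card = 2 := by
    intro k
    obtain ⟨a, b, hab, hs⟩ := hpair k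
    have he : supp k = {a, b} := by
      ext i; simp [supp, hs i]
    rw [he, Finset.card_insert_of_notMem (by simp [hab]), Finset.card_singleton]
  have hEoD : ∀ k l, supp k ≠ supp l → Disjoint (supp k) (supp l) := by
    intro k l hne
    by_contra hdis
    obtain ⟨i, hi1, hi2⟩ := Finset.not_disjoint_iff.1 hdis
    have hkl : k ≠ l := by rintro rfl; exact hne rfl
    have hcom := supp_eq_of_common (v k) (v l) (hroot k) (hroot l) (horth k l hkl) i
      ((hsupp_mem k i).1 hi1) ((hsupp_mem l i).1 hi2)
    exact hne (by ext j; simp [supp, hcom j])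
  let T : Finset (Finset (Fin (2*m+1))) := Finset.univ.image supp
  have hT : T.card ≤ m := by
    have hdisj : ∀ x ∈ T, ∀ y ∈ T, x ≠ y → Disjoint (id x) (id y) := by
      intro x hx y hy hxy
      obtain ⟨k, _, rfl⟩ := Finset.mem_image.1 hx
      obtain ⟨l, _, rfl⟩ := Finset.mem_image.1 hy
      exact hEoD k l hxy
    have h1 : (T.biUnion id).card = ∑ t ∈ T, (id t).card := Finset.card_biUnion hdisj
    have h2 : ∑ t ∈ T, (id t).card = 2 * T.card := by
      have hc : ∀ t ∈ T, (id t).card = 2 := by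
        intro t ht
        obtain ⟨k, _, rfl⟩ := Finset.mem_image.1 ht
        exact hcard2 k
      rw [Finset.sum_congr rfl hc, Finset.sum_const, smul_eq_mul, mul_comm]
    have h3 : (T.biUnion id).card ≤ 2*m+1 := by
      simpa using Finset.card_le_univ (T.biUnion id)
    omega
  let F : Finset (Fin (2*m+1)) → Finset (Fin (m+3)) :=
    fun t => Finset.univ.filter (fun k => supp k = t)
  have hF2 : ∀ t, (F t).card ≤ 2 := by
    intro t
    by_contra h
    push_neg at h
    obtain ⟨k, l, j, hk, hl, hj, hkl, hkj, hlj⟩ := Finset.two_lt_card_iff.1 h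
    simp only [F, Finset.mem_filter] at hk hl hj
    have hs1 : ∀ i, v k i ≠ 0 ↔ v l i ≠ 0 := by
      intro i
      have := Finset.ext_iff.1 (hk.2.trans hl.2.symm) i
      simpa [supp] using this
    have hs2 : ∀ i, v k i ≠ 0 ↔ v j i ≠ 0 := by
      intro i
      have := Finset.ext_iff.1 (hk.2.trans hj.2.symm) i
      simpa [supp] using this
    exact no_three_s10 (v k) (v l) (v j) (hroot k) (hroot l) (hroot j)
      (horth k l hkl) (horth k j hkj) (horth l j hlj) hs1 hs2
  have hcount : (m+3) = ∑ t ∈ T, (F t).card := by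
    have h0 := Finset.card_eq_sum_card_fiberwise
      (fun (k : Fin (m+3)) (_ : k ∈ Finset.univ) => Finset.mem_image_of_mem supp (Finset.mem_univ k))
    simpa [F, T] using h0
  let S := T.filter (fun t => 2 ≤ (F t).card)
  have hS3 : 3 ≤ S.card := by
    have hle : ∑ t ∈ T, (F t).card ≤ ∑ t ∈ T, (1 + if 2 ≤ (F t).card then 1 else 0) := by
      refine Finset.sum_le_sum fun t ht => ?_
      have := hF2 t
      split_ifs with h <;> omega
    have heq : ∑ t ∈ T, (1 + if 2 ≤ (F t).card then 1 else 0) = T.card + S.card := by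
      rw [Finset.sum_add_distrib, Finset.sum_const, smul_eq_mul, mul_one]
      congr 1
      exact (Finset.card_filter _ _).symm
    omega
  obtain ⟨t1, t2, t3, ht1, ht2, ht3, h12, h13, h23⟩ :=
    Finset.two_lt_card_iff.1 (by omega : 2 < S.card)
  have hget : ∀ t ∈ S, ∃ (a : Fin (2*m+1)) (kk : Fin (m+3)), v kk a ≠ 0 ∧ supp kk = t ∧
      (2:ℤ) • (Pi.single a 1 : Fin (2*m+1) → ℤ) ∈ Mv := by
    intro t ht
    simp only [S, Finset.mem_filter] at ht
    obtain ⟨k, l, hkF, hlF, hkl⟩ :=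
      Finset.one_lt_card_iff.1 (lt_of_lt_of_le one_lt_two ht.2)
    simp only [F, Finset.mem_filter] at hkF hlF
    have hsupp_eq : ∀ i, v k i ≠ 0 ↔ v l i ≠ 0 := by
      intro i
      have := Finset.ext_iff.1 (hkF.2.trans hlF.2.symm) i
      simpa [supp] using this
    obtain ⟨a, b, hab, hs⟩ := hpair k
    have ha : v k a ≠ 0 := (hs a).2 (Or.inl rfl)
    have hps := pair_single (v k) (v l) (hroot k) (hroot l) (horth k l hkl) hsupp_eq a ha
    refine ⟨a, k, ha, hkF.2, ?_⟩
    rw [← hps]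
    exact Mv.add_mem (Mv.zsmul_mem (AddSubgroup.subset_closure ⟨k, rfl⟩) _)
      (Mv.zsmul_mem (AddSubgroup.subset_closure ⟨l, rfl⟩) _)
  obtain ⟨a1, k1, hk1a, hk1s, hz1⟩ := hget t1 ht1
  obtain ⟨a2, k2, hk2a, hk2s, hz2⟩ := hget t2 ht2
  obtain ⟨a3, k3, hk3a, hk3s, hz3⟩ := hget t3 ht3
  have hd12 : Disjoint (supp k1) (supp k2) := hEoD _ _ (by rw [hk1s, hk2s]; exact h12)
  have hd13 : Disjoint (supp k1) (supp k3) := hEoD _ _ (by rw [hk1s, hk3s]; exact h13)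
  have ha1 : a1 ∈ supp k1 := (hsupp_mem k1 a1).2 hk1a
  have ha2 : a2 ∈ supp k2 := (hsupp_mem k2 a2).2 hk2a
  have ha3 : a3 ∈ supp k3 := (hsupp_mem k3 a3).2 hk3a
  have hv12 : v k1 a2 = 0 := by
    by_contra h
    exact Finset.disjoint_left.1 hd12 ((hsupp_mem k1 a2).2 h) ha2
  have hv13 : v k1 a3 = 0 := by
    by_contra h
    exact Finset.disjoint_left.1 hd13 ((hsupp_mem k1 a3).2 h) ha3
  have hv31 : v k3 a1 = 0 := by
    by_contra h
    exact Finset.disjoint_left.1 hd13 ha1 ((hsupp_mem k3 a1).2 h)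
  have hv32 : v k3 a2 = 0 := by
    by_contra h
    have hd23 : Disjoint (supp k2) (supp k3) := hEoD _ _ (by rw [hk2s, hk3s]; exact h23)
    exact Finset.disjoint_left.1 hd23 ha2 ((hsupp_mem k3 a2).2 h)
  have hne12 : a1 ≠ a2 := fun h => Finset.disjoint_left.1 hd12 ha1 (h ▸ ha2)
  have hne13 : a1 ≠ a3 := fun h => Finset.disjoint_left.1 hd13 ha1 (h ▸ ha3)
  -- the two elements of the primitive closure
  have hsingle_sum : ∀ a : Fin (2*m+1), ∑ i, (Pi.single a 1 : Fin (2*m+1) → ℤ) i = 1 := by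
    intro a
    rw [Finset.sum_eq_single a]
    · simp
    · intro i _ hia; simp [Pi.single_apply, hia]
    · intro h; exact absurd (Finset.mem_univ a) h
  have hPC : ∀ a a' : Fin (2*m+1), a ≠ a' →
      (2:ℤ) • (Pi.single a 1 : Fin (2*m+1) → ℤ) ∈ Mv →
      (2:ℤ) • (Pi.single a' 1 : Fin (2*m+1) → ℤ) ∈ Mv →
      (Pi.single a 1 + Pi.single a' 1 : Fin (2*m+1) → ℤ) ∈ primClosure (2*m+1) Mv := by
    intro a a' hne hma hma'
    refine ⟨?_, 2, two_ne_zero, ?_⟩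
    · show Even (∑ i, (Pi.single a 1 + Pi.single a' 1 : Fin (2*m+1) → ℤ) i)
      have hsum : ∑ i, (Pi.single a 1 + Pi.single a' 1 : Fin (2*m+1) → ℤ) i = 2 := by
        rw [show (∑ i, (Pi.single a 1 + Pi.single a' 1 : Fin (2*m+1) → ℤ) i)
            = (∑ i, (Pi.single a 1 : Fin (2*m+1) → ℤ) i)
              + ∑ i, (Pi.single a' 1 : Fin (2*m+1) → ℤ) i from by
          rw [← Finset.sum_add_distrib]; rfl]
        rw [hsingle_sum, hsingle_sum]
        norm_num
      rw [hsum]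
      exact ⟨1, by ring⟩
    · rw [smul_add]
      exact Mv.add_mem hma hma'
  have hxP := hPC a1 a2 hne12 hz1 hz2
  have hyP := hPC a1 a3 hne13 hz1 hz3
  have hval : ∀ (a a' : Fin (2*m+1)) (j),
      psi (Pi.single a 1 + Pi.single a' 1) j = ((v j a + v j a' : ℤ) : ZMod 2) := by
    intro a a' j
    rw [hpsi_apply]
    congr 1
    have hone : ∀ (c : Fin (2*m+1)), ∑ i, (Pi.single c 1 : Fin (2*m+1) → ℤ) i * v j i = v j c := by
      intro c
      rw [Finset.sum_eq_single c]
      · simp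
      · intro i _ hic; simp [Pi.single_apply, hic]
      · intro h; exact absurd (Finset.mem_univ c) h
    calc (∑ i, (Pi.single a 1 + Pi.single a' 1 : Fin (2*m+1) → ℤ) i * v j i)
        = (∑ i, (Pi.single a 1 : Fin (2*m+1) → ℤ) i * v j i)
          + ∑ i, (Pi.single a' 1 : Fin (2*m+1) → ℤ) i * v j i := by
          rw [← Finset.sum_add_distrib]
          exact Finset.sum_congr rfl fun i _ => by simp [add_mul]
      _ = v j a + v j a' := by rw [hone a, hone a']
  have hodd : ∀ (j : Fin (m+3)) (i : Fin (2*m+1)), v j i ≠ 0 → ((v j i : ℤ) : ZMod 2) = 1 := by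
    intro j i h
    rcases entry_pm' (v j) (hroot j) i h with h1 | h1 <;> rw [h1] <;> decide
  have hA1 : psi (Pi.single a1 1 + Pi.single a2 1) k1 = 1 := by
    rw [hval, hv12, add_zero]
    exact hodd k1 a1 hk1a
  have hA3 : psi (Pi.single a1 1 + Pi.single a2 1) k3 = 0 := by
    rw [hval, hv31, hv32]
    decide
  have hB1 : psi (Pi.single a1 1 + Pi.single a3 1) k1 = 1 := by
    rw [hval, hv13, add_zero]
    exact hodd k1 a1 hk1a
  have hB3 : psi (Pi.single a1 1 + Pi.single a3 1) k3 = 1 := by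
    rw [hval, hv31, zero_add]
    exact hodd k3 a3 hk3a
  set A := psi (Pi.single a1 1 + Pi.single a2 1) with hAdef
  set Bq := psi (Pi.single a1 1 + Pi.single a3 1) with hBdef
  have hone_ne : (1 : ZMod 2) ≠ 0 := by decide
  have hAne : A ≠ 0 := fun h => hone_ne (by rw [← hA1]; rw [h]; rfl)
  have hBne : Bq ≠ 0 := fun h => hone_ne (by rw [← hB3]; rw [h]; rfl)
  have hABne : A ≠ Bq := fun h => hone_ne (by rw [← hB3, ← h, hA3])
  have hABsum_ne : A + Bq ≠ 0 := fun h => by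
    have := congrFun h k3
    rw [Pi.add_apply, hA3, hB3] at this
    exact hone_ne (by simpa using this)
  have hABA : A + Bq ≠ A := fun h => by
    have := congrFun h k3
    rw [Pi.add_apply, hA3, hB3] at this
    exact hone_ne (by simpa using this)
  have hABB : A + Bq ≠ Bq := fun h => by
    have := congrFun h k1
    rw [Pi.add_apply, hA1, hB1] at this
    exact hone_ne (by simpa using this)
  have hsub : (({0, A, Bq, A + Bq} : Finset (Fin (m+3) → ZMod 2)) : Set (Fin (m+3) → ZMod 2))
      ⊆ (phi.range : Set (Fin (m+3) → ZMod 2)) := by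
    intro z hz
    simp only [Finset.coe_insert, Finset.coe_singleton, Set.mem_insert_iff,
      Set.mem_singleton_iff] at hz
    rcases hz with rfl | rfl | rfl | rfl
    · exact ⟨0, map_zero phi⟩
    · exact ⟨⟨_, hxP⟩, rfl⟩
    · exact ⟨⟨_, hyP⟩, rfl⟩
    · exact ⟨⟨_, hxP⟩ + ⟨_, hyP⟩, by rw [map_add]; rfl⟩
  have hcard4 : ({0, A, Bq, A + Bq} : Finset (Fin (m+3) → ZMod 2)).card = 4 := by
    rw [Finset.card_insert_of_notMem, Finset.card_insert_of_notMem,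
      Finset.card_insert_of_notMem, Finset.card_singleton]
    · simp only [Finset.mem_singleton]; exact hABB.symm
    · simp only [Finset.mem_insert, Finset.mem_singleton]
      push_neg
      exact ⟨hABne, hABA.symm⟩
    · simp only [Finset.mem_insert, Finset.mem_singleton]
      push_neg
      exact ⟨Ne.symm hAne, Ne.symm hBne, Ne.symm hABsum_ne⟩
  calc (4 : ℕ)
      = (({0, A, Bq, A + Bq} : Finset (Fin (m+3) → ZMod 2)) : Set (Fin (m+3) → ZMod 2)).ncard := by
        rw [Set.ncard_coe_finset, hcard4]
    _ ≤ (phi.range : Set (Fin (m+3) → ZMod 2)).ncard := Set.ncard_le_ncard hsub (Set.toFinite _)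
    _ = Nat.card phi.range := (Nat.card_coe_set_eq _).symm
end

section
/- Let v₁,…,v₆ be pairwise orthogonal roots of the lattice E₈. Let M be the ℤ-span of v₁,…,v₆ and let M' be the primitive closure of M in E₈. Then the index [M' : M] is at least 4. -/
/-- The lattice `E₈`: the subgroup of `ℚ⁸` consisting of all vectors whose coordinates are
either all integers or all half-odd-integers (all in `ℤ + ½`) and whose coordinate sum is an
even integer, equipped (implicitly) with the standard Euclidean bilinear form
`⟨x,y⟩ = ∑ xᵢyᵢ`. -/
def E8Lat : AddSubgroup (Fin 8 → ℚ) where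
  carrier := {x | ((∀ i, ∃ a : ℤ, x i = a) ∨ (∀ i, ∃ a : ℤ, x i = a + 1 / 2)) ∧
    ∃ s : ℤ, Even s ∧ ∑ i, x i = s}
  zero_mem' := ⟨Or.inl fun i => ⟨0, by simp⟩, 0, ⟨0, rfl⟩, by simp⟩
  add_mem' := by
    rintro a b ⟨ha, sa, hsa, hsuma⟩ ⟨hb, sb, hsb, hsumb⟩
    constructor
    · rcases ha with ha | ha <;> rcases hb with hb | hb
      · left; intro i
        obtain ⟨p, hp⟩ := ha i; obtain ⟨q, hq⟩ := hb i
        exact ⟨p + q, by rw [Pi.add_apply, hp, hq]; push_cast; ring⟩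
      · right; intro i
        obtain ⟨p, hp⟩ := ha i; obtain ⟨q, hq⟩ := hb i
        exact ⟨p + q, by rw [Pi.add_apply, hp, hq]; push_cast; ring⟩
      · right; intro i
        obtain ⟨p, hp⟩ := ha i; obtain ⟨q, hq⟩ := hb i
        exact ⟨p + q, by rw [Pi.add_apply, hp, hq]; push_cast; ring⟩
      · left; intro i
        obtain ⟨p, hp⟩ := ha i; obtain ⟨q, hq⟩ := hb i
        exact ⟨p + q + 1, by rw [Pi.add_apply, hp, hq]; push_cast; ring⟩
    · refine ⟨sa + sb, hsa.add hsb, ?_⟩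
      simp only [Pi.add_apply]
      rw [Finset.sum_add_distrib, hsuma, hsumb]; push_cast; ring
  neg_mem' := by
    rintro a ⟨ha, sa, hsa, hsuma⟩
    constructor
    · rcases ha with ha | ha
      · left; intro i
        obtain ⟨p, hp⟩ := ha i
        exact ⟨-p, by rw [Pi.neg_apply, hp]; push_cast; ring⟩
      · right; intro i
        obtain ⟨p, hp⟩ := ha i
        exact ⟨-p - 1, by rw [Pi.neg_apply, hp]; push_cast; ring⟩
    · refine ⟨-sa, hsa.neg, ?_⟩
      simp only [Pi.neg_apply]
      rw [Finset.sum_neg_distrib, hsuma]; push_cast; ring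

/-- The primitive closure of a subgroup `M` inside the lattice `E₈`:
`M' = {x ∈ E₈ : kx ∈ M for some nonzero integer k}`. -/
def primClosureE8 (M : AddSubgroup (Fin 8 → ℚ)) : AddSubgroup (Fin 8 → ℚ) where
  carrier := {x | x ∈ E8Lat ∧ ∃ k : ℤ, k ≠ 0 ∧ k • x ∈ M}
  zero_mem' := ⟨E8Lat.zero_mem, 1, one_ne_zero, by simpa using M.zero_mem⟩
  add_mem' := by
    rintro a b ⟨haD, k, hk, hka⟩ ⟨hbD, l, hl, hlb⟩
    refine ⟨E8Lat.add_mem haD hbD, k * l, mul_ne_zero hk hl, ?_⟩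
    have h1 : (k * l) • (a + b) = l • (k • a) + k • (l • b) := by
      rw [smul_add, smul_smul, smul_smul, mul_comm l k]
    rw [h1]
    exact M.add_mem (M.zsmul_mem hka l) (M.zsmul_mem hlb k)
  neg_mem' := by
    rintro a ⟨haD, k, hk, hka⟩
    exact ⟨E8Lat.neg_mem haD, k, hk, by simpa [smul_neg] using M.neg_mem hka⟩

namespace E8IndexAux

/-- the standard inner product on `ℚ⁸` -/
def ip (x y : Fin 8 → ℚ) : ℚ := ∑ i, x i * y i

lemma ip_int {x y : Fin 8 → ℚ}
    (hx : ((∀ i, ∃ a : ℤ, x i = a) ∨ (∀ i, ∃ a : ℤ, x i = a + 1 / 2)) ∧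
      ∃ s : ℤ, Even s ∧ ∑ i, x i = s)
    (hy : ((∀ i, ∃ a : ℤ, y i = a) ∨ (∀ i, ∃ a : ℤ, y i = a + 1 / 2)) ∧
      ∃ s : ℤ, Even s ∧ ∑ i, y i = s) :
    ∃ n : ℤ, ip x y = n := by
  obtain ⟨hxt, sx, ⟨tx, htx⟩, hsx⟩ := hx
  obtain ⟨hyt, sy, ⟨ty, hty⟩, hsy⟩ := hy
  rcases hxt with hxt | hxt <;> rcases hyt with hyt | hyt <;>
      [obtain ⟨a, ha⟩ := Classical.axiomOfChoice hxt;
       obtain ⟨a, ha⟩ := Classical.axiomOfChoice hxt;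
       obtain ⟨a, ha⟩ := Classical.axiomOfChoice hxt;
       obtain ⟨a, ha⟩ := Classical.axiomOfChoice hxt] <;>
      obtain ⟨b, hb⟩ := Classical.axiomOfChoice hyt
  · exact ⟨∑ i, a i * b i, by
      unfold ip
      rw [Finset.sum_congr rfl fun i (_ : i ∈ Finset.univ) =>
        show x i * y i = ((a i * b i : ℤ) : ℚ) by rw [ha i, hb i]; push_cast; ring]
      push_cast; ring⟩
  · -- x integer, y half
    have hax : (∑ i, (a i : ℚ)) = sx := by
      rw [← hsx]; exact Finset.sum_congr rfl fun i _ => (ha i).symm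
    refine ⟨∑ i, a i * b i + tx, ?_⟩
    have h1 : ip x y = (∑ i, ((a i * b i : ℤ) : ℚ)) + (∑ i, (a i : ℚ)) / 2 := by
      unfold ip
      rw [Finset.sum_div, ← Finset.sum_add_distrib]
      exact Finset.sum_congr rfl fun i _ => by rw [ha i, hb i]; push_cast; ring
    rw [h1, hax, htx]
    push_cast; ring
  · -- x half, y integer
    have hby : (∑ i, (b i : ℚ)) = sy := by
      rw [← hsy]; exact Finset.sum_congr rfl fun i _ => (hb i).symm
    refine ⟨∑ i, a i * b i + ty, ?_⟩
    have h1 : ip x y = (∑ i, ((a i * b i : ℤ) : ℚ)) + (∑ i, (b i : ℚ)) / 2 := by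
      unfold ip
      rw [Finset.sum_div, ← Finset.sum_add_distrib]
      exact Finset.sum_congr rfl fun i _ => by rw [ha i, hb i]; push_cast; ring
    rw [h1, hby, hty]
    push_cast; ring
  · -- both half
    have hax : (∑ i, (a i : ℚ)) = sx - 4 := by
      have : (∑ i, x i) = (∑ i, (a i : ℚ)) + 4 := by
        rw [Finset.sum_congr rfl fun i (_ : i ∈ Finset.univ) => ha i,
          Finset.sum_add_distrib]
        norm_num
      rw [this] at hsx; linarith
    have hby : (∑ i, (b i : ℚ)) = sy - 4 := by
      have : (∑ i, y i) = (∑ i, (b i : ℚ)) + 4 := by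
        rw [Finset.sum_congr rfl fun i (_ : i ∈ Finset.univ) => hb i,
          Finset.sum_add_distrib]
        norm_num
      rw [this] at hsy; linarith
    refine ⟨∑ i, a i * b i + tx + ty - 2, ?_⟩
    have h1 : ip x y = (∑ i, ((a i * b i : ℤ) : ℚ))
        + (∑ i, (a i : ℚ)) / 2 + (∑ i, (b i : ℚ)) / 2 + 2 := by
      unfold ip
      rw [Finset.sum_div, Finset.sum_div, ← Finset.sum_add_distrib,
        ← Finset.sum_add_distrib]
      have : (2 : ℚ) = ∑ _i : Fin 8, (1/4 : ℚ) := by norm_num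
      rw [this, ← Finset.sum_add_distrib]
      exact Finset.sum_congr rfl fun i _ => by rw [ha i, hb i]; push_cast; ring
    rw [h1, hax, hby, htx, hty]
    push_cast; ring



/-- twice the rows of a ℤ-basis of E₈ -/
def MbZ : Fin 8 → Fin 8 → ℤ :=
  ![![2,-2,0,0,0,0,0,0],
    ![0,2,-2,0,0,0,0,0],
    ![0,0,2,-2,0,0,0,0],
    ![0,0,0,2,-2,0,0,0],
    ![0,0,0,0,2,-2,0,0],
    ![0,0,0,0,0,2,-2,0],
    ![0,0,0,0,0,2,2,0],
    ![1,1,1,1,1,1,1,1]]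

/-- twice the inverse matrix -/
def MiZ : Fin 8 → Fin 8 → ℤ :=
  ![![2,2,2,2,2,1,1,0],
    ![0,2,2,2,2,1,1,0],
    ![0,0,2,2,2,1,1,0],
    ![0,0,0,2,2,1,1,0],
    ![0,0,0,0,2,1,1,0],
    ![0,0,0,0,0,1,1,0],
    ![0,0,0,0,0,-1,1,0],
    ![-2,-4,-6,-8,-10,-5,-7,4]]

/-- the Gram matrix of the basis -/
def G : Fin 8 → Fin 8 → ℤ :=
  ![![2,-1,0,0,0,0,0,0],
    ![-1,2,-1,0,0,0,0,0],
    ![0,-1,2,-1,0,0,0,0],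
    ![0,0,-1,2,-1,0,0,0],
    ![0,0,0,-1,2,-1,-1,0],
    ![0,0,0,0,-1,2,0,0],
    ![0,0,0,0,-1,0,2,1],
    ![0,0,0,0,0,0,1,2]]

def Gm2 : Fin 8 → Fin 8 → ZMod 2 := fun i j => ((G i j : ℤ) : ZMod 2)

/-- mod-2 inverse of the Gram matrix -/
def Gi2 : Fin 8 → Fin 8 → ZMod 2 :=
  ![![0,1,0,1,0,1,0,0],
    ![1,0,0,0,0,0,0,0],
    ![0,0,0,1,0,1,0,0],
    ![1,0,1,0,0,0,0,0],
    ![0,0,0,0,0,1,0,0],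
    ![1,0,1,0,1,0,0,1],
    ![0,0,0,0,0,0,0,1],
    ![0,0,0,0,0,1,1,0]]

lemma inv_mulZ : ∀ i j : Fin 8, (∑ l, MiZ i l * MbZ l j) = (if i = j then 4 else 0) := by decide

lemma gramZ : ∀ j j' : Fin 8, (∑ i, MbZ j i * MbZ j' i) = 4 * G j j' := by decide

lemma gm_gi : ∀ j l : Fin 8, (∑ j', Gm2 j j' * Gi2 j' l) = (if j = l then 1 else 0) := by decide

lemma gram_symm : ∀ j j', G j j' = G j' j := by decide

/-- the basis rows over ℚ -/
def Mb : Fin 8 → Fin 8 → ℚ := fun j i => (MbZ j i : ℚ) / 2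

/-- the inverse matrix over ℚ -/
def Mi : Fin 8 → Fin 8 → ℚ := fun i j => (MiZ i j : ℚ) / 2

lemma inv_mul (i j : Fin 8) : (∑ l, Mi i l * Mb l j) = (if i = j then 1 else 0) := by
  have h : (∑ l, Mi i l * Mb l j) = ((∑ l, MiZ i l * MbZ l j : ℤ) : ℚ) / 4 := by
    rw [show ((∑ l, MiZ i l * MbZ l j : ℤ) : ℚ) = ∑ l, (MiZ i l : ℚ) * (MbZ l j : ℚ) by
      push_cast; ring, Finset.sum_div]
    exact Finset.sum_congr rfl fun l _ => by unfold Mi Mb; ring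
  rw [h, inv_mulZ i j]
  split <;> norm_num

lemma gram (j j' : Fin 8) : (∑ i, Mb j i * Mb j' i) = ((G j j' : ℤ) : ℚ) := by
  have h : (∑ i, Mb j i * Mb j' i) = ((∑ i, MbZ j i * MbZ j' i : ℤ) : ℚ) / 4 := by
    rw [show ((∑ i, MbZ j i * MbZ j' i : ℤ) : ℚ) = ∑ i, (MbZ j i : ℚ) * (MbZ j' i : ℚ) by
      push_cast; ring, Finset.sum_div]
    exact Finset.sum_congr rfl fun l _ => by unfold Mb; ring
  rw [h, gramZ j j']
  push_cast; ring

/-! data for E₈-membership of the rows of `Mb` and the columns of `Mi` -/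

def MbA : Fin 8 → Fin 8 → ℤ :=
  ![![1,-1,0,0,0,0,0,0],
    ![0,1,-1,0,0,0,0,0],
    ![0,0,1,-1,0,0,0,0],
    ![0,0,0,1,-1,0,0,0],
    ![0,0,0,0,1,-1,0,0],
    ![0,0,0,0,0,1,-1,0],
    ![0,0,0,0,0,1,1,0],
    ![0,0,0,0,0,0,0,0]]

def Mbhalf : Fin 8 → Bool := ![false,false,false,false,false,false,false,true]
def MbS : Fin 8 → ℤ := ![0,0,0,0,0,0,2,4]
def MbT : Fin 8 → ℤ := ![0,0,0,0,0,0,1,2]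

lemma MbA_fact : ∀ j i, MbZ j i = 2 * MbA j i + (if Mbhalf j then 1 else 0) := by decide
lemma MbS_fact : ∀ j, (∑ i, MbZ j i) = 2 * MbS j := by decide
lemma MbT_fact : ∀ j, MbS j = MbT j + MbT j := by decide

/-- `MiA j i` : integer part of the `j`-th column of `Mi` at position `i` -/
def MiA : Fin 8 → Fin 8 → ℤ :=
  ![![1,0,0,0,0,0,0,-1],
    ![1,1,0,0,0,0,0,-2],
    ![1,1,1,0,0,0,0,-3],
    ![1,1,1,1,0,0,0,-4],
    ![1,1,1,1,1,0,0,-5],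
    ![0,0,0,0,0,0,-1,-3],
    ![0,0,0,0,0,0,0,-4],
    ![0,0,0,0,0,0,0,2]]

def Mihalf : Fin 8 → Bool := ![false,false,false,false,false,true,true,false]
def MiS : Fin 8 → ℤ := ![0,0,0,0,0,0,0,2]
def MiT : Fin 8 → ℤ := ![0,0,0,0,0,0,0,1]

lemma MiA_fact : ∀ j i, MiZ i j = 2 * MiA j i + (if Mihalf j then 1 else 0) := by decide
lemma MiS_fact : ∀ j, (∑ i, MiZ i j) = 2 * MiS j := by decide
lemma MiT_fact : ∀ j, MiS j = MiT j + MiT j := by decide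

/-- generic E₈-membership certificate -/
lemma mem_of_data (x : Fin 8 → ℚ) (A : Fin 8 → ℤ) (hb : Bool) (S T : ℤ)
    (h1 : ∀ i, x i = A i + (if hb then (1 : ℚ)/2 else 0))
    (h2 : (∑ i, x i) = S) (h3 : S = T + T) :
    ((∀ i, ∃ a : ℤ, x i = a) ∨ (∀ i, ∃ a : ℤ, x i = a + 1 / 2)) ∧
      ∃ s : ℤ, Even s ∧ ∑ i, x i = s := by
  refine ⟨?_, S, ⟨T, h3⟩, h2⟩
  cases hb with
  | false => exact Or.inl fun i => ⟨A i, by simpa using h1 i⟩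
  | true => exact Or.inr fun i => ⟨A i, by simpa using h1 i⟩

lemma Mb_mem (j : Fin 8) :
    ((∀ i, ∃ a : ℤ, Mb j i = a) ∨ (∀ i, ∃ a : ℤ, Mb j i = a + 1 / 2)) ∧
      ∃ s : ℤ, Even s ∧ ∑ i, Mb j i = s := by
  refine mem_of_data _ (MbA j) (Mbhalf j) (MbS j) (MbT j) ?_ ?_ (MbT_fact j)
  · intro i
    unfold Mb
    rw [MbA_fact j i]
    push_cast
    split <;> ring
  · unfold Mb
    rw [← Finset.sum_div]
    rw [show ((∑ i, (MbZ j i : ℚ))) = ((∑ i, MbZ j i : ℤ) : ℚ) by push_cast; ring,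
      MbS_fact j]
    push_cast; ring

lemma Mi_col_mem (j : Fin 8) :
    ((∀ i, ∃ a : ℤ, Mi i j = a) ∨ (∀ i, ∃ a : ℤ, Mi i j = a + 1 / 2)) ∧
      ∃ s : ℤ, Even s ∧ ∑ i, Mi i j = s := by
  refine mem_of_data _ (MiA j) (Mihalf j) (MiS j) (MiT j) ?_ ?_ (MiT_fact j)
  · intro i
    unfold Mi
    rw [MiA_fact j i]
    push_cast
    split <;> ring
  · unfold Mi
    rw [← Finset.sum_div]
    rw [show ((∑ i, (MiZ i j : ℚ))) = ((∑ i, MiZ i j : ℤ) : ℚ) by push_cast; ring,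
      MiS_fact j]
    push_cast; ring

lemma ip_combo {n : ℕ} (q : Fin n → ℚ) (f : Fin n → Fin 8 → ℚ) (y : Fin 8 → ℚ) :
    ip (fun i => ∑ k, q k * f k i) y = ∑ k, q k * ip (f k) y := by
  unfold ip
  simp only [Finset.sum_mul]
  rw [Finset.sum_comm]
  exact Finset.sum_congr rfl fun k _ => by
    rw [Finset.mul_sum]
    exact Finset.sum_congr rfl fun i _ => by ring

lemma ip_add_left (x y z : Fin 8 → ℚ) : ip (x + y) z = ip x z + ip y z := by
  unfold ip
  rw [← Finset.sum_add_distrib]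
  exact Finset.sum_congr rfl fun i _ => by simp [add_mul]

lemma ip_sub_left (x y z : Fin 8 → ℚ) : ip (x - y) z = ip x z - ip y z := by
  unfold ip
  rw [← Finset.sum_sub_distrib]
  exact Finset.sum_congr rfl fun i _ => by simp [sub_mul]

lemma combo_mem (H : AddSubgroup (Fin 8 → ℚ)) {n : ℕ} (f : Fin n → Fin 8 → ℚ)
    (hf : ∀ k, f k ∈ H) (m : Fin n → ℤ) :
    (fun i => ∑ k, (m k : ℚ) * f k i) ∈ H := by
  have h : (fun i => ∑ k, (m k : ℚ) * f k i) = ∑ k, m k • f k := by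
    funext i
    rw [Finset.sum_apply]
    exact Finset.sum_congr rfl fun k _ => by
      simp [zsmul_eq_mul]
  rw [h]
  exact AddSubgroup.sum_mem _ fun k _ => AddSubgroup.zsmul_mem _ (hf k) _

lemma Mb_mem' (j : Fin 8) : Mb j ∈ E8Lat := Mb_mem j

lemma Mi_col_mem' (j : Fin 8) : (fun i => Mi i j) ∈ E8Lat := Mi_col_mem j

lemma reconstruct (x : Fin 8 → ℚ) (i : Fin 8) :
    (∑ j, ip x (fun i' => Mi i' j) * Mb j i) = x i := by
  unfold ip
  simp only [Finset.sum_mul]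
  rw [Finset.sum_comm]
  have h : ∀ i' ∈ Finset.univ, (∑ j, x i' * Mi i' j * Mb j i)
      = if i' = i then x i' else 0 := by
    intro i' _
    have : (∑ j, x i' * Mi i' j * Mb j i) = x i' * ∑ j, Mi i' j * Mb j i := by
      rw [Finset.mul_sum]
      exact Finset.sum_congr rfl fun j _ => by ring
    rw [this, inv_mul i' i]
    split <;> simp
  rw [Finset.sum_congr rfl h]
  simp

lemma coords {x : Fin 8 → ℚ} (hx : x ∈ E8Lat) :
    ∃ c : Fin 8 → ℤ, ∀ i, x i = ∑ j, (c j : ℚ) * Mb j i := by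
  have h : ∀ j : Fin 8, ∃ n : ℤ, ip x (fun i => Mi i j) = n :=
    fun j => ip_int hx (Mi_col_mem' j)
  obtain ⟨c, hc⟩ := Classical.axiomOfChoice h
  refine ⟨c, fun i => ?_⟩
  rw [← reconstruct x i]
  exact Finset.sum_congr rfl fun j _ => by rw [hc j]

lemma ip_coords (c d : Fin 8 → ℤ) :
    ip (fun i => ∑ j, (c j : ℚ) * Mb j i) (fun i => ∑ j, (d j : ℚ) * Mb j i)
      = ((∑ j, ∑ j', c j * G j j' * d j' : ℤ) : ℚ) := by
  rw [ip_combo]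
  have hj : ∀ j ∈ Finset.univ, (c j : ℚ) * ip (Mb j) (fun i => ∑ j', (d j' : ℚ) * Mb j' i)
      = ((∑ j', c j * G j j' * d j' : ℤ) : ℚ) := by
    intro j _
    have h2 : ip (Mb j) (fun i => ∑ j', (d j' : ℚ) * Mb j' i)
        = ∑ j', (d j' : ℚ) * ((G j j' : ℤ) : ℚ) := by
      unfold ip
      simp only [Finset.mul_sum]
      rw [Finset.sum_comm]
      refine Finset.sum_congr rfl fun j' _ => ?_
      rw [← gram j j', Finset.mul_sum]
      exact Finset.sum_congr rfl fun i _ => by ring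
    rw [h2]
    push_cast
    rw [Finset.mul_sum]
    exact Finset.sum_congr rfl fun j' _ => by ring
  rw [Finset.sum_congr rfl hj]
  push_cast
  ring

/-! mod 2 linear algebra -/

lemma zmod_lift : ∀ z : ZMod 2, (((z.val : ℤ) : ZMod 2)) = z := by decide

lemma zmod_lift' : ∀ z : ZMod 2, ((z.val : ZMod 2)) = z := by decide

lemma zmod_odd : ∀ z z' : ZMod 2, z ≠ z' → ¬ (2 ∣ ((z.val : ℤ) - (z'.val : ℤ))) := by decide

lemma four_distinct {α : Type*} [AddCommGroup α] (a b : α) (h2 : ∀ x : α, x + x = 0)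
    (ha : a ≠ 0) (hb : b ≠ 0) (hab : a ≠ b) :
    Function.Injective (![0, a, b, a + b] : Fin 4 → α) := by
  have hs : a + b ≠ 0 := by
    intro h
    apply hab
    have h3 : a + b + b = 0 + b := by rw [h]
    rwa [add_assoc, h2 b, add_zero, zero_add] at h3
  have haab : a ≠ a + b := by
    intro h
    apply hb
    have h3 : a + 0 = a + b := by rwa [add_zero]
    exact (add_left_cancel h3).symm
  have hbab : b ≠ a + b := by
    intro h
    apply ha
    have h3 : 0 + b = a + b := by rwa [zero_add]
    exact (add_right_cancel h3).symm
  intro t t' h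
  fin_cases t <;> fin_cases t' <;>
    simp only [Matrix.cons_val_zero, Matrix.cons_val_one, Matrix.head_cons,
      Matrix.cons_val_two, Matrix.tail_cons, Matrix.cons_val_three] at h <;>
    first
      | rfl
      | exact absurd h ha.symm
      | exact absurd h ha
      | exact absurd h hb.symm
      | exact absurd h hb
      | exact absurd h hs.symm
      | exact absurd h hs
      | exact absurd h hab
      | exact absurd h hab.symm
      | exact absurd h haab
      | exact absurd h haab.symm
      | exact absurd h hbab
      | exact absurd h hbab.symm

def Bform : LinearMap.BilinForm (ZMod 2) (Fin 8 → ZMod 2) :=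
  LinearMap.mk₂ (ZMod 2) (fun x y => ∑ j, ∑ j', x j * Gm2 j j' * y j')
    (fun x x' y => by
      simp only [Pi.add_apply]
      rw [← Finset.sum_add_distrib]
      refine Finset.sum_congr rfl fun j _ => ?_
      rw [← Finset.sum_add_distrib]
      exact Finset.sum_congr rfl fun j' _ => by ring)
    (fun a x y => by
      simp only [Pi.smul_apply, smul_eq_mul, Finset.mul_sum]
      refine Finset.sum_congr rfl fun j _ => ?_
      exact Finset.sum_congr rfl fun j' _ => by ring)
    (fun x y y' => by
      simp only [Pi.add_apply]
      rw [← Finset.sum_add_distrib]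
      refine Finset.sum_congr rfl fun j _ => ?_
      rw [← Finset.sum_add_distrib]
      exact Finset.sum_congr rfl fun j' _ => by ring)
    (fun a x y => by
      simp only [Pi.smul_apply, smul_eq_mul, Finset.mul_sum]
      refine Finset.sum_congr rfl fun j _ => ?_
      exact Finset.sum_congr rfl fun j' _ => by ring)

lemma Bform_apply (x y : Fin 8 → ZMod 2) :
    Bform x y = ∑ j, ∑ j', x j * Gm2 j j' * y j' := rfl

lemma Gm2_symm (j j' : Fin 8) : Gm2 j j' = Gm2 j' j := by
  unfold Gm2; rw [gram_symm j j']

lemma Bform_symm (x y : Fin 8 → ZMod 2) : Bform x y = Bform y x := by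
  rw [Bform_apply, Bform_apply, Finset.sum_comm]
  refine Finset.sum_congr rfl fun j' _ => Finset.sum_congr rfl fun j _ => ?_
  rw [Gm2_symm j j']
  ring

lemma Bform_refl : Bform.IsRefl := fun x y h => by rw [Bform_symm y x]; exact h

lemma Bform_nondeg : Bform.Nondegenerate := by
  refine (LinearMap.IsRefl.nondegenerate_iff_separatingLeft Bform_refl).2 ?_
  intro x hx
  funext l
  have h := hx (fun j' => Gi2 j' l)
  rw [Bform_apply] at h
  have h2 : (∑ j, ∑ j', x j * Gm2 j j' * Gi2 j' l) = x l := by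
    have h3 : ∀ j ∈ Finset.univ, (∑ j', x j * Gm2 j j' * Gi2 j' l)
        = if j = l then x j else 0 := by
      intro j _
      have : (∑ j', x j * Gm2 j j' * Gi2 j' l) = x j * ∑ j', Gm2 j j' * Gi2 j' l := by
        rw [Finset.mul_sum]
        exact Finset.sum_congr rfl fun j' _ => by ring
      rw [this, gm_gi j l]
      split <;> simp
    rw [Finset.sum_congr rfl h3]
    simp
  rw [h2] at h
  exact h

end E8IndexAux

open E8IndexAux

/-- Let `v₁,…,v₆` be pairwise orthogonal roots of the lattice `E₈`.  Let `M` be the `ℤ`-span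
of `v₁,…,v₆` and let `M'` be the primitive closure of `M` in `E₈`.  Then the index `[M' : M]`
is at least 4. -/
theorem index_primitive_closure_E8 (v : Fin 6 → (Fin 8 → ℚ))
    (hmem : ∀ k, v k ∈ E8Lat)
    (hroot : ∀ k, ∑ i, v k i * v k i = 2)
    (horth : ∀ k l, k ≠ l → ∑ i, v k i * v l i = 0) :
    4 ≤ ((AddSubgroup.closure (Set.range v)).addSubgroupOf
        (primClosureE8 (AddSubgroup.closure (Set.range v)))).index := by
  classical
  set M : AddSubgroup (Fin 8 → ℚ) := AddSubgroup.closure (Set.range v) with hMdef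
  set P : AddSubgroup (Fin 8 → ℚ) := primClosureE8 M with hPdef
  have hvK : ∀ k, v k ∈ M := fun k => AddSubgroup.subset_closure ⟨k, rfl⟩
  have ipvv : ∀ k l, ip (v k) (v l) = if k = l then 2 else 0 := by
    intro k l
    split
    · next h => subst h; exact hroot k
    · next h => exact horth k l h
  have coeff : ∀ (q : Fin 6 → ℚ) (l), ip (fun i => ∑ k, q k * v k i) (v l) = 2 * q l := by
    intro q l
    rw [ip_combo]
    rw [Finset.sum_eq_single l]
    · rw [ipvv l l, if_pos rfl]; ring
    · intro k _ hk; rw [ipvv k l, if_neg hk]; ring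
    · intro h; exact absurd (Finset.mem_univ l) h
  have closure_repr : ∀ {m : Fin 8 → ℚ}, m ∈ M →
      ∃ n : Fin 6 → ℤ, m = fun i => ∑ k, (n k : ℚ) * v k i := by
    intro m hm
    induction hm using AddSubgroup.closure_induction with
    | mem x hx =>
      obtain ⟨k, rfl⟩ := hx
      refine ⟨fun l => if l = k then 1 else 0, funext fun i => ?_⟩
      rw [Finset.sum_eq_single k]
      · simp
      · intro l _ hl; simp [hl]
      · intro h; exact absurd (Finset.mem_univ k) h
    | zero => exact ⟨0, funext fun i => by simp⟩
    | add x y hx hy ihx ihy =>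
      obtain ⟨n, rfl⟩ := ihx
      obtain ⟨n', rfl⟩ := ihy
      refine ⟨n + n', funext fun i => ?_⟩
      simp only [Pi.add_apply]
      rw [← Finset.sum_add_distrib]
      exact Finset.sum_congr rfl fun k _ => by push_cast; ring
    | neg x hx ihx =>
      obtain ⟨n, rfl⟩ := ihx
      refine ⟨-n, funext fun i => ?_⟩
      simp only [Pi.neg_apply]
      rw [← Finset.sum_neg_distrib]
      exact Finset.sum_congr rfl fun k _ => by push_cast; ring
  -- integer coordinates of the roots
  choose C hC using fun k => coords (hmem k)
  have vrepr : ∀ k, v k = fun i => ∑ j, (C k j : ℚ) * Mb j i := fun k => funext (hC k)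
  -- mod 2 reductions
  set w : Fin 6 → (Fin 8 → ZMod 2) := fun k j => ((C k j : ℤ) : ZMod 2) with hwdef
  have hT2 : ∀ k l, ((∑ j, ∑ j', C k j * G j j' * C l j' : ℤ) : ZMod 2) = 0 := by
    intro k l
    have h := ip_coords (C k) (C l)
    rw [← vrepr k, ← vrepr l, ipvv k l] at h
    by_cases hkl : k = l
    · rw [if_pos hkl] at h
      have h2 : (∑ j, ∑ j', C k j * G j j' * C l j' : ℤ) = 2 := by exact_mod_cast h.symm
      rw [h2]; decide
    · rw [if_neg hkl] at h
      have h2 : (∑ j, ∑ j', C k j * G j j' * C l j' : ℤ) = 0 := by exact_mod_cast h.symm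
      rw [h2]; decide
  have hBw : ∀ k l, Bform (w k) (w l) = 0 := by
    intro k l
    rw [Bform_apply]
    have h : ((∑ j, ∑ j', C k j * G j j' * C l j' : ℤ) : ZMod 2)
        = ∑ j, ∑ j', w k j * Gm2 j j' * w l j' := by
      push_cast
      rfl
    rw [← h, hT2 k l]
  haveI : Fact (Nat.Prime 2) := ⟨Nat.prime_two⟩
  set W : Submodule (ZMod 2) (Fin 8 → ZMod 2) := Submodule.span (ZMod 2) (Set.range w)
    with hWdef
  have hWiso : ∀ x ∈ W, ∀ y ∈ W, Bform x y = 0 := by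
    intro x hx y hy
    induction hx, hy using Submodule.span_induction₂ with
    | mem_mem x y hx hy =>
      obtain ⟨k, rfl⟩ := hx; obtain ⟨l, rfl⟩ := hy; exact hBw k l
    | zero_left y hy => simp
    | zero_right x hx => simp
    | add_left x y z hx hy hz h1 h2 => rw [map_add, LinearMap.add_apply, h1, h2, add_zero]
    | add_right x y z hx hy hz h1 h2 => rw [map_add, h1, h2, add_zero]
    | smul_left r x y hx hy h1 => rw [map_smul, LinearMap.smul_apply, h1, smul_zero]
    | smul_right r x y hx hy h1 => rw [map_smul, h1, smul_zero]
  have hWle : W ≤ Bform.orthogonal W := by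
    intro x hx
    rw [LinearMap.BilinForm.mem_orthogonal_iff]
    exact fun n hn => hWiso n hn x hx
  have hfin8 : Module.finrank (ZMod 2) (Fin 8 → ZMod 2) = 8 := by
    rw [Module.finrank_fintype_fun_eq_card]; simp
  have horthrank := LinearMap.BilinForm.finrank_orthogonal Bform_nondeg W
  have hmono : Module.finrank (ZMod 2) W
      ≤ Module.finrank (ZMod 2) (Bform.orthogonal W) := Submodule.finrank_mono hWle
  have hWfle : Module.finrank (ZMod 2) W ≤ Module.finrank (ZMod 2) (Fin 8 → ZMod 2) :=
    Submodule.finrank_le W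
  have hW4 : Module.finrank (ZMod 2) W ≤ 4 := by
    rw [hfin8] at horthrank hWfle
    omega
  -- the linear map ψ and its kernel
  set ψ : (Fin 6 → ZMod 2) →ₗ[ZMod 2] (Fin 8 → ZMod 2) :=
    Fintype.linearCombination (ZMod 2) w with hψdef
  have hrange : LinearMap.range ψ = W := Fintype.range_linearCombination (ZMod 2) w
  have hker2 : 2 ≤ Module.finrank (ZMod 2) (LinearMap.ker ψ) := by
    have h := LinearMap.finrank_range_add_finrank_ker ψ
    rw [hrange, Module.finrank_fintype_fun_eq_card] at h
    simp only [Fintype.card_fin] at h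
    omega
  -- two independent kernel elements
  let bb := Module.finBasis (ZMod 2) (LinearMap.ker ψ)
  let A := bb ⟨0, by omega⟩
  let B := bb ⟨1, by omega⟩
  have hAB : A ≠ B := fun h => by
    have := bb.injective h
    simp at this
  have hA0 : (A : Fin 6 → ZMod 2) ≠ 0 := by
    intro h
    exact bb.ne_zero _ (Subtype.coe_injective (h.trans rfl))
  have hB0 : (B : Fin 6 → ZMod 2) ≠ 0 := by
    intro h
    exact bb.ne_zero _ (Subtype.coe_injective (h.trans rfl))
  have hABc : (A : Fin 6 → ZMod 2) ≠ (B : Fin 6 → ZMod 2) := fun h => hAB (Subtype.coe_injective h)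
  have char2 : ∀ x : Fin 6 → ZMod 2, x + x = 0 := by
    intro x; funext j; exact CharTwo.add_self_eq_zero (x j)
  let cs : Fin 4 → (Fin 6 → ZMod 2) :=
    ![0, (A : Fin 6 → ZMod 2), (B : Fin 6 → ZMod 2),
      (A : Fin 6 → ZMod 2) + (B : Fin 6 → ZMod 2)]
  have hcs_ker : ∀ t, ψ (cs t) = 0 := by
    intro t
    fin_cases t
    · simp [cs]
    · simpa [cs] using A.2
    · simpa [cs] using B.2
    · have : ψ ((A : Fin 6 → ZMod 2) + (B : Fin 6 → ZMod 2)) = 0 := by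
        rw [map_add]
        have h1 : ψ (A : Fin 6 → ZMod 2) = 0 := A.2
        have h2 : ψ (B : Fin 6 → ZMod 2) = 0 := B.2
        rw [h1, h2, add_zero]
      simpa [cs] using this
  have hcs_inj : Function.Injective cs :=
    four_distinct (A : Fin 6 → ZMod 2) (B : Fin 6 → ZMod 2) char2 hA0 hB0 hABc
  -- glue vectors
  have glue : ∀ c : Fin 6 → ZMod 2, ψ c = 0 →
      ∃ x : Fin 8 → ℚ, x ∈ P ∧ ∀ l, ip x (v l) = (((c l).val : ℤ) : ℚ) := by
    intro c hc
    have hψc : (∑ k, c k • w k) = 0 := by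
      rw [← hc]
      rfl
    have hsum : ∀ jj : Fin 8, ((∑ k, ((c k).val : ℤ) * C k jj : ℤ) : ZMod 2) = 0 := by
      intro jj
      have h0 : (∑ k, c k • w k) jj = 0 := by rw [hψc]; rfl
      rw [Finset.sum_apply] at h0
      push_cast
      rw [← h0]
      refine Finset.sum_congr rfl fun k _ => ?_
      rw [Pi.smul_apply, smul_eq_mul, zmod_lift' (c k)]
    choose m hm using fun jj => (ZMod.intCast_zmod_eq_zero_iff_dvd _ 2).1 (hsum jj)
    set x : Fin 8 → ℚ := fun i => ∑ k, (((c k).val : ℤ) : ℚ)/2 * v k i with hxdef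
    have hxcoords : x = fun i => ∑ j, (m j : ℚ) * Mb j i := by
      funext i
      calc x i = ∑ k, ∑ j, (((c k).val : ℤ) : ℚ)/2 * ((C k j : ℚ) * Mb j i) := by
            refine Finset.sum_congr rfl fun k _ => ?_
            rw [hC k i, Finset.mul_sum]
        _ = ∑ j, ∑ k, (((c k).val : ℤ) : ℚ)/2 * ((C k j : ℚ) * Mb j i) := Finset.sum_comm
        _ = ∑ j, (m j : ℚ) * Mb j i := by
            refine Finset.sum_congr rfl fun j _ => ?_
            have h2 : (∑ k, (((c k).val : ℤ) : ℚ)/2 * ((C k j : ℚ) * Mb j i))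
                = (∑ k, (((c k).val : ℤ) : ℚ) * (C k j : ℚ)) / 2 * Mb j i := by
              rw [Finset.sum_div, Finset.sum_mul]
              exact Finset.sum_congr rfl fun k _ => by ring
            have h3 : (∑ k, (((c k).val : ℤ) : ℚ) * (C k j : ℚ))
                = ((∑ k, ((c k).val : ℤ) * C k j : ℤ) : ℚ) := by push_cast; ring
            rw [h2, h3, hm j]
            push_cast; ring
    have hxE8 : x ∈ E8Lat := by
      rw [hxcoords]
      exact combo_mem E8Lat Mb Mb_mem' m
    have hx2M : (2 : ℤ) • x ∈ M := by
      have h : (2 : ℤ) • x = fun i => ∑ k, ((((c k).val : ℤ)) : ℚ) * v k i := by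
        funext i
        rw [Pi.smul_apply, zsmul_eq_mul, hxdef]
        rw [Finset.mul_sum]
        exact Finset.sum_congr rfl fun k _ => by push_cast; ring
      rw [h]
      exact combo_mem M v hvK fun k => ((c k).val : ℤ)
    refine ⟨x, ⟨hxE8, 2, two_ne_zero, hx2M⟩, fun l => ?_⟩
    rw [hxdef, coeff (fun k => (((c k).val : ℤ) : ℚ)/2) l]
    ring
  -- representation of elements of P as rational combinations
  have reprP : ∀ x ∈ P, ∃ q : Fin 6 → ℚ, x = fun i => ∑ k, q k * v k i := by
    intro x hx
    obtain ⟨hxE, kk, hkk, hkM⟩ := hx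
    obtain ⟨n, hn⟩ := closure_repr hkM
    refine ⟨fun l => (n l : ℚ) / kk, funext fun i => ?_⟩
    have h1 : ((kk : ℤ) : ℚ) ≠ 0 := Int.cast_ne_zero.2 hkk
    have h3 : ((kk : ℤ) : ℚ) * x i = ∑ k, (n k : ℚ) * v k i := by
      have h2 : (kk • x) i = ∑ k, (n k : ℚ) * v k i := by rw [hn]
      rw [← h2, Pi.smul_apply, zsmul_eq_mul]
    apply mul_left_cancel₀ h1
    rw [h3, Finset.mul_sum]
    refine Finset.sum_congr rfl fun k _ => ?_
    field_simp
  have Meven : ∀ x ∈ M, ∀ l, ∃ n : ℤ, ip x (v l) = 2 * n := by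
    intro x hx l
    obtain ⟨n, rfl⟩ := closure_repr hx
    exact ⟨n l, by rw [coeff (fun k => (n k : ℚ)) l]⟩
  have Mback : ∀ x, x ∈ P → (∀ l, ∃ n : ℤ, ip x (v l) = 2 * n) → x ∈ M := by
    intro x hxP hev
    obtain ⟨q, rfl⟩ := reprP x hxP
    choose n hn using hev
    have hq : ∀ l, q l = (n l : ℚ) := by
      intro l
      have h := hn l
      rw [coeff q l] at h
      linarith
    have h : (fun i => ∑ k, q k * v k i) = fun i => ∑ k, ((n k : ℤ) : ℚ) * v k i := by
      funext i
      exact Finset.sum_congr rfl fun k _ => by rw [hq k]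
    rw [h]
    exact combo_mem M v hvK n
  -- the homomorphism to (ZMod 2)^6
  have hPE8 : ∀ x : P, (x : Fin 8 → ℚ) ∈ E8Lat := fun x => x.2.1
  let g0 : P →+ (Fin 6 → ZMod 2) :=
    { toFun := fun x l => (((ip (x : Fin 8 → ℚ) (v l)).num : ℤ) : ZMod 2)
      map_zero' := by
        funext l
        show (((ip ((0 : P) : Fin 8 → ℚ) (v l)).num : ℤ) : ZMod 2) = 0
        have h : ip ((0 : P) : Fin 8 → ℚ) (v l) = 0 := by
          simp [E8IndexAux.ip]
        rw [h]
        simp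
      map_add' := by
        intro x y
        funext l
        show (((ip (((x + y : P)) : Fin 8 → ℚ) (v l)).num : ℤ) : ZMod 2)
          = (((ip ((x : Fin 8 → ℚ)) (v l)).num : ℤ) : ZMod 2)
            + (((ip ((y : Fin 8 → ℚ)) (v l)).num : ℤ) : ZMod 2)
        obtain ⟨p, hp⟩ := ip_int (hPE8 x) (hmem l)
        obtain ⟨q, hq⟩ := ip_int (hPE8 y) (hmem l)
        have hadd : ip ((x + y : P) : Fin 8 → ℚ) (v l) = ((p + q : ℤ) : ℚ) := by
          have hco : ((x + y : P) : Fin 8 → ℚ) = (x : Fin 8 → ℚ) + (y : Fin 8 → ℚ) := rfl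
          rw [hco, ip_add_left, hp, hq]
          push_cast; ring
        rw [hadd, hp, hq]
        simp only [Rat.num_intCast]
        push_cast
        ring }
  have hg0ker : ∀ x ∈ M.addSubgroupOf P, g0 x = 0 := by
    intro x hx
    funext l
    obtain ⟨n, hn⟩ := Meven (x : Fin 8 → ℚ) hx l
    have hn' : ip (x : Fin 8 → ℚ) (v l) = ((2 * n : ℤ) : ℚ) := by rw [hn]; push_cast; ring
    show (((ip (x : Fin 8 → ℚ) (v l)).num : ℤ) : ZMod 2) = 0
    rw [hn']
    simp only [Rat.num_intCast]
    push_cast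
    rw [show (2 : ZMod 2) = 0 from rfl]
    ring
  let glift := QuotientAddGroup.lift (M.addSubgroupOf P) g0 hg0ker
  have ginj : Function.Injective glift := by
    rw [injective_iff_map_eq_zero]
    intro qx hq
    induction qx using QuotientAddGroup.induction_on with
    | H x =>
      change g0 x = 0 at hq
      have hev : ∀ l, ∃ n : ℤ, ip (x : Fin 8 → ℚ) (v l) = 2 * n := by
        intro l
        obtain ⟨p, hp⟩ := ip_int (hPE8 x) (hmem l)
        have h2 : ((p : ℤ) : ZMod 2) = 0 := by
          have h := congrFun hq l
          show ((p : ℤ) : ZMod 2) = 0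
          rw [show ((p : ℤ) : ZMod 2) = (((ip (x : Fin 8 → ℚ) (v l)).num : ℤ) : ZMod 2) by
            rw [hp]; simp]
          exact h
        obtain ⟨t, ht⟩ := (ZMod.intCast_zmod_eq_zero_iff_dvd p 2).1 h2
        exact ⟨t, by rw [hp, ht]; push_cast; ring⟩
      have hxM : (x : Fin 8 → ℚ) ∈ M := Mback _ x.2 hev
      exact (QuotientAddGroup.eq_zero_iff x).2 hxM
  haveI : Finite (P ⧸ M.addSubgroupOf P) := Finite.of_injective glift ginj
  -- the four classes
  choose xf hxfP hxfip using fun t : Fin 4 => glue (cs t) (hcs_ker t)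
  let f : Fin 4 → P ⧸ M.addSubgroupOf P := fun t => QuotientAddGroup.mk ⟨xf t, hxfP t⟩
  have hgf : ∀ t, glift (f t) = cs t := by
    intro t
    funext l
    show g0 ⟨xf t, hxfP t⟩ l = cs t l
    have h1 : ip (xf t) (v l) = (((cs t l).val : ℤ) : ℚ) := hxfip t l
    show (((ip (xf t) (v l)).num : ℤ) : ZMod 2) = cs t l
    rw [h1]
    simp only [Rat.num_intCast]
    exact zmod_lift (cs t l)
  have finj : Function.Injective f := by
    intro t t' h
    apply hcs_inj
    rw [← hgf t, ← hgf t', h]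
  have h4 : 4 ≤ Nat.card (P ⧸ M.addSubgroupOf P) := by
    have h := Nat.card_le_card_of_injective f finj
    simpa using h
  rw [AddSubgroup.index_eq_card]
  exact h4
end

section
/- Let 1 ≤ r ≤ 7 and let M = ℤʳ equipped with the bilinear form ⟨x,y⟩ = 2·Σ xᵢyᵢ (the lattice A₁ʳ). Let x ∈ ℚʳ be such that ⟨x,m⟩ ∈ ℤ for all m ∈ M (equivalently all coordinates of x lie in ½ℤ), x ∉ ℤʳ, and ⟨x,x⟩ ∈ 2ℤ. Then there exists y ∈ ℚʳ with y − x ∈ ℤʳ and ⟨y,y⟩ = 2. In other words, for r < 8 every nonzero isotropic element of the discriminant group of A₁ʳ is represented by a root. -/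
/-- Let `1 ≤ r ≤ 7` and let `M = ℤʳ` equipped with the bilinear form `⟨x,y⟩ = 2⬝∑ xᵢyᵢ`
(the lattice `A₁ʳ`).  Let `x ∈ ℚʳ` be such that `⟨x,m⟩ ∈ ℤ` for all `m ∈ M`, `x ∉ ℤʳ`, and
`⟨x,x⟩ ∈ 2ℤ`.  Then there exists `y ∈ ℚʳ` with `y − x ∈ ℤʳ` and `⟨y,y⟩ = 2`.  In other words,
for `r < 8` every nonzero isotropic element of the discriminant group of `A₁ʳ` is represented
by a root. -/
theorem isotropic_represented_by_root_A1r (r : ℕ) (hr1 : 1 ≤ r) (hr7 : r ≤ 7)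
    (x : Fin r → ℚ)
    (hdual : ∀ m : Fin r → ℤ, ∃ z : ℤ, 2 * ∑ i, x i * (m i : ℚ) = z)
    (hnotint : ¬ ∀ i, ∃ a : ℤ, x i = a)
    (hiso : ∃ z : ℤ, 2 * ∑ i, x i * x i = 2 * (z : ℚ)) :
    ∃ y : Fin r → ℚ, (∀ i, ∃ a : ℤ, y i - x i = a) ∧ 2 * ∑ i, y i * y i = 2 := by
  -- every coordinate is a half-integer
  have key : ∀ i, ∃ a : ℤ, 2 * x i = a := by
    intro i
    obtain ⟨z, hz⟩ := hdual (fun j => if j = i then 1 else 0)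
    refine ⟨z, ?_⟩
    rw [← hz]
    congr 1
    simp [apply_ite, Finset.sum_ite_eq']
  choose a ha using key
  have hx : ∀ i, x i = (a i : ℚ) / 2 := by
    intro i
    have := ha i
    field_simp
    linarith [ha i]
  -- ∑ aᵢ² = 4z
  obtain ⟨z, hz⟩ := hiso
  have hsum : ∑ i, (a i) ^ 2 = 4 * z := by
    have hq : ((∑ i, (a i) ^ 2 : ℤ) : ℚ) = ((4 * z : ℤ) : ℚ) := by
      push_cast
      have h1 : ∑ i, x i * x i = (z : ℚ) := by linarith
      have h2 : ∑ i, x i * x i = (∑ i, (a i : ℚ) ^ 2) / 4 := by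
        rw [Finset.sum_div]
        refine Finset.sum_congr rfl fun i _ => ?_
        rw [hx i]; ring
      rw [h2] at h1
      linarith
    exact_mod_cast hq
  -- in ZMod 4, each square is 1 if odd, 0 if even
  have hmod : ∀ i, ((a i : ZMod 4)) ^ 2 = if Odd (a i) then 1 else 0 := by
    intro i
    rcases Int.even_or_odd (a i) with ⟨k, hk⟩ | ⟨k, hk⟩
    · rw [if_neg (Int.not_odd_iff_even.mpr ⟨k, hk⟩)]
      have : ((a i : ZMod 4)) ^ 2 = 4 * (k : ZMod 4) ^ 2 := by
        rw [hk]; push_cast; ring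
      rw [this]
      have h4 : (4 : ZMod 4) = 0 := by decide
      rw [h4, zero_mul]
    · rw [if_pos ⟨k, hk⟩]
      have : ((a i : ZMod 4)) ^ 2 = 4 * ((k : ZMod 4) ^ 2 + k) + 1 := by
        rw [hk]; push_cast; ring
      rw [this]
      have h4 : (4 : ZMod 4) = 0 := by decide
      rw [h4, zero_mul, zero_add]
  set S := Finset.univ.filter (fun i => Odd (a i)) with hS
  -- card S ≡ 0 mod 4
  have hcast : ((S.card : ℕ) : ZMod 4) = 0 := by
    have h1 : ((∑ i, (a i) ^ 2 : ℤ) : ZMod 4) = 0 := by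
      rw [hsum]; push_cast; ring_nf
      simp [show (4 : ZMod 4) = 0 from by decide]
    have h2 : ((∑ i, (a i) ^ 2 : ℤ) : ZMod 4) = ∑ i, ((a i : ZMod 4)) ^ 2 := by
      push_cast; rfl
    rw [h2] at h1
    have h3 : ∑ i, ((a i : ZMod 4)) ^ 2 = (S.card : ZMod 4) := by
      rw [Finset.sum_congr rfl (fun i _ => hmod i), ← Finset.sum_filter, Finset.sum_const]
      simp [hS]
    rw [h3] at h1
    exact h1
  have hdvd : 4 ∣ S.card := (ZMod.natCast_eq_zero_iff S.card 4).mp hcast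
  -- card S ≥ 1
  have hpos : 0 < S.card := by
    push_neg at hnotint
    obtain ⟨i, hi⟩ := hnotint
    have hodd : Odd (a i) := by
      by_contra hev
      rw [Int.not_odd_iff_even] at hev
      obtain ⟨k, hk⟩ := hev
      exact hi k (by rw [hx i, hk]; push_cast; ring)
    refine Finset.card_pos.mpr ⟨i, ?_⟩
    simp [hS, hodd]
  have hle : S.card ≤ 7 := le_trans (le_trans (Finset.card_filter_le _ _) (by simp)) hr7
  have hcard : S.card = 4 := by omega
  -- construct y
  refine ⟨fun i => if Odd (a i) then (1/2 : ℚ) else 0, ?_, ?_⟩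
  · intro i
    rcases Int.even_or_odd (a i) with ⟨k, hk⟩ | ⟨k, hk⟩
    · refine ⟨-k, ?_⟩
      show (if Odd (a i) then (1/2 : ℚ) else 0) - x i = ((-k : ℤ) : ℚ)
      rw [if_neg (Int.not_odd_iff_even.mpr ⟨k, hk⟩), hx i, hk]; push_cast; ring
    · refine ⟨-k, ?_⟩
      show (if Odd (a i) then (1/2 : ℚ) else 0) - x i = ((-k : ℤ) : ℚ)
      rw [if_pos ⟨k, hk⟩, hx i, hk]; push_cast; ring
  · have h1 : ∀ i, (if Odd (a i) then (1/2 : ℚ) else 0) * (if Odd (a i) then (1/2 : ℚ) else 0)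
        = if Odd (a i) then (1/4 : ℚ) else 0 := by
      intro i; by_cases h : Odd (a i) <;> simp [h] <;> norm_num
    rw [Finset.sum_congr rfl (fun i _ => h1 i), ← Finset.sum_filter, Finset.sum_const, ← hS, hcard]
    norm_num
end
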